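/- arXiv:2506.03441 — 7 statements merged into one kernel-verified Lean document; each statement's English description precedes it below -/
import Mathlib

section
/- For any weighted graph G with nonnegative edge weights, the largest eigenvalue of the signless Laplacian Q(G) = D(G) + A(G) is at most twice the largest eigenvalue of the Laplacian L(G) = D(G) - A(G), i.e., λ_max(Q(G))/2 ≤ λ_max(L(G)). -/
open Matrix Finset

noncomputable section

/-- Weighted adjacency matrix of a graph on `Fin n` given by a weight function. -/
def adjMat {n : ℕ} (w : Fin n → Fin n → ℝ) : Matrix (Fin n) (Fin n) ℝ := Matrix.of w

/-- Diagonal weighted-degree matrix. -/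
def degMat {n : ℕ} (w : Fin n → Fin n → ℝ) : Matrix (Fin n) (Fin n) ℝ :=
  Matrix.diagonal fun i => ∑ j, w i j

/-- Weighted Laplacian `L = D - A`. -/
def lapMat {n : ℕ} (w : Fin n → Fin n → ℝ) : Matrix (Fin n) (Fin n) ℝ :=
  degMat w - adjMat w

/-- Weighted signless Laplacian `Q = D + A`. -/
def slapMat {n : ℕ} (w : Fin n → Fin n → ℝ) : Matrix (Fin n) (Fin n) ℝ :=
  degMat w + adjMat w

/-- The largest eigenvalue of a real matrix, as the supremum of its real spectrum. -/
def maxEig {n : ℕ} (M : Matrix (Fin n) (Fin n) ℝ) : ℝ := sSup (spectrum ℝ M)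

/-- The matrix `λ_max • 1 - M` is positive semidefinite for a Hermitian `M`. -/
lemma maxEig_smul_one_sub_posSemidef {n : ℕ} [Nonempty (Fin n)]
    {M : Matrix (Fin n) (Fin n) ℝ} (hM : M.IsHermitian) :
    (sSup (spectrum ℝ M) • (1 : Matrix (Fin n) (Fin n) ℝ) - M).PosSemidef := by
  set c := sSup (spectrum ℝ M) with hc
  have hbdd : BddAbove (Set.range hM.eigenvalues) := (Set.finite_range _).bddAbove
  have hle : ∀ i, hM.eigenvalues i ≤ c := fun i => by
    rw [hc, hM.spectrum_real_eq_range_eigenvalues]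
    exact le_csSup hbdd (Set.mem_range_self i)
  set U : Matrix (Fin n) (Fin n) ℝ := (hM.eigenvectorUnitary : Matrix (Fin n) (Fin n) ℝ) with hU
  have hUU : U * star U = 1 := (Matrix.mem_unitaryGroup_iff).mp (hM.eigenvectorUnitary).2
  have key : c • (1 : Matrix (Fin n) (Fin n) ℝ) - M
      = U * diagonal (fun i => c - hM.eigenvalues i) * star U := by
    have h1 : diagonal (fun i => c - hM.eigenvalues i)
        = c • (1 : Matrix (Fin n) (Fin n) ℝ) - diagonal (RCLike.ofReal ∘ hM.eigenvalues) := by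
      rw [smul_one_eq_diagonal, ← diagonal_sub]
      congr 1
    rw [h1, Matrix.mul_sub, Matrix.sub_mul]
    congr 1
    · rw [mul_smul_comm, Matrix.mul_one, smul_mul_assoc, hUU]
    · exact hM.spectral_theorem
  rw [key, Matrix.star_eq_conjTranspose]
  exact Matrix.PosSemidef.mul_mul_conjTranspose_same
    (Matrix.posSemidef_diagonal_iff.mpr fun i => sub_nonneg.2 (hle i)) U

/-- Rayleigh-quotient upper bound: `xᵀ M x ≤ λ_max(M) ⟨x,x⟩`. -/
lemma quad_le_maxEig {n : ℕ} [Nonempty (Fin n)] {M : Matrix (Fin n) (Fin n) ℝ}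
    (hM : M.IsHermitian) (x : Fin n → ℝ) :
    x ⬝ᵥ (M *ᵥ x) ≤ maxEig M * (x ⬝ᵥ x) := by
  have h := (maxEig_smul_one_sub_posSemidef hM).dotProduct_mulVec_nonneg x
  simp only [star_trivial, Matrix.sub_mulVec, Matrix.smul_mulVec, Matrix.one_mulVec,
    dotProduct_sub, dotProduct_smul, smul_eq_mul] at h
  rw [maxEig]
  linarith

/-- The quadratic form of the weighted Laplacian is nonnegative. -/
lemma lap_quad_nonneg {n : ℕ} (w : Fin n → Fin n → ℝ)
    (hsymm : ∀ i j, w i j = w j i) (hnonneg : ∀ i j, 0 ≤ w i j) (x : Fin n → ℝ) :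
    0 ≤ x ⬝ᵥ (lapMat w *ᵥ x) := by
  have hq1 : x ⬝ᵥ (degMat w *ᵥ x) = ∑ i, (∑ j, w i j) * (x i * x i) := by
    simp only [degMat, dotProduct, Matrix.mulVec_diagonal]
    exact Finset.sum_congr rfl fun i _ => by ring
  have hq2 : x ⬝ᵥ (adjMat w *ᵥ x) = ∑ i, ∑ j, w i j * (x i * x j) := by
    simp only [adjMat, dotProduct, Matrix.mulVec, Matrix.of_apply]
    refine Finset.sum_congr rfl fun i _ => ?_
    rw [Finset.mul_sum]
    exact Finset.sum_congr rfl fun j _ => by ring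
  have hquad : x ⬝ᵥ (lapMat w *ᵥ x) = ∑ i, ∑ j, w i j * (x i * (x i - x j)) := by
    rw [lapMat, Matrix.sub_mulVec, dotProduct_sub, hq1, hq2, ← Finset.sum_sub_distrib]
    refine Finset.sum_congr rfl fun i _ => ?_
    rw [Finset.sum_mul, ← Finset.sum_sub_distrib]
    exact Finset.sum_congr rfl fun j _ => by ring
  have hswap : (∑ i, ∑ j, w i j * (x i * (x i - x j)))
      = ∑ i, ∑ j, w i j * (x j * (x j - x i)) := by
    rw [Finset.sum_comm]
    exact Finset.sum_congr rfl fun i _ => Finset.sum_congr rfl fun j _ => by rw [hsymm]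
  have hsum : (∑ i, ∑ j, w i j * (x i * (x i - x j)))
      + (∑ i, ∑ j, w i j * (x j * (x j - x i)))
      = ∑ i, ∑ j, w i j * (x i - x j) ^ 2 := by
    rw [← Finset.sum_add_distrib]
    refine Finset.sum_congr rfl fun i _ => ?_
    rw [← Finset.sum_add_distrib]
    exact Finset.sum_congr rfl fun j _ => by ring
  have hpos : 0 ≤ ∑ i, ∑ j, w i j * (x i - x j) ^ 2 :=
    Finset.sum_nonneg fun i _ => Finset.sum_nonneg fun j _ =>
      mul_nonneg (hnonneg i j) (sq_nonneg _)
  rw [hquad]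
  nlinarith [hswap, hsum, hpos]

/-- For any weighted graph `G` with nonnegative edge weights,
`λ_max(Q(G)) / 2 ≤ λ_max(L(G))`. -/
theorem slap_maxEig_half_le_lap_maxEig {n : ℕ} (w : Fin n → Fin n → ℝ)
    (hsymm : ∀ i j, w i j = w j i) (hnonneg : ∀ i j, 0 ≤ w i j)
    (hdiag : ∀ i, w i i = 0) :
    maxEig (slapMat w) / 2 ≤ maxEig (lapMat w) := by
  rcases Nat.eq_zero_or_pos n with hn | hn
  · subst hn
    have hherm : (slapMat w).IsHermitian := Subsingleton.elim _ _
    have hherm' : (lapMat w).IsHermitian := Subsingleton.elim _ _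
    have h1 : maxEig (slapMat w) = 0 := by
      rw [maxEig, hherm.spectrum_real_eq_range_eigenvalues, Set.range_eq_empty, Real.sSup_empty]
    have h2 : maxEig (lapMat w) = 0 := by
      rw [maxEig, hherm'.spectrum_real_eq_range_eigenvalues, Set.range_eq_empty, Real.sSup_empty]
    rw [h1, h2]; norm_num
  haveI : Nonempty (Fin n) := ⟨⟨0, hn⟩⟩
  -- Hermitian-ness
  have hadj : (adjMat w).IsHermitian := by
    ext i j
    simp [adjMat, Matrix.conjTranspose_apply, hsymm j i]
  have hdeg' : (degMat w).IsHermitian := by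
    ext i j
    rcases eq_or_ne i j with rfl | h
    · simp [degMat, Matrix.conjTranspose_apply, Matrix.diagonal_apply]
    · simp [degMat, Matrix.conjTranspose_apply, Matrix.diagonal_apply, h, Ne.symm h]
  have hQ : (slapMat w).IsHermitian := hdeg'.add hadj
  have hL : (lapMat w).IsHermitian := hdeg'.sub hadj
  -- each degree is at most maxEig L
  have hdeg : ∀ i, (∑ j, w i j) ≤ maxEig (lapMat w) := by
    intro i
    have h := quad_le_maxEig hL (Pi.single i 1)
    have hq : (Pi.single i 1 : Fin n → ℝ) ⬝ᵥ (lapMat w *ᵥ Pi.single i 1) = ∑ j, w i j := by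
      rw [Matrix.mulVec_single, single_dotProduct]
      simp [lapMat, degMat, adjMat, hdiag i]
    have hs : (Pi.single i 1 : Fin n → ℝ) ⬝ᵥ (Pi.single i 1 : Fin n → ℝ) = 1 := by
      rw [single_dotProduct]
      simp
    rw [hq, hs, mul_one] at h
    exact h
  -- the top eigenvalue of Q is attained
  obtain ⟨i0, hi0⟩ := Finite.exists_max hQ.eigenvalues
  have hattain : maxEig (slapMat w) = hQ.eigenvalues i0 := by
    rw [maxEig, hQ.spectrum_real_eq_range_eigenvalues]
    refine le_antisymm (csSup_le (Set.range_nonempty _) ?_)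
      (le_csSup ((Set.finite_range _).bddAbove) (Set.mem_range_self i0))
    rintro y ⟨j, rfl⟩; exact hi0 j
  set v : Fin n → ℝ := ⇑(hQ.eigenvectorBasis i0) with hv
  have hvq : hQ.eigenvalues i0 = v ⬝ᵥ (slapMat w *ᵥ v) := by
    simpa using hQ.eigenvalues_eq i0
  have hvv : v ⬝ᵥ v = 1 := by
    have h := hQ.eigenvectorBasis.orthonormal.1 i0
    have h2 : (inner ℝ (hQ.eigenvectorBasis i0) (hQ.eigenvectorBasis i0) : ℝ) = 1 := by
      rw [real_inner_self_eq_norm_sq, h]; norm_num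
    rw [PiLp.inner_apply] at h2
    simpa [PiLp.inner_apply, dotProduct, v, pow_two] using h2
  -- Q + L = 2 D at the level of quadratic forms
  have hQL : v ⬝ᵥ (slapMat w *ᵥ v) + v ⬝ᵥ (lapMat w *ᵥ v) = 2 * (v ⬝ᵥ (degMat w *ᵥ v)) := by
    simp only [slapMat, lapMat, Matrix.add_mulVec, Matrix.sub_mulVec, dotProduct_add,
      dotProduct_sub]
    ring
  have hLpos : 0 ≤ v ⬝ᵥ (lapMat w *ᵥ v) := lap_quad_nonneg w hsymm hnonneg v
  -- D quadratic form bound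
  have hD : v ⬝ᵥ (degMat w *ᵥ v) ≤ maxEig (lapMat w) := by
    have h1 : v ⬝ᵥ (degMat w *ᵥ v) = ∑ i, (∑ j, w i j) * (v i * v i) := by
      simp only [degMat, dotProduct, Matrix.mulVec_diagonal]
      exact Finset.sum_congr rfl fun i _ => by ring
    have h2 : (∑ i, (∑ j, w i j) * (v i * v i)) ≤ ∑ i, maxEig (lapMat w) * (v i * v i) :=
      Finset.sum_le_sum fun i _ =>
        mul_le_mul_of_nonneg_right (hdeg i) (mul_self_nonneg _)
    have h3 : (∑ i, maxEig (lapMat w) * (v i * v i)) = maxEig (lapMat w) := by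
      rw [← Finset.mul_sum]
      have : (∑ i, v i * v i) = 1 := hvv
      rw [this, mul_one]
    rw [h1]; rw [h3] at h2; exact h2
  have : maxEig (slapMat w) ≤ 2 * maxEig (lapMat w) := by
    rw [hattain, hvq]
    linarith
  linarith
end
end

section
/- If G is a bipartite graph, then for any 1 ≤ k ≤ n, the k-th token graph F_k(G) is bipartite. -/
open Finset

noncomputable section

/-- The `k`-th token graph of a simple graph `G` on `Fin n`: vertices are the `k`-element
subsets of the vertex set, with `A ~ B` iff the symmetric difference of `A` and `B` is
`{a, b}` with `a ∈ A`, `b ∈ B` and `(a,b)` an edge of `G`. -/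
def tokenGraph {n : ℕ} (G : SimpleGraph (Fin n)) (k : ℕ) :
    SimpleGraph {s : Finset (Fin n) // s.card = k} :=
  SimpleGraph.fromRel fun A B =>
    ∃ a ∈ A.1 \ B.1, ∃ b ∈ B.1 \ A.1, A.1 \ {a} = B.1 \ {b} ∧ G.Adj a b

private lemma token_sum_ne {n : ℕ} {G : SimpleGraph (Fin n)} (C : G.Coloring (Fin 2))
    (A B : Finset (Fin n))
    (h : ∃ a ∈ A \ B, ∃ b ∈ B \ A, A \ {a} = B \ {b} ∧ G.Adj a b) :
    (∑ v ∈ A, C v) ≠ (∑ v ∈ B, C v) := by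
  obtain ⟨a, ha, b, hb, hAB, hadj⟩ := h
  simp only [Finset.mem_sdiff] at ha hb
  have hA : A \ {a} = A.erase a := Finset.sdiff_singleton_eq_erase a A
  have hB : B \ {b} = B.erase b := Finset.sdiff_singleton_eq_erase b B
  rw [hA, hB] at hAB
  have h1 : (∑ v ∈ A.erase a, C v) + C a = ∑ v ∈ A, C v :=
    Finset.sum_erase_add _ _ ha.1
  have h2 : (∑ v ∈ B.erase b, C v) + C b = ∑ v ∈ B, C v :=
    Finset.sum_erase_add _ _ hb.1
  intro hEq
  apply C.valid hadj
  rw [hAB] at h1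
  have := h1.trans (hEq.trans h2.symm)
  exact add_left_cancel this

/-- If `G` is bipartite (2-colorable), then for any `1 ≤ k ≤ n` the `k`-th token graph
`F_k(G)` is bipartite. -/
theorem tokenGraph_bipartite {n : ℕ} (G : SimpleGraph (Fin n)) (hG : G.Colorable 2)
    (k : ℕ) (hk : 1 ≤ k) (hkn : k ≤ n) :
    (tokenGraph G k).Colorable 2 := by
  obtain ⟨C⟩ := hG
  refine ⟨SimpleGraph.Coloring.mk (fun A => ∑ v ∈ A.1, C v) ?_⟩
  intro A B hAB
  rw [tokenGraph, SimpleGraph.fromRel_adj] at hAB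
  rcases hAB.2 with h | h
  · exact token_sum_ne C A.1 B.1 h
  · exact fun e => token_sum_ne C B.1 A.1 h e.symm
end
end

section
/- For any weighted graph G on n vertices and any 1 ≤ k ≤ n/2 - 1, every eigenvalue of the Laplacian of the k-th token graph F_k(G) is also an eigenvalue of the Laplacian of the (k+1)-th token graph F_{k+1}(G). Specifically, if v is an eigenvector of L(F_k(G)) with eigenvalue λ, then the vector v' defined on (k+1)-subsets S by v'(S) = Σ_{X ⊂ S, |X|=k} v(X) satisfies L(F_{k+1}(G)) v' = λ v'. -/
open Matrix Finset

noncomputable section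

/-- Edge weight between vertices `A`, `B` of a token graph: nonzero exactly when the
symmetric difference of `A` and `B` is an edge `{a, b}` of `G` with `a ∈ A`, `b ∈ B`,
in which case it is `w a b`. -/
def tokenW {n : ℕ} (w : Fin n → Fin n → ℝ) (A B : Finset (Fin n)) : ℝ :=
  ∑ a ∈ A \ B, ∑ b ∈ B \ A, if A \ {a} = B \ {b} then w a b else 0

/-- Vertices of the `k`-th token graph on `[n]`: the `k`-element subsets. -/
abbrev TokenVert (n k : ℕ) := {s : Finset (Fin n) // s.card = k}

/-- Weighted adjacency matrix of the `k`-th token graph `F_k(G)`. -/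
def tokenA {n : ℕ} (w : Fin n → Fin n → ℝ) (k : ℕ) :
    Matrix (TokenVert n k) (TokenVert n k) ℝ :=
  Matrix.of fun A B => tokenW w A.1 B.1

/-- Weighted degree matrix of `F_k(G)`. -/
def tokenD {n : ℕ} (w : Fin n → Fin n → ℝ) (k : ℕ) :
    Matrix (TokenVert n k) (TokenVert n k) ℝ :=
  Matrix.diagonal fun A => ∑ B : TokenVert n k, tokenW w A.1 B.1

/-- Weighted Laplacian of `F_k(G)`. -/
def tokenL {n : ℕ} (w : Fin n → Fin n → ℝ) (k : ℕ) :
    Matrix (TokenVert n k) (TokenVert n k) ℝ :=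
  tokenD w k - tokenA w k

/-- Weighted signless Laplacian of `F_k(G)`. -/
def tokenQ {n : ℕ} (w : Fin n → Fin n → ℝ) (k : ℕ) :
    Matrix (TokenVert n k) (TokenVert n k) ℝ :=
  tokenD w k + tokenA w k

namespace TokenAux

variable {n : ℕ}

lemma card_insert_erase {m : ℕ} {S : Finset (Fin n)} (hS : S.card = m)
    {a b : Fin n} (ha : a ∈ S) (hb : b ∉ S) :
    (insert b (S.erase a)).card = m := by
  have hb' : b ∉ S.erase a := fun h => hb (Finset.mem_of_mem_erase h)
  rw [Finset.card_insert_of_notMem hb', Finset.card_erase_of_mem ha, hS]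
  exact Nat.succ_pred_eq_of_pos (hS ▸ Finset.card_pos.2 ⟨a, ha⟩)

lemma sum_subtype_ite {m : ℕ} (Y : Finset (Fin n)) (g : Finset (Fin n) → ℝ) :
    (∑ X : TokenVert n m, if X.1 = Y then g X.1 else 0)
      = if Y.card = m then g Y else 0 := by
  by_cases hY : Y.card = m
  · rw [if_pos hY, Finset.sum_eq_single (⟨Y, hY⟩ : TokenVert n m)]
    · simp
    · intro X _ hX
      exact if_neg (fun h => hX (Subtype.ext h))
    · simp
  · rw [if_neg hY]
    exact Finset.sum_eq_zero fun X _ => if_neg (fun h => hY (by rw [← h]; exact X.2))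

lemma key' {m : ℕ} (w : Fin n → Fin n → ℝ) {S : Finset (Fin n)} (hS : S.card = m)
    (g : Finset (Fin n) → ℝ) :
    (∑ T : TokenVert n m, tokenW w S T.1 * g T.1)
      = ∑ a ∈ S, ∑ b ∈ Sᶜ, w a b * g (insert b (S.erase a)) := by
  have h1 : ∀ T : TokenVert n m, tokenW w S T.1 * g T.1
      = ∑ a ∈ S, ∑ b ∈ Sᶜ, if T.1 = insert b (S.erase a) then w a b * g T.1 else 0 := by
    intro T
    rw [tokenW, Finset.sum_mul]
    simp_rw [Finset.sum_mul, ite_mul, zero_mul]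
    have hstep : ∀ a ∈ S \ T.1,
        (∑ b ∈ T.1 \ S, if S \ {a} = T.1 \ {b} then w a b * g T.1 else 0)
          = ∑ b ∈ Sᶜ, if T.1 = insert b (S.erase a) then w a b * g T.1 else 0 := by
      intro a ha
      obtain ⟨haS, haT⟩ := Finset.mem_sdiff.1 ha
      calc (∑ b ∈ T.1 \ S, if S \ {a} = T.1 \ {b} then w a b * g T.1 else 0)
          = ∑ b ∈ T.1 \ S, if T.1 = insert b (S.erase a) then w a b * g T.1 else 0 := by
            refine Finset.sum_congr rfl fun b hb => ?_
            obtain ⟨hbT, hbS⟩ := Finset.mem_sdiff.1 hb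
            have hbe : b ∉ S.erase a := fun h => hbS (Finset.mem_of_mem_erase h)
            refine if_congr ?_ rfl rfl
            rw [← Finset.erase_eq, ← Finset.erase_eq]
            constructor
            · intro h
              rw [← Finset.insert_erase hbT, ← h]
            · intro h
              rw [h, Finset.erase_insert hbe]
        _ = ∑ b ∈ Sᶜ, if T.1 = insert b (S.erase a) then w a b * g T.1 else 0 := by
            refine Finset.sum_subset
              (fun x hx => Finset.mem_compl.2 (Finset.mem_sdiff.1 hx).2)
              fun b hb hnb => ?_
            have hbS : b ∉ S := Finset.mem_compl.1 hb
            have hbT : b ∉ T.1 := fun h => hnb (Finset.mem_sdiff.2 ⟨h, hbS⟩)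
            exact if_neg fun h => hbT (by rw [h]; exact Finset.mem_insert_self b _)
    rw [Finset.sum_congr rfl hstep]
    refine Finset.sum_subset Finset.sdiff_subset fun a haS hanot => ?_
    have haT : a ∈ T.1 := by
      by_contra h; exact hanot (Finset.mem_sdiff.2 ⟨haS, h⟩)
    refine Finset.sum_eq_zero fun b hb => if_neg fun h => ?_
    have hbS : b ∉ S := Finset.mem_compl.1 hb
    have hmem : a ∈ insert b (S.erase a) := by rw [← h]; exact haT
    rcases Finset.mem_insert.1 hmem with h' | h'
    · exact hbS (h' ▸ haS)
    · exact Finset.notMem_erase a S h'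
  calc (∑ T : TokenVert n m, tokenW w S T.1 * g T.1)
      = ∑ T : TokenVert n m, ∑ a ∈ S, ∑ b ∈ Sᶜ,
          if T.1 = insert b (S.erase a) then w a b * g T.1 else 0 :=
        Finset.sum_congr rfl fun T _ => h1 T
    _ = ∑ a ∈ S, ∑ b ∈ Sᶜ, ∑ T : TokenVert n m,
          if T.1 = insert b (S.erase a) then w a b * g T.1 else 0 := by
        rw [Finset.sum_comm]
        exact Finset.sum_congr rfl fun a _ => Finset.sum_comm
    _ = ∑ a ∈ S, ∑ b ∈ Sᶜ, w a b * g (insert b (S.erase a)) := by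
        refine Finset.sum_congr rfl fun a ha => Finset.sum_congr rfl fun b hb => ?_
        rw [sum_subtype_ite (insert b (S.erase a)) (fun A => w a b * g A),
          if_pos (card_insert_erase hS ha (Finset.mem_compl.1 hb))]

lemma mulVec_tokenL {m : ℕ} (w : Fin n → Fin n → ℝ) (u : TokenVert n m → ℝ)
    (S : TokenVert n m) :
    (tokenL w m).mulVec u S
      = ∑ T : TokenVert n m, tokenW w S.1 T.1 * (u S - u T) := by
  rw [tokenL, Matrix.sub_mulVec, Pi.sub_apply, tokenD, Matrix.mulVec_diagonal]
  simp only [tokenA, Matrix.mulVec, dotProduct, Matrix.of_apply]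
  rw [Finset.sum_mul, ← Finset.sum_sub_distrib]
  exact Finset.sum_congr rfl fun T _ => by ring

lemma pair_swap {α : Type*} [DecidableEq α] (s : Finset α) (F : α → α → ℝ) :
    (∑ c ∈ s, ∑ a ∈ s.erase c, F c a) = ∑ a ∈ s, ∑ c ∈ s.erase a, F c a := by
  refine Finset.sum_comm' fun c a => ?_
  simp only [Finset.mem_erase]
  constructor
  · rintro ⟨hc, hne, ha⟩
    exact ⟨⟨Ne.symm hne, hc⟩, ha⟩
  · rintro ⟨⟨hne, hc⟩, ha⟩
    exact ⟨hc, Ne.symm hne, ha⟩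

end TokenAux

open TokenAux

/-- Eigenvalue lifting for token-graph Laplacians: if `v` is an eigenvector of
`L(F_k(G))` with eigenvalue `lam`, then `v'(S) = Σ_{X ⊂ S, |X| = k} v(X)` satisfies
`L(F_{k+1}(G)) v' = lam • v'`.  In particular every eigenvalue of `L(F_k(G))` is an
eigenvalue of `L(F_{k+1}(G))` for `1 ≤ k ≤ n/2 - 1`. -/
theorem tokenL_spectrum_containment {n k : ℕ} (hk : 1 ≤ k) (hkn : 2 * (k + 1) ≤ n)
    (w : Fin n → Fin n → ℝ)
    (hsymm : ∀ i j, w i j = w j i) (hnonneg : ∀ i j, 0 ≤ w i j)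
    (hdiag : ∀ i, w i i = 0)
    (v : TokenVert n k → ℝ) (lam : ℝ)
    (hv : (tokenL w k).mulVec v = lam • v) :
    (tokenL w (k + 1)).mulVec
        (fun S : TokenVert n (k + 1) =>
          ∑ X : TokenVert n k, if X.1 ⊆ S.1 then v X else 0)
      = lam • (fun S : TokenVert n (k + 1) =>
          ∑ X : TokenVert n k, if X.1 ⊆ S.1 then v X else 0) := by
  classical
  set V : Finset (Fin n) → ℝ := fun A => if h : A.card = k then v ⟨A, h⟩ else 0 with hVdef
  set u : TokenVert n (k + 1) → ℝ := fun S : TokenVert n (k + 1) =>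
    ∑ X : TokenVert n k, if X.1 ⊆ S.1 then v X else 0 with hudef
  -- expansion of u in terms of V
  have hVv : ∀ X : TokenVert n k, V X.1 = v X := by
    intro X
    rw [hVdef]
    exact dif_pos X.2
  have hBS : ∀ (T : Finset (Fin n)) (hT : T.card = k + 1),
      u ⟨T, hT⟩ = ∑ c ∈ T, V (T.erase c) := by
    intro T hT
    rw [hudef]
    simp only
    rw [← Finset.sum_filter]
    refine (Finset.sum_bij (fun c hc => (⟨T.erase c, by
        simp [Finset.card_erase_of_mem hc, hT]⟩ : TokenVert n k)) ?_ ?_ ?_ ?_).symm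
    · intro c hc
      simp only [Finset.mem_filter, Finset.mem_univ, true_and]
      exact Finset.erase_subset c T
    · intro c hc c' hc' h
      exact (Finset.erase_inj T hc).1 (congrArg Subtype.val h)
    · intro X hX
      have hXT : X.1 ⊆ T := (Finset.mem_filter.1 hX).2
      have hcard : (T \ X.1).card = 1 := by
        rw [Finset.card_sdiff_of_subset hXT, hT, X.2]; omega
      obtain ⟨c, hc⟩ := Finset.card_pos.1 (by rw [hcard]; norm_num)
      obtain ⟨hcT, hcX⟩ := Finset.mem_sdiff.1 hc
      refine ⟨c, hcT, ?_⟩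
      refine Subtype.ext ?_
      have hsub : X.1 ⊆ T.erase c := Finset.subset_erase.2 ⟨hXT, hcX⟩
      have : X.1 = T.erase c :=
        Finset.eq_of_subset_of_card_le hsub (by simp [Finset.card_erase_of_mem hcT, hT, X.2])
      exact this.symm
    · intro c hc
      exact hVv ⟨T.erase c, by simp [Finset.card_erase_of_mem hc, hT]⟩
  have hW : ∀ (T : Finset (Fin n)) (hT : T.card = k + 1),
      (if h : T.card = k + 1 then u ⟨T, h⟩ else 0) = ∑ c ∈ T, V (T.erase c) := by
    intro T hT
    rw [dif_pos hT, hBS T hT]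
  funext S
  rw [mulVec_tokenL, Pi.smul_apply, smul_eq_mul]
  -- rewrite the adjacency sum via key'
  have hWu : ∀ T : TokenVert n (k+1),
      tokenW w S.1 T.1 * (u S - u T)
        = tokenW w S.1 T.1 * ((fun A => u S - (if h : A.card = k + 1 then u ⟨A, h⟩ else 0)) T.1) := by
    intro T
    congr 1
    simp only [dif_pos T.2]
  have hkey := key' (m := k + 1) w S.2
    (fun A => u S - (if h : A.card = k + 1 then u ⟨A, h⟩ else 0))
  rw [Finset.sum_congr rfl fun T _ => hWu T, hkey]
  -- now expand each term
  have hSmem : ∀ {a : Fin n}, a ∈ S.1 → (S.1.erase a).card = k := by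
    intro a ha
    rw [Finset.card_erase_of_mem ha, S.2]; omega
  have hLHS : (∑ a ∈ S.1, ∑ b ∈ S.1ᶜ, w a b *
        (u S - (if h : (insert b (S.1.erase a)).card = k + 1 then u ⟨_, h⟩ else 0)))
      = ∑ a ∈ S.1, ∑ c ∈ S.1.erase a, ∑ b ∈ S.1ᶜ,
          w a b * (V (S.1.erase c) - V (insert b ((S.1.erase a).erase c))) := by
    refine Finset.sum_congr rfl fun a ha => ?_
    rw [Finset.sum_comm]
    refine Finset.sum_congr rfl fun b hb => ?_
    have hbS : b ∉ S.1 := Finset.mem_compl.1 hb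
    have hbe : b ∉ S.1.erase a := fun h => hbS (Finset.mem_of_mem_erase h)
    rw [hW _ (card_insert_erase S.2 ha hbS), Finset.sum_insert hbe]
    have herase : ∀ c ∈ S.1.erase a,
        (insert b (S.1.erase a)).erase c = insert b ((S.1.erase a).erase c) := by
      intro c hc
      have hcb : b ≠ c := fun h => hbe (h ▸ hc)
      exact Finset.erase_insert_of_ne hcb
    rw [Finset.erase_insert hbe, Finset.sum_congr rfl fun c hc => congrArg V (herase c hc)]
    have husplit : u S = V (S.1.erase a) + ∑ c ∈ S.1.erase a, V (S.1.erase c) := by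
      have := hBS S.1 S.2
      simp only [Subtype.coe_eta] at this
      rw [this, ← Finset.add_sum_erase _ _ ha]
    rw [husplit, add_sub_add_left_eq_sub, ← Finset.sum_sub_distrib, Finset.mul_sum]
  rw [hLHS]
  -- now the right-hand side
  have hvpt : ∀ (A : Finset (Fin n)) (hA : A.card = k),
      lam * V A = ∑ a ∈ A, ∑ b ∈ Aᶜ, w a b * (V A - V (insert b (A.erase a))) := by
    intro A hA
    have h1 : lam * V A = (tokenL w k).mulVec v ⟨A, hA⟩ := by
      rw [hv, Pi.smul_apply, smul_eq_mul, hVv ⟨A, hA⟩]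
    rw [h1, mulVec_tokenL]
    have h2 : ∀ T : TokenVert n k,
        tokenW w A T.1 * (v ⟨A, hA⟩ - v T)
          = tokenW w A T.1 * ((fun B => V A - V B) T.1) := by
      intro T
      congr 1
      simp only [hVdef]
      rw [dif_pos hA, dif_pos T.2]
    have hkey2 := key' (m := k) w hA (fun B => V A - V B)
    rw [Finset.sum_congr rfl fun T _ => h2 T, hkey2]
  have hRHS : lam * u S = ∑ c ∈ S.1, ∑ a ∈ S.1.erase c,
      (w a c * (V (S.1.erase c) - V (S.1.erase a))
        + ∑ b ∈ S.1ᶜ, w a b * (V (S.1.erase c) - V (insert b ((S.1.erase c).erase a)))) := by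
    have husS : u S = ∑ c ∈ S.1, V (S.1.erase c) := by
      have := hBS S.1 S.2
      simpa only [Subtype.coe_eta] using this
    rw [husS, Finset.mul_sum]
    refine Finset.sum_congr rfl fun c hc => ?_
    rw [hvpt (S.1.erase c) (hSmem hc)]
    have hcompl : (S.1.erase c)ᶜ = insert c S.1ᶜ := Finset.compl_erase
    have hcnot : c ∉ S.1ᶜ := fun h => (Finset.mem_compl.1 h) hc
    refine Finset.sum_congr rfl fun a ha => ?_
    rw [hcompl, Finset.sum_insert hcnot]
    congr 1
    have hac : a ≠ c := Finset.ne_of_mem_erase ha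
    have haS : a ∈ S.1 := Finset.mem_of_mem_erase ha
    have h3 : insert c ((S.1.erase c).erase a) = S.1.erase a := by
      rw [Finset.erase_right_comm, Finset.insert_erase
        (Finset.mem_erase.2 ⟨fun h => hac h.symm, hc⟩)]
    rw [h3]
  rw [hRHS]
  -- split the RHS sum and kill the antisymmetric part
  rw [Finset.sum_congr rfl fun c hc => Finset.sum_add_distrib]
  rw [Finset.sum_add_distrib]
  have hT1 : (∑ c ∈ S.1, ∑ a ∈ S.1.erase c,
      w a c * (V (S.1.erase c) - V (S.1.erase a))) = 0 := by
    set T1 := ∑ c ∈ S.1, ∑ a ∈ S.1.erase c, w a c * (V (S.1.erase c) - V (S.1.erase a)) with hT1def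
    have hswap : T1 = ∑ a ∈ S.1, ∑ c ∈ S.1.erase a, w a c * (V (S.1.erase c) - V (S.1.erase a)) := by
      rw [hT1def]
      exact pair_swap S.1 fun c a => w a c * (V (S.1.erase c) - V (S.1.erase a))
    have hneg : (∑ a ∈ S.1, ∑ c ∈ S.1.erase a, w a c * (V (S.1.erase c) - V (S.1.erase a)))
        = -T1 := by
      rw [hT1def]
      rw [← Finset.sum_neg_distrib]
      refine Finset.sum_congr rfl fun c hc => ?_
      rw [← Finset.sum_neg_distrib]
      refine Finset.sum_congr rfl fun a ha => ?_
      rw [hsymm]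
      ring
    have : T1 = -T1 := hswap.trans hneg
    linarith
  rw [hT1, zero_add]
  -- finally match the two triple sums
  rw [pair_swap S.1 fun c a => ∑ b ∈ S.1ᶜ,
    w a b * (V (S.1.erase c) - V (insert b ((S.1.erase c).erase a)))]
  refine Finset.sum_congr rfl fun a ha => Finset.sum_congr rfl fun c hc => ?_
  refine Finset.sum_congr rfl fun b hb => ?_
  rw [Finset.erase_right_comm]
end
end

section
/- For any n ≥ 2 and 1 ≤ k ≤ n/2, the eigenvalues of the adjacency matrix of the k-th token graph of the complete graph K_n (the Johnson graph J(n,k)) are exactly {(k-i)(n-k-i) - i : 0 ≤ i ≤ k}. -/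
open Matrix Finset

noncomputable section

/-- Weight function of the unweighted complete graph `K_n`. -/
def completeW (n : ℕ) : Fin n → Fin n → ℝ := fun i j => if i ≠ j then 1 else 0

lemma spec_iff {m : Type*} [Fintype m] [DecidableEq m] (M : Matrix m m ℝ) (μ : ℝ) :
    μ ∈ spectrum ℝ M ↔ ∃ v : m → ℝ, v ≠ 0 ∧ M *ᵥ v = μ • v := by
  rw [spectrum.mem_iff]
  rw [Matrix.isUnit_iff_isUnit_det, isUnit_iff_ne_zero, not_not]
  rw [← Matrix.exists_mulVec_eq_zero_iff]
  constructor
  · rintro ⟨v, hv, h⟩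
    refine ⟨v, hv, ?_⟩
    have : (algebraMap ℝ (Matrix m m ℝ) μ) *ᵥ v - M *ᵥ v = 0 := by
      rw [← Matrix.sub_mulVec]; exact h
    have h2 : (algebraMap ℝ (Matrix m m ℝ) μ) *ᵥ v = μ • v := by
      rw [Algebra.algebraMap_eq_smul_one, Matrix.smul_mulVec, Matrix.one_mulVec]
    rw [h2] at this
    have := sub_eq_zero.mp this; exact this.symm
  · rintro ⟨v, hv, h⟩
    refine ⟨v, hv, ?_⟩
    rw [Matrix.sub_mulVec, Algebra.algebraMap_eq_smul_one, Matrix.smul_mulVec,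
      Matrix.one_mulVec, h, sub_self]

lemma tokenW_complete {n : ℕ} (A B : Finset (Fin n)) :
    tokenW (completeW n) A B
      = if (A \ B).card = 1 ∧ (B \ A).card = 1 then 1 else 0 := by
  unfold tokenW
  by_cases h : (A \ B).card = 1 ∧ (B \ A).card = 1
  · obtain ⟨a, ha⟩ := Finset.card_eq_one.mp h.1
    obtain ⟨b, hb⟩ := Finset.card_eq_one.mp h.2
    rw [ha, hb, Finset.sum_singleton, Finset.sum_singleton, if_pos (by simp : #({a} : Finset (Fin n)) = 1 ∧ #({b} : Finset (Fin n)) = 1)]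
    have haA : a ∈ A \ B := by rw [ha]; exact Finset.mem_singleton_self a
    have hbB : b ∈ B \ A := by rw [hb]; exact Finset.mem_singleton_self b
    have hEq : A \ {a} = B \ {b} := by
      ext x
      simp only [Finset.mem_sdiff, Finset.mem_singleton]
      constructor
      · rintro ⟨hxA, hxa⟩
        have hxB : x ∈ B := by
          by_contra hxB
          have : x ∈ A \ B := Finset.mem_sdiff.mpr ⟨hxA, hxB⟩
          rw [ha, Finset.mem_singleton] at this; exact hxa this
        refine ⟨hxB, fun hxb => ?_⟩
        exact (Finset.mem_sdiff.mp hbB).2 (hxb ▸ hxA)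
      · rintro ⟨hxB, hxb⟩
        have hxA : x ∈ A := by
          by_contra hxA
          have : x ∈ B \ A := Finset.mem_sdiff.mpr ⟨hxB, hxA⟩
          rw [hb, Finset.mem_singleton] at this; exact hxb this
        refine ⟨hxA, fun hxa => ?_⟩
        exact (Finset.mem_sdiff.mp haA).2 (hxa ▸ hxB)
    rw [if_pos hEq]
    unfold completeW
    rw [if_pos]
    intro hab
    exact (Finset.mem_sdiff.mp haA).2 (hab ▸ (Finset.mem_sdiff.mp hbB).1)
  · rw [if_neg h]
    apply Finset.sum_eq_zero
    intro a haAB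
    apply Finset.sum_eq_zero
    intro b hbBA
    rw [if_neg]
    intro heq
    apply h
    have hAB : A \ B = {a} := by
      apply Finset.eq_singleton_iff_unique_mem.mpr
      refine ⟨haAB, fun x hx => ?_⟩
      by_contra hxa
      have hxA := (Finset.mem_sdiff.mp hx).1
      have hxB := (Finset.mem_sdiff.mp hx).2
      have : x ∈ A \ {a} := Finset.mem_sdiff.mpr ⟨hxA, by simpa using hxa⟩
      rw [heq] at this
      exact hxB (Finset.mem_sdiff.mp this).1
    have hBA : B \ A = {b} := by
      apply Finset.eq_singleton_iff_unique_mem.mpr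
      refine ⟨hbBA, fun x hx => ?_⟩
      by_contra hxb
      have hxB := (Finset.mem_sdiff.mp hx).1
      have hxA := (Finset.mem_sdiff.mp hx).2
      have : x ∈ B \ {b} := Finset.mem_sdiff.mpr ⟨hxB, by simpa using hxb⟩
      rw [← heq] at this
      exact hxA (Finset.mem_sdiff.mp this).1
    rw [hAB, hBA]
    simp

lemma card_supersets {α : Type*} [Fintype α] [DecidableEq α] (U : Finset α) (m : ℕ)
    (hU : U.card ≤ m) :
    ((univ : Finset (Finset α)).filter fun A => A.card = m ∧ U ⊆ A).card
      = (Fintype.card α - U.card).choose (m - U.card) := by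
  rw [← Finset.card_compl U, ← Finset.card_powersetCard]
  apply Finset.card_bij' (fun A _ => A \ U) (fun B _ => B ∪ U)
  · intro A hA
    simp only [Finset.mem_filter, Finset.mem_univ, true_and] at hA
    rw [Finset.mem_powersetCard]
    constructor
    · intro x hx
      simp only [Finset.mem_compl]
      exact (Finset.mem_sdiff.mp hx).2
    · rw [Finset.card_sdiff_of_subset hA.2, hA.1]
  · intro B hB
    rw [Finset.mem_powersetCard] at hB
    simp only [Finset.mem_filter, Finset.mem_univ, true_and]
    have hdisj : Disjoint B U := by
      rw [Finset.disjoint_right]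
      intro x hxU hxB
      exact (Finset.mem_compl.mp (hB.1 hxB)) hxU
    constructor
    · rw [Finset.card_union_of_disjoint hdisj, hB.2]
      omega
    · exact Finset.subset_union_right
  · intro A hA
    simp only [Finset.mem_filter, Finset.mem_univ, true_and] at hA
    exact Finset.sdiff_union_of_subset hA.2
  · intro B hB
    rw [Finset.mem_powersetCard] at hB
    have hdisj : Disjoint B U := by
      rw [Finset.disjoint_right]
      intro x hxU hxB
      exact (Finset.mem_compl.mp (hB.1 hxB)) hxU
    exact Finset.union_sdiff_cancel_right hdisj

def inclM (n k : ℕ) : Matrix (TokenVert n (k+1)) (TokenVert n k) ℝ :=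
  Matrix.of fun A S => if S.1 ⊆ A.1 then 1 else 0

lemma sum_token {n j : ℕ} (P : Finset (Fin n) → Prop) [DecidablePred P] :
    ∑ S : TokenVert n j, (if P S.1 then (1:ℝ) else 0)
      = (((univ : Finset (Finset (Fin n))).filter fun s => s.card = j ∧ P s).card : ℝ) := by
  rw [Finset.sum_boole]
  norm_cast
  apply Finset.card_bij (fun (S : TokenVert n j) _ => S.1)
  · intro S hS
    simp only [Finset.mem_filter, Finset.mem_univ, true_and] at hS ⊢
    exact ⟨S.2, hS⟩
  · intro S _ T _ h
    exact Subtype.ext h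
  · intro s hs
    simp only [Finset.mem_filter, Finset.mem_univ, true_and] at hs
    exact ⟨⟨s, hs.1⟩, by simp [hs.2], rfl⟩

lemma identity1 {n k : ℕ} :
    tokenA (completeW n) (k+1) = inclM n k * (inclM n k)ᵀ - (((k:ℝ)+1)) • 1 := by
  ext A B
  rw [Matrix.sub_apply, Matrix.mul_apply, Matrix.smul_apply]
  have hsum : ∑ S : TokenVert n k, inclM n k A S * (inclM n k)ᵀ S B
      = ((((A.1 ∩ B.1).powersetCard k).card : ℕ) : ℝ) := by
    have : ∀ S : TokenVert n k, inclM n k A S * (inclM n k)ᵀ S B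
        = if S.1 ⊆ A.1 ∩ B.1 then (1:ℝ) else 0 := by
      intro S
      simp only [inclM, transpose_apply, of_apply, Finset.subset_inter_iff]
      by_cases h1 : S.1 ⊆ A.1 <;> by_cases h2 : S.1 ⊆ B.1 <;>
        simp [h1, h2]
    rw [Finset.sum_congr rfl fun S _ => this S, sum_token (fun s => s ⊆ A.1 ∩ B.1)]
    norm_cast
    congr 1
    ext s
    simp only [Finset.mem_filter, Finset.mem_univ, true_and, Finset.mem_powersetCard]
    tauto
  rw [hsum, Finset.card_powersetCard]
  rw [tokenA, of_apply, tokenW_complete]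
  by_cases hAB : A = B
  · subst hAB
    rw [Finset.inter_self, A.2, Nat.choose_succ_self_right, Matrix.one_apply_eq]
    simp
  · have hAB1 : A.1 ≠ B.1 := fun h => hAB (Subtype.ext h)
    rw [Matrix.one_apply_ne hAB]
    have h1 : (A.1 \ B.1).card + (A.1 ∩ B.1).card = k + 1 := by
      rw [Finset.card_sdiff_add_card_inter, A.2]
    have h2 : (B.1 \ A.1).card + (A.1 ∩ B.1).card = k + 1 := by
      rw [Finset.inter_comm, Finset.card_sdiff_add_card_inter, B.2]
    have hlt : (A.1 ∩ B.1).card ≤ k := by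
      by_contra h
      push_neg at h
      have hle : (A.1 ∩ B.1).card ≤ (A.1).card := Finset.card_le_card Finset.inter_subset_left
      rw [A.2] at hle
      have : (A.1 ∩ B.1) = A.1 :=
        Finset.eq_of_subset_of_card_le Finset.inter_subset_left (by omega)
      have hsub : A.1 ⊆ B.1 := by
        rw [← this]; exact Finset.inter_subset_right
      exact hAB1 (Finset.eq_of_subset_of_card_le hsub (by rw [A.2, B.2]))
    by_cases hc : (A.1 ∩ B.1).card = k
    · rw [hc, Nat.choose_self, if_pos ⟨by omega, by omega⟩]
      simp
    · rw [Nat.choose_eq_zero_of_lt (by omega), if_neg (by omega)]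
      simp

lemma identity2 {n k : ℕ} (hkn : k ≤ n) :
    (inclM n k)ᵀ * inclM n k = tokenA (completeW n) k + ((n:ℝ) - k) • 1 := by
  ext S T
  rw [Matrix.add_apply, Matrix.mul_apply, Matrix.smul_apply]
  have hsum : ∑ A : TokenVert n (k+1), (inclM n k)ᵀ S A * inclM n k A T
      = ((((univ : Finset (Finset (Fin n))).filter
          fun A => A.card = k + 1 ∧ S.1 ∪ T.1 ⊆ A).card : ℕ) : ℝ) := by
    have : ∀ A : TokenVert n (k+1), (inclM n k)ᵀ S A * inclM n k A T
        = if S.1 ∪ T.1 ⊆ A.1 then (1:ℝ) else 0 := by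
      intro A
      simp only [inclM, transpose_apply, of_apply, Finset.union_subset_iff]
      by_cases h1 : S.1 ⊆ A.1 <;> by_cases h2 : T.1 ⊆ A.1 <;>
        simp [h1, h2]
    rw [Finset.sum_congr rfl fun A _ => this A, sum_token (fun A => S.1 ∪ T.1 ⊆ A)]
  rw [hsum, tokenA, of_apply, tokenW_complete]
  by_cases hST : S = T
  · subst hST
    rw [Finset.union_self, Matrix.one_apply_eq]
    rw [card_supersets _ _ (by rw [S.2]; omega), S.2, Fintype.card_fin,
      Nat.add_sub_cancel_left, Nat.choose_one_right]
    rw [if_neg (by simp), smul_eq_mul, mul_one]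
    push_cast [Nat.cast_sub hkn]
    ring
  · have hST1 : S.1 ≠ T.1 := fun h => hST (Subtype.ext h)
    rw [Matrix.one_apply_ne hST]
    have hTS : (T.1 \ S.1).Nonempty := by
      rw [Finset.sdiff_nonempty]
      intro hsub
      exact hST1 ((Finset.eq_of_subset_of_card_le hsub (by rw [S.2, T.2])).symm)
    have hSTne : (S.1 \ T.1).Nonempty := by
      rw [Finset.sdiff_nonempty]
      intro hsub
      exact hST1 (Finset.eq_of_subset_of_card_le hsub (by rw [S.2, T.2]))
    have hu1 : (S.1 ∪ T.1).card = k + (T.1 \ S.1).card := by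
      rw [Finset.union_comm, ← Finset.card_sdiff_add_card, S.2]
      omega
    have hu2 : (S.1 ∪ T.1).card = k + (S.1 \ T.1).card := by
      rw [← Finset.card_sdiff_add_card, T.2]
      omega
    have hTS1 : 1 ≤ (T.1 \ S.1).card := Finset.card_pos.mpr hTS
    have hST2 : 1 ≤ (S.1 \ T.1).card := Finset.card_pos.mpr hSTne
    by_cases hc : (S.1 ∪ T.1).card = k + 1
    · rw [card_supersets _ _ (le_of_eq hc), hc, Fintype.card_fin, Nat.sub_self,
        Nat.choose_zero_right, if_pos ⟨by omega, by omega⟩]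
      simp
    · have hempty : ((univ : Finset (Finset (Fin n))).filter
          fun A => A.card = k + 1 ∧ S.1 ∪ T.1 ⊆ A) = ∅ := by
        rw [Finset.filter_eq_empty_iff]
        rintro A - ⟨hcard, hsub⟩
        have := Finset.card_le_card hsub
        omega
      rw [hempty, if_neg (by omega)]
      simp

-- shift
lemma spec_shift {m : Type*} [Fintype m] [DecidableEq m] (M : Matrix m m ℝ) (c μ : ℝ) :
    μ ∈ spectrum ℝ (M + c • 1) ↔ μ - c ∈ spectrum ℝ M := by
  rw [spec_iff, spec_iff]
  have key : ∀ v : m → ℝ, (M + c • (1 : Matrix m m ℝ)) *ᵥ v = μ • v ↔ M *ᵥ v = (μ - c) • v := by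
    intro v
    rw [Matrix.add_mulVec, Matrix.smul_mulVec, Matrix.one_mulVec]
    constructor
    · intro h
      have : M *ᵥ v = μ • v - c • v := by
        rw [← h]; abel
      rw [this, sub_smul]
    · intro h
      rw [h, sub_smul]; abel
  exact exists_congr fun v => and_congr_right fun _ => key v

-- swap: nonzero eigenvalues of W Wᵀ and Wᵀ W agree
lemma spec_swap {m l : Type*} [Fintype m] [DecidableEq m] [Fintype l] [DecidableEq l]
    (W : Matrix m l ℝ) (μ : ℝ) (hμ : μ ≠ 0)
    (h : μ ∈ spectrum ℝ (W * Wᵀ)) : μ ∈ spectrum ℝ (Wᵀ * W) := by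
  rw [spec_iff] at h ⊢
  obtain ⟨v, hv, hMv⟩ := h
  refine ⟨Wᵀ *ᵥ v, ?_, ?_⟩
  · intro h0
    apply hv
    have : W *ᵥ (Wᵀ *ᵥ v) = (W * Wᵀ) *ᵥ v := Matrix.mulVec_mulVec v W Wᵀ
    rw [h0, Matrix.mulVec_zero] at this
    rw [hMv] at this
    have := this.symm
    rw [smul_eq_zero] at this
    tauto
  · rw [← Matrix.mulVec_mulVec, Matrix.mulVec_mulVec v W Wᵀ, hMv, Matrix.mulVec_smul]

-- 0 eigenvalue from dimension
lemma zero_in_spec {m l : Type*} [Fintype m] [DecidableEq m] [Fintype l] [DecidableEq l]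
    (W : Matrix m l ℝ) (hcard : Fintype.card l < Fintype.card m) :
    (0 : ℝ) ∈ spectrum ℝ (W * Wᵀ) := by
  rw [spec_iff]
  have : ¬ Function.Injective (Wᵀ).mulVecLin := by
    intro hinj
    have h1 := LinearMap.finrank_le_finrank_of_injective hinj
    simp only [Module.finrank_pi] at h1
    omega
  rw [Function.not_injective_iff] at this
  obtain ⟨a, b, hab, hne⟩ := this
  refine ⟨a - b, sub_ne_zero.mpr hne, ?_⟩
  have : Wᵀ *ᵥ (a - b) = 0 := by
    rw [Matrix.mulVec_sub, sub_eq_zero]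
    simpa only [Matrix.mulVecLin_apply] using hab
  rw [← Matrix.mulVec_mulVec, this, Matrix.mulVec_zero, zero_smul]

-- positive definite style injectivity : P psd, c > 0 ⇒ 0 not in spectrum of P + c•1
lemma zero_not_in_spec {m : Type*} [Fintype m] [DecidableEq m]
    (P : Matrix m m ℝ) (hP : ∀ v : m → ℝ, 0 ≤ v ⬝ᵥ (P *ᵥ v)) (c : ℝ) (hc : 0 < c) :
    (0 : ℝ) ∉ spectrum ℝ (P + c • 1) := by
  rw [spec_iff]
  rintro ⟨v, hv, hMv⟩
  rw [zero_smul] at hMv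
  have h0 : v ⬝ᵥ ((P + c • (1 : Matrix m m ℝ)) *ᵥ v) = 0 := by rw [hMv, dotProduct_zero]
  rw [Matrix.add_mulVec, dotProduct_add, Matrix.smul_mulVec, Matrix.one_mulVec,
    dotProduct_smul] at h0
  have h1 : 0 ≤ v ⬝ᵥ (P *ᵥ v) := hP v
  have h2 : 0 < v ⬝ᵥ v := by
    rcases lt_or_eq_of_le (dotProduct_self_star_nonneg v) with h | h
    · exact h
    · exact absurd (dotProduct_self_eq_zero.mp h.symm) hv
  have : 0 < v ⬝ᵥ (P *ᵥ v) + c * (v ⬝ᵥ v) := by positivity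
  rw [smul_eq_mul] at h0
  linarith

lemma psd_tokenA (n j : ℕ) (v : TokenVert n j → ℝ) :
    0 ≤ v ⬝ᵥ ((tokenA (completeW n) j + (j : ℝ) • 1) *ᵥ v) := by
  cases j with
  | zero =>
    have h0 : tokenA (completeW n) 0 + ((0:ℕ) : ℝ) • (1 : Matrix (TokenVert n 0) (TokenVert n 0) ℝ)
        = 0 := by
      ext A B
      simp only [Matrix.add_apply, Nat.cast_zero, zero_smul, Matrix.zero_apply,
        Matrix.smul_apply, add_zero]
      rw [tokenA, of_apply, tokenW_complete, if_neg]
      rintro ⟨h1, -⟩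
      have : (A.1 \ B.1).card ≤ A.1.card := Finset.card_le_card (Finset.sdiff_subset)
      rw [A.2] at this
      omega
    rw [h0, Matrix.zero_mulVec, dotProduct_zero]
  | succ k =>
    have h0 : tokenA (completeW n) (k+1) + ((k+1:ℕ) : ℝ) • 1
        = inclM n k * (inclM n k)ᵀ := by
      rw [identity1]
      push_cast
      ring_nf
      abel
    rw [h0, ← Matrix.mulVec_mulVec, dotProduct_mulVec, ← Matrix.mulVec_transpose]
    exact Finset.sum_nonneg fun i _ => mul_self_nonneg _

lemma main_spec (n : ℕ) : ∀ k, 2*k ≤ n → spectrum ℝ (tokenA (completeW n) k)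
    = {x : ℝ | ∃ i : ℕ, i ≤ k ∧
        x = ((k : ℝ) - (i : ℝ)) * ((n : ℝ) - (k : ℝ) - (i : ℝ)) - (i : ℝ)} := by
  intro k
  induction k with
  | zero =>
    intro _
    ext x
    simp only [Set.mem_setOf_eq, Nat.le_zero]
    constructor
    · intro hx
      rw [spec_iff] at hx
      obtain ⟨v, hv, hMv⟩ := hx
      have hA : tokenA (completeW n) 0 = 0 := by
        ext A B
        rw [tokenA, of_apply, tokenW_complete, if_neg, Matrix.zero_apply]
        rintro ⟨h1, -⟩
        have : (A.1 \ B.1).card ≤ A.1.card := Finset.card_le_card (Finset.sdiff_subset)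
        rw [A.2] at this
        omega
      rw [hA, Matrix.zero_mulVec] at hMv
      have : x = 0 := by
        rcases smul_eq_zero.mp hMv.symm with h | h
        · exact h
        · exact absurd h hv
      exact ⟨0, rfl, by rw [this]; push_cast; ring⟩
    · rintro ⟨i, hi, hx⟩
      subst hi
      rw [spec_iff]
      refine ⟨fun _ => 1, ?_, ?_⟩
      · intro h
        have := congrFun h ⟨∅, Finset.card_empty⟩
        simp at this
      · have hA : tokenA (completeW n) 0 = 0 := by
          ext A B
          rw [tokenA, of_apply, tokenW_complete, if_neg, Matrix.zero_apply]
          rintro ⟨h1, -⟩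
          have : (A.1 \ B.1).card ≤ A.1.card := Finset.card_le_card (Finset.sdiff_subset)
          rw [A.2] at this
          omega
        rw [hA, Matrix.zero_mulVec, hx]
        push_cast
        ext A
        simp
  | succ k IH =>
    intro hkn
    have IH' := IH (by omega)
    have hkn' : k ≤ n := by omega
    have hchoose : n.choose k < n.choose (k+1) := by
      have h1 := Nat.choose_succ_right_eq n k
      have hp : 0 < n.choose k := Nat.choose_pos (by omega)
      have h2 : n.choose k * (k+1) < n.choose k * (n - k) :=
        mul_lt_mul_of_pos_left (by omega) hp
      exact Nat.lt_of_mul_lt_mul_right (h2.trans_eq h1.symm)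
    have hcard : Fintype.card (TokenVert n k) < Fintype.card (TokenVert n (k+1)) := by
      rw [Fintype.card_finset_len, Fintype.card_finset_len, Fintype.card_fin]
      exact hchoose
    have hUU : inclM n k * (inclM n k)ᵀ = tokenA (completeW n) (k+1) + ((k:ℝ)+1) • 1 := by
      rw [identity1]; abel
    have key : ∀ x : ℝ, x ∈ spectrum ℝ (tokenA (completeW n) (k+1))
        ↔ (x + ((k:ℝ)+1) = 0 ∨ x + ((k:ℝ)+1) - ((n:ℝ) - k) ∈ spectrum ℝ (tokenA (completeW n) k)) := by
      intro x
      have s1 : x ∈ spectrum ℝ (tokenA (completeW n) (k+1))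
          ↔ x + ((k:ℝ)+1) ∈ spectrum ℝ (inclM n k * (inclM n k)ᵀ) := by
        rw [hUU, spec_shift]
        simp
      rw [s1]
      have znotin : (0:ℝ) ∉ spectrum ℝ ((inclM n k)ᵀ * inclM n k) := by
        rw [identity2 hkn']
        have hsplit : ((n:ℝ) - k) • (1 : Matrix (TokenVert n k) (TokenVert n k) ℝ)
            = (k:ℝ) • 1 + ((n:ℝ) - 2*k) • 1 := by
          rw [← add_smul]; ring_nf
        rw [hsplit, ← add_assoc]
        exact zero_not_in_spec _ (psd_tokenA n k) _ (by
          have h := (Nat.cast_le (α := ℝ)).mpr hkn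
          push_cast at h
          linarith)
      constructor
      · intro hx
        by_cases h0 : x + ((k:ℝ)+1) = 0
        · exact Or.inl h0
        · right
          have := spec_swap _ _ h0 hx
          rw [identity2 hkn', spec_shift] at this
          exact this
      · rintro (h0 | hx)
        · rw [h0]
          exact zero_in_spec _ hcard
        · have h0 : x + ((k:ℝ)+1) ≠ 0 := by
            intro hc
            rw [hc] at hx
            apply znotin
            rw [identity2 hkn', spec_shift]
            simpa using hx
          have : x + ((k:ℝ)+1) ∈ spectrum ℝ ((inclM n k)ᵀ * inclM n k) := by
            rw [identity2 hkn', spec_shift]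
            exact hx
          have := spec_swap (inclM n k)ᵀ _ h0 (by rwa [transpose_transpose])
          rwa [transpose_transpose] at this
    ext x
    rw [key x, IH']
    simp only [Set.mem_setOf_eq]
    constructor
    · rintro (h0 | ⟨i, hi, hx⟩)
      · exact ⟨k+1, le_refl _, by push_cast; linarith⟩
      · exact ⟨i, by omega, by push_cast at hx ⊢; linarith [hx]⟩
    · rintro ⟨i, hi, hx⟩
      rcases Nat.lt_or_ge i (k+1) with h | h
      · right
        exact ⟨i, by omega, by push_cast at hx ⊢; nlinarith [hx]⟩
      · left
        have : i = k + 1 := by omega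
        subst this
        push_cast at hx
        nlinarith [hx]

/-- The adjacency eigenvalues of the `k`-th token graph of `K_n` (the Johnson graph
`J(n,k)`) are exactly `{(k-i)(n-k-i) - i : 0 ≤ i ≤ k}`. -/
theorem johnson_adj_spectrum (n k : ℕ) (hn : 2 ≤ n) (hk : 1 ≤ k) (hkn : 2 * k ≤ n) :
    spectrum ℝ (tokenA (completeW n) k)
      = {x : ℝ | ∃ i : ℕ, i ≤ k ∧
          x = ((k : ℝ) - (i : ℝ)) * ((n : ℝ) - (k : ℝ) - (i : ℝ)) - (i : ℝ)} := by
  exact main_spec n k hkn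
end
end

section
/- For any n ≥ 2, the maximum eigenvalue of the Quantum MaxCut Hamiltonian on the complete graph K_n equals (n²+2n)/4 if n is even and (n²+2n-3)/4 if n is odd. -/
open Matrix Finset

noncomputable section

/-- Computational basis states of `n` qubits. -/
abbrev QState (n : ℕ) := Fin n → Fin 2

/-- Pauli `X` matrix. -/
def pauliX : Matrix (Fin 2) (Fin 2) ℂ := !![0, 1; 1, 0]

/-- Pauli `Y` matrix. -/
def pauliY : Matrix (Fin 2) (Fin 2) ℂ := !![0, -Complex.I; Complex.I, 0]

/-- Pauli `Z` matrix. -/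
def pauliZ : Matrix (Fin 2) (Fin 2) ℂ := !![1, 0; 0, -1]

/-- The operator acting as `P` on qubit `i`, `Q` on qubit `j`, and the identity on all
other qubits of an `n`-qubit system. -/
def twoSite (n : ℕ) (i j : Fin n) (P Q : Matrix (Fin 2) (Fin 2) ℂ) :
    Matrix (QState n) (QState n) ℂ :=
  Matrix.of fun x y =>
    P (x i) (y i) * Q (x j) (y j) *
      ∏ l ∈ Finset.univ \ {i, j}, (if x l = y l then (1 : ℂ) else 0)

/-- Quantum MaxCut term on the pair `(i,j)`: `(1/2)(I - XᵢXⱼ - YᵢYⱼ - ZᵢZⱼ)`. -/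
def hQMC (n : ℕ) (i j : Fin n) : Matrix (QState n) (QState n) ℂ :=
  (1 / 2 : ℂ) • ((1 : Matrix (QState n) (QState n) ℂ)
    - twoSite n i j pauliX pauliX - twoSite n i j pauliY pauliY
    - twoSite n i j pauliZ pauliZ)

/-- XY term on the pair `(i,j)`: `(1/2)(I - XᵢXⱼ - YᵢYⱼ)`. -/
def hXY (n : ℕ) (i j : Fin n) : Matrix (QState n) (QState n) ℂ :=
  (1 / 2 : ℂ) • ((1 : Matrix (QState n) (QState n) ℂ)
    - twoSite n i j pauliX pauliX - twoSite n i j pauliY pauliY)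

/-- EPR term on the pair `(i,j)`: `(1/2)(I + XᵢXⱼ - YᵢYⱼ + ZᵢZⱼ)`. -/
def hEPR (n : ℕ) (i j : Fin n) : Matrix (QState n) (QState n) ℂ :=
  (1 / 2 : ℂ) • ((1 : Matrix (QState n) (QState n) ℂ)
    + twoSite n i j pauliX pauliX - twoSite n i j pauliY pauliY
    + twoSite n i j pauliZ pauliZ)

/-- Quantum MaxCut Hamiltonian of a weighted graph given by a symmetric weight
function `w` (each edge is counted twice in the double sum, whence the factor `1/2`). -/
def HQMC (n : ℕ) (w : Fin n → Fin n → ℝ) : Matrix (QState n) (QState n) ℂ :=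
  (1 / 2 : ℂ) • ∑ i, ∑ j, (w i j : ℂ) • hQMC n i j

/-- XY Hamiltonian of a weighted graph. -/
def HXY (n : ℕ) (w : Fin n → Fin n → ℝ) : Matrix (QState n) (QState n) ℂ :=
  (1 / 2 : ℂ) • ∑ i, ∑ j, (w i j : ℂ) • hXY n i j

/-- EPR Hamiltonian of a weighted graph. -/
def HEPR (n : ℕ) (w : Fin n → Fin n → ℝ) : Matrix (QState n) (QState n) ℂ :=
  (1 / 2 : ℂ) • ∑ i, ∑ j, (w i j : ℂ) • hEPR n i j

/-- The largest (real) eigenvalue of a Hamiltonian: the supremum of the real numbers in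
its complex spectrum. -/
def maxEigH {n : ℕ} (H : Matrix (QState n) (QState n) ℂ) : ℝ :=
  sSup {r : ℝ | (r : ℂ) ∈ spectrum ℂ H}

def singleSite (n : ℕ) (i : Fin n) (P : Matrix (Fin 2) (Fin 2) ℂ) :
    Matrix (QState n) (QState n) ℂ :=
  Matrix.of fun x y =>
    P (x i) (y i) * ∏ l ∈ Finset.univ \ {i}, (if x l = y l then (1 : ℂ) else 0)

lemma delta_prod (s : Finset (Fin n)) (x y : QState n) :
    (∏ l ∈ s, (if x l = y l then (1:ℂ) else 0)) = if (∀ l ∈ s, x l = y l) then 1 else 0 := by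
  simp [Finset.prod_boole]

lemma sum_update (x : QState n) (i : Fin n) (g : QState n → ℂ) :
    ∑ z : QState n, (∏ l ∈ Finset.univ \ {i}, (if x l = z l then (1:ℂ) else 0)) * g z
      = ∑ b, g (Function.update x i b) := by
  set F : QState n → ℂ := fun z =>
    (∏ l ∈ Finset.univ \ {i}, (if x l = z l then (1:ℂ) else 0)) * g z with hF
  have h1 : ∑ z ∈ Finset.univ.image (Function.update x i), F z
      = ∑ b, F (Function.update x i b) :=
    Finset.sum_image (fun a _ b _ h => Function.update_injective x i h)
  have h2 : ∑ z ∈ Finset.univ.image (Function.update x i), F z = ∑ z : QState n, F z := by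
    apply Finset.sum_subset (Finset.subset_univ _)
    intro z _ hz
    simp only [Finset.mem_image, Finset.mem_univ, true_and] at hz
    rw [hF]; simp only
    rw [delta_prod, if_neg, zero_mul]
    intro hall
    apply hz
    refine ⟨z i, ?_⟩
    funext l
    by_cases hl : l = i
    · subst hl; simp
    · rw [Function.update_of_ne hl]
      exact hall l (by simp [hl])
  have h3 : ∀ b, F (Function.update x i b) = g (Function.update x i b) := by
    intro b
    rw [hF]; simp only
    rw [delta_prod, if_pos, one_mul]
    intro l hl
    simp only [Finset.mem_sdiff, Finset.mem_singleton] at hl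
    rw [Function.update_of_ne hl.2]
  rw [← h2, h1, Finset.sum_congr rfl (fun b _ => h3 b)]

/-- mulVec formula. -/
lemma singleSite_mulVec (i : Fin n) (P : Matrix (Fin 2) (Fin 2) ℂ) (v : QState n → ℂ)
    (x : QState n) :
    (singleSite n i P).mulVec v x = ∑ b, P (x i) b * v (Function.update x i b) := by
  unfold Matrix.mulVec dotProduct singleSite
  simp only [Matrix.of_apply]
  have h := sum_update x i (fun z => P (x i) (z i) * v z)
  simp only [Function.update_self] at h
  rw [← h]
  apply Finset.sum_congr rfl
  intro z _
  ring

lemma singleSite_mul_same (i : Fin n) (P Q : Matrix (Fin 2) (Fin 2) ℂ) :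
    singleSite n i P * singleSite n i Q = singleSite n i (P * Q) := by
  ext x y
  simp only [Matrix.mul_apply, singleSite, Matrix.of_apply]
  have h := sum_update x i (fun z => P (x i) (z i) *
      (Q (z i) (y i) * ∏ l ∈ Finset.univ \ {i}, (if z l = y l then (1:ℂ) else 0)))
  simp only [Function.update_self] at h
  rw [show ∑ z : QState n, (P (x i) (z i) * ∏ l ∈ Finset.univ \ {i}, (if x l = z l then (1:ℂ) else 0))
      * (Q (z i) (y i) * ∏ l ∈ Finset.univ \ {i}, (if z l = y l then (1:ℂ) else 0))
      = ∑ z : QState n, (∏ l ∈ Finset.univ \ {i}, (if x l = z l then (1:ℂ) else 0)) *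
        (P (x i) (z i) * (Q (z i) (y i) * ∏ l ∈ Finset.univ \ {i}, (if z l = y l then (1:ℂ) else 0)))
    from Finset.sum_congr rfl (fun z _ => by ring), h]
  have hupd : ∀ b : Fin 2, (∏ l ∈ Finset.univ \ {i}, (if Function.update x i b l = y l then (1:ℂ) else 0))
      = ∏ l ∈ Finset.univ \ {i}, (if x l = y l then (1:ℂ) else 0) := by
    intro b
    apply Finset.prod_congr rfl
    intro l hl
    simp only [Finset.mem_sdiff, Finset.mem_singleton] at hl
    rw [Function.update_of_ne hl.2]
  simp only [hupd]
  rw [Finset.sum_mul]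
  apply Finset.sum_congr rfl
  intro b _
  ring

lemma singleSite_mul_ne {i j : Fin n} (hij : i ≠ j) (P Q : Matrix (Fin 2) (Fin 2) ℂ) :
    singleSite n i P * singleSite n j Q = twoSite n i j P Q := by
  ext x y
  simp only [Matrix.mul_apply, singleSite, twoSite, Matrix.of_apply]
  have h := sum_update x i (fun z => P (x i) (z i) *
      (Q (z j) (y j) * ∏ l ∈ Finset.univ \ {j}, (if z l = y l then (1:ℂ) else 0)))
  simp only [Function.update_self] at h
  rw [show ∑ z : QState n, (P (x i) (z i) * ∏ l ∈ Finset.univ \ {i}, (if x l = z l then (1:ℂ) else 0))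
      * (Q (z j) (y j) * ∏ l ∈ Finset.univ \ {j}, (if z l = y l then (1:ℂ) else 0))
      = ∑ z : QState n, (∏ l ∈ Finset.univ \ {i}, (if x l = z l then (1:ℂ) else 0)) *
        (P (x i) (z i) * (Q (z j) (y j) * ∏ l ∈ Finset.univ \ {j}, (if z l = y l then (1:ℂ) else 0)))
    from Finset.sum_congr rfl (fun z _ => by ring), h]
  -- now evaluate sum over b
  have hxj : ∀ b : Fin 2, Function.update x i b j = x j := fun b => Function.update_of_ne (Ne.symm hij) _ _
  have hsplit : ∀ b : Fin 2,
      (∏ l ∈ Finset.univ \ {j}, (if Function.update x i b l = y l then (1:ℂ) else 0))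
      = (if b = y i then (1:ℂ) else 0) *
          ∏ l ∈ Finset.univ \ {i, j}, (if x l = y l then (1:ℂ) else 0) := by
    intro b
    have hi_mem : i ∈ Finset.univ \ ({j} : Finset (Fin n)) := by simp [hij]
    rw [← Finset.mul_prod_erase _ _ hi_mem, Function.update_self]
    congr 1
    · have : (Finset.univ \ ({j} : Finset (Fin n))).erase i = Finset.univ \ {i, j} := by
        ext l; simp [Finset.mem_erase, and_comm, and_left_comm]
      rw [this]
      apply Finset.prod_congr rfl
      intro l hl
      simp only [Finset.mem_sdiff, Finset.mem_insert, Finset.mem_singleton, not_or] at hl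
      rw [Function.update_of_ne hl.2.1]
  simp only [hsplit, hxj]
  rw [Fin.sum_univ_two]
  by_cases hyi : y i = 0
  · simp [hyi, Fin.ext_iff]; ring
  · have : y i = 1 := by omega
    simp [this, Fin.ext_iff]; ring

lemma singleSite_one (i : Fin n) : singleSite n i 1 = 1 := by
  ext x y
  simp only [singleSite, Matrix.of_apply, Matrix.one_apply, delta_prod]
  by_cases h : x = y
  · subst h; simp
  · rw [if_neg h]
    have hl : ∃ l, x l ≠ y l := by
      by_contra hc
      push_neg at hc
      exact h (funext hc)
    obtain ⟨l, hl⟩ := hl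
    by_cases hli : l = i
    · subst hli
      simp [Matrix.one_apply, hl]
    · exact mul_eq_zero_of_right _ (by rw [if_neg (fun hall => hl (hall l (by simp [hli])))])

lemma singleSite_conjTranspose (i : Fin n) (P : Matrix (Fin 2) (Fin 2) ℂ) :
    (singleSite n i P)ᴴ = singleSite n i Pᴴ := by
  ext x y
  simp only [Matrix.conjTranspose_apply, singleSite, Matrix.of_apply, Matrix.conjTranspose_apply,
    delta_prod]
  rw [star_mul']
  have hiff : (∀ l ∈ Finset.univ \ {i}, y l = x l) ↔ (∀ l ∈ Finset.univ \ {i}, x l = y l) :=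
    forall₂_congr (fun l _ => eq_comm)
  have hstar : star (if ∀ l ∈ Finset.univ \ {i}, y l = x l then (1:ℂ) else 0)
      = if ∀ l ∈ Finset.univ \ {i}, x l = y l then (1:ℂ) else 0 := by
    rw [if_congr hiff rfl rfl]; split <;> simp
  rw [hstar]
  try ring

lemma singleSite_smul (i : Fin n) (c : ℂ) (P : Matrix (Fin 2) (Fin 2) ℂ) :
    singleSite n i (c • P) = c • singleSite n i P := by
  ext x y
  simp only [singleSite, Matrix.of_apply, Matrix.smul_apply, smul_eq_mul]
  ring

lemma singleSite_sub (i : Fin n) (P Q : Matrix (Fin 2) (Fin 2) ℂ) :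
    singleSite n i (P - Q) = singleSite n i P - singleSite n i Q := by
  ext x y
  simp only [singleSite, Matrix.of_apply, Matrix.sub_apply]
  ring

lemma twoSite_comm (i j : Fin n) (P Q : Matrix (Fin 2) (Fin 2) ℂ) :
    twoSite n i j P Q = twoSite n j i Q P := by
  ext x y
  simp only [twoSite, Matrix.of_apply]
  rw [Finset.pair_comm]
  ring

lemma pauliX_sq : pauliX * pauliX = 1 := by
  rw [pauliX, Matrix.mul_fin_two, Matrix.one_fin_two]
  norm_num

lemma pauliY_sq : pauliY * pauliY = 1 := by
  rw [pauliY, Matrix.mul_fin_two, Matrix.one_fin_two]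
  norm_num [Complex.I_mul_I]

lemma pauliZ_sq : pauliZ * pauliZ = 1 := by
  rw [pauliZ, Matrix.mul_fin_two, Matrix.one_fin_two]
  norm_num

lemma pauliXY_comm : pauliX * pauliY - pauliY * pauliX = ((2 : ℂ) * Complex.I) • pauliZ := by
  rw [pauliX, pauliY, pauliZ, Matrix.mul_fin_two, Matrix.mul_fin_two]
  ext i j
  fin_cases i <;> fin_cases j <;> simp <;> ring

lemma pauliX_herm : pauliXᴴ = pauliX := by
  rw [pauliX]; ext i j; fin_cases i <;> fin_cases j <;> simp
lemma pauliY_herm : pauliYᴴ = pauliY := by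
  rw [pauliY]; ext i j; fin_cases i <;> fin_cases j <;> simp
lemma pauliZ_herm : pauliZᴴ = pauliZ := by
  rw [pauliZ]; ext i j; fin_cases i <;> fin_cases j <;> simp

/-- Total (doubled) spin operators. -/
def TT (n : ℕ) (P : Matrix (Fin 2) (Fin 2) ℂ) : Matrix (QState n) (QState n) ℂ :=
  ∑ i, singleSite n i P

lemma TT_mul (P Q : Matrix (Fin 2) (Fin 2) ℂ) :
    TT n P * TT n Q = ∑ i, singleSite n i (P * Q)
      + ∑ i, ∑ j ∈ Finset.univ \ {i}, twoSite n i j P Q := by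
  rw [TT, TT, Finset.sum_mul_sum]
  rw [← Finset.sum_add_distrib]
  apply Finset.sum_congr rfl
  intro i _
  conv_lhs => rw [show (Finset.univ : Finset (Fin n)) = insert i (Finset.univ \ {i}) by
    ext l; simp [eq_comm]]
  rw [Finset.sum_insert (by simp)]
  congr 1
  · exact singleSite_mul_same i P Q
  · apply Finset.sum_congr rfl
    intro j hj
    simp only [Finset.mem_sdiff, Finset.mem_singleton] at hj
    exact singleSite_mul_ne (Ne.symm hj.2) P Q

lemma TT_herm (P : Matrix (Fin 2) (Fin 2) ℂ) (hP : Pᴴ = P) : (TT n P)ᴴ = TT n P := by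
  rw [TT, Matrix.conjTranspose_sum]
  exact Finset.sum_congr rfl fun i _ => by rw [singleSite_conjTranspose, hP]

lemma sum_offdiag_ite (g : Fin n → Fin n → Matrix (QState n) (QState n) ℂ) (i : Fin n) :
    ∑ j ∈ Finset.univ \ {i}, g i j = ∑ j, if j = i then 0 else g i j := by
  rw [← Finset.sum_subset (Finset.subset_univ (Finset.univ \ {i})) (fun j _ hj => ?_)]
  · apply Finset.sum_congr rfl
    intro j hj
    simp only [Finset.mem_sdiff, Finset.mem_singleton] at hj
    rw [if_neg hj.2]
  · have hji : j = i := by simpa using hj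
    rw [if_pos hji]

lemma sum_offdiag_swap (f : Fin n → Fin n → Matrix (QState n) (QState n) ℂ) :
    ∑ i, ∑ j ∈ Finset.univ \ {i}, f i j = ∑ i, ∑ j ∈ Finset.univ \ {i}, f j i := by
  calc ∑ i, ∑ j ∈ Finset.univ \ {i}, f i j
      = ∑ i, ∑ j, if j = i then 0 else f i j :=
        Finset.sum_congr rfl fun i _ => sum_offdiag_ite f i
    _ = ∑ a, ∑ b, if a = b then 0 else f b a := Finset.sum_comm
    _ = ∑ a, ∑ b, if b = a then 0 else f b a := by
        apply Finset.sum_congr rfl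
        intro a _
        apply Finset.sum_congr rfl
        intro b _
        by_cases h : a = b
        · subst h; simp
        · simp [h, Ne.symm h]
    _ = ∑ i, ∑ j ∈ Finset.univ \ {i}, f j i :=
        Finset.sum_congr rfl fun a _ => (sum_offdiag_ite (fun i j => f j i) a).symm

lemma TT_comm_XY : TT n pauliX * TT n pauliY - TT n pauliY * TT n pauliX
    = ((2:ℂ) * Complex.I) • TT n pauliZ := by
  rw [TT_mul, TT_mul]
  have hsym := sum_offdiag_swap (fun i j => twoSite n i j pauliX pauliY)
  have hsym2 : ∑ i, ∑ j ∈ Finset.univ \ {i}, twoSite n j i pauliX pauliY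
      = ∑ i, ∑ j ∈ Finset.univ \ {i}, twoSite n i j pauliY pauliX :=
    Finset.sum_congr rfl fun i _ => Finset.sum_congr rfl fun j _ => (twoSite_comm _ _ _ _).symm
  rw [hsym, hsym2]
  rw [TT, Finset.smul_sum]
  rw [add_sub_add_right_eq_sub, ← Finset.sum_sub_distrib]
  apply Finset.sum_congr rfl
  intro i _
  rw [← singleSite_sub, pauliXY_comm, singleSite_smul]

def Csq (n : ℕ) : Matrix (QState n) (QState n) ℂ :=
  TT n pauliX * TT n pauliX + TT n pauliY * TT n pauliY + TT n pauliZ * TT n pauliZ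

def DD (n : ℕ) : Matrix (QState n) (QState n) ℂ :=
  ∑ i, ∑ j ∈ Finset.univ \ {i}, (twoSite n i j pauliX pauliX
    + twoSite n i j pauliY pauliY + twoSite n i j pauliZ pauliZ)

lemma sum_singleSite_one : ∑ i, singleSite n i 1 = ((n:ℂ)) • 1 := by
  rw [Finset.sum_congr rfl (fun i _ => singleSite_one i), Finset.sum_const, Finset.card_univ,
    Fintype.card_fin, Nat.cast_smul_eq_nsmul]

lemma Csq_eq : Csq n = ((3 * n : ℂ)) • 1 + DD n := by
  rw [Csq, TT_mul, TT_mul, TT_mul, pauliX_sq, pauliY_sq, pauliZ_sq, sum_singleSite_one, DD]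
  rw [show (∑ i, ∑ j ∈ Finset.univ \ {i}, (twoSite n i j pauliX pauliX
      + twoSite n i j pauliY pauliY + twoSite n i j pauliZ pauliZ))
      = (∑ i, ∑ j ∈ Finset.univ \ {i}, twoSite n i j pauliX pauliX)
      + (∑ i, ∑ j ∈ Finset.univ \ {i}, twoSite n i j pauliY pauliY)
      + (∑ i, ∑ j ∈ Finset.univ \ {i}, twoSite n i j pauliZ pauliZ) by
    simp [Finset.sum_add_distrib]]
  match_scalars <;> ring

lemma HQMC_complete_eq :
    HQMC n (completeW n) = (((n:ℂ)^2 + 2*n)/4) • 1 - (1/4 : ℂ) • Csq n := by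
  have hinner : ∀ i : Fin n, ∑ j, ((completeW n i j : ℂ)) • hQMC n i j
      = ∑ j ∈ Finset.univ \ {i}, hQMC n i j := by
    intro i
    rw [sum_offdiag_ite (fun i j => hQMC n i j) i]
    apply Finset.sum_congr rfl
    intro j _
    by_cases h : j = i
    · subst h; simp [completeW]
    · rw [if_neg h]
      have : completeW n i j = 1 := by simp [completeW, Ne.symm h]
      rw [this]; simp
  rw [HQMC, Finset.sum_congr rfl (fun i _ => hinner i)]
  have hexp : ∀ i : Fin n, ∑ j ∈ Finset.univ \ {i}, hQMC n i j
      = (1/2 : ℂ) • (((n:ℂ) - 1) • (1 : Matrix (QState n) (QState n) ℂ)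
        - ∑ j ∈ Finset.univ \ {i}, (twoSite n i j pauliX pauliX
          + twoSite n i j pauliY pauliY + twoSite n i j pauliZ pauliZ)) := by
    intro i
    rw [Finset.sum_congr rfl (fun j _ => show hQMC n i j
        = (1/2 : ℂ) • ((1 : Matrix (QState n) (QState n) ℂ)
        - (twoSite n i j pauliX pauliX + twoSite n i j pauliY pauliY
          + twoSite n i j pauliZ pauliZ)) from by rw [hQMC]; module)]
    rw [← Finset.smul_sum, Finset.sum_sub_distrib, Finset.sum_const, Finset.card_sdiff_of_subset
      (Finset.subset_univ _), Finset.card_univ, Fintype.card_fin, Finset.card_singleton]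
    have hn1 : ((n - 1 : ℕ) : ℂ) = (n : ℂ) - 1 := by
      have : 1 ≤ n := i.pos
      push_cast [this]; ring
    rw [← Nat.cast_smul_eq_nsmul ℂ (n - 1), hn1]
  rw [Finset.sum_congr rfl (fun i _ => hexp i), ← Finset.smul_sum, Finset.sum_sub_distrib,
    Finset.sum_const, Finset.card_univ, Fintype.card_fin,
    show (∑ i, ∑ j ∈ Finset.univ \ {i}, (twoSite n i j pauliX pauliX
      + twoSite n i j pauliY pauliY + twoSite n i j pauliZ pauliZ)) = DD n from rfl,
    Csq_eq, ← Nat.cast_smul_eq_nsmul ℂ n]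
  match_scalars <;> ring

lemma mem_spectrum_iff_eig {A : Matrix (QState n) (QState n) ℂ} {μ : ℂ} :
    μ ∈ spectrum ℂ A ↔ ∃ v : QState n → ℂ, v ≠ 0 ∧ A.mulVec v = μ • v := by
  rw [← AlgEquiv.spectrum_eq (Matrix.toLinAlgEquiv' (R := ℂ) (n := QState n)) A,
    ← Module.End.hasEigenvalue_iff_mem_spectrum]
  have happ : ∀ v, (Matrix.toLinAlgEquiv' A) v = A.mulVec v := fun v =>
    Matrix.toLinAlgEquiv'_apply A v
  constructor
  · intro h
    obtain ⟨v, hv⟩ := h.exists_hasEigenvector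
    refine ⟨v, hv.2, ?_⟩
    rw [← happ]
    exact hv.apply_eq_smul
  · rintro ⟨v, hv0, hv⟩
    refine Module.End.hasEigenvalue_of_hasEigenvector (x := v) ⟨?_, hv0⟩
    rw [Module.End.mem_eigenspace_iff, happ, hv]

def ip (u v : QState n → ℂ) : ℂ := star u ⬝ᵥ v

def eucv (u : QState n → ℂ) : EuclideanSpace ℂ (QState n) := WithLp.toLp 2 u

lemma ip_eq_inner (u v : QState n → ℂ) : ip u v = inner ℂ (eucv u) (eucv v) := by
  rw [ip, PiLp.inner_apply, dotProduct]
  apply Finset.sum_congr rfl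
  intro x _
  rw [RCLike.inner_apply]
  rw [mul_comm]; rfl

lemma ip_self (u : QState n → ℂ) : ip u u = (‖eucv u‖^2 : ℝ) := by
  rw [ip_eq_inner]
  rw [@inner_self_eq_norm_sq_to_K ℂ _ _ _ _ (eucv u)]
  norm_cast

lemma ip_mulVec_herm {A : Matrix (QState n) (QState n) ℂ} (hA : Aᴴ = A)
    (u w : QState n → ℂ) : ip u (A.mulVec w) = ip (A.mulVec u) w := by
  rw [ip, ip, Matrix.dotProduct_mulVec]
  congr 1
  rw [← hA, ← Matrix.star_mulVec, hA]

def eps : Fin 2 → Fin 2 → ℂ := fun a b => !![0, 1; -1, 0] a b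

def pa {n : ℕ} (k : Fin (n/2)) : Fin n := ⟨2*k.1, by have := k.2; omega⟩
def pb {n : ℕ} (k : Fin (n/2)) : Fin n := ⟨2*k.1+1, by have := k.2; omega⟩

def vS (n : ℕ) : QState n → ℂ := fun x => ∏ k : Fin (n/2), eps (x (pa k)) (x (pb k))

lemma pa_ne_pb {n : ℕ} (k k' : Fin (n/2)) : pa k ≠ pb k' := by
  simp only [pa, pb, Ne, Fin.ext_iff]
  omega

lemma pa_inj {n : ℕ} {k k' : Fin (n/2)} (h : pa k = pa k') : k = k' := by
  simp only [pa, Fin.ext_iff] at h ⊢; omega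

lemma pb_inj {n : ℕ} {k k' : Fin (n/2)} (h : pb k = pb k') : k = k' := by
  simp only [pb, Fin.ext_iff] at h ⊢; omega

lemma vS_ne_zero (n : ℕ) : vS n ≠ 0 := by
  intro h
  have h1 : vS n (fun i => if i.1 % 2 = 0 then 0 else 1) = 1 := by
    rw [vS]
    rw [Finset.prod_congr rfl (fun k _ => show eps (if (pa (n := n) k).1 % 2 = 0 then 0 else 1)
        (if (pb (n := n) k).1 % 2 = 0 then 0 else 1) = 1 from ?_)]
    · simp
    · rw [if_pos (show (pa (n := n) k).1 % 2 = 0 from by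
          have : (pa (n := n) k).1 = 2*k.1 := rfl
          omega),
        if_neg (show ¬((pb (n := n) k).1 % 2 = 0) from by
          have : (pb (n := n) k).1 = 2*k.1+1 := rfl
          omega)]
      simp [eps]
  rw [h] at h1
  simp at h1

lemma vS_update_pa {n : ℕ} (x : QState n) (k : Fin (n/2)) (b : Fin 2) :
    vS n (Function.update x (pa k) b)
      = eps b (x (pb k)) * ∏ k' ∈ Finset.univ.erase k, eps (x (pa k')) (x (pb k')) := by
  rw [vS, ← Finset.mul_prod_erase _ _ (Finset.mem_univ k), Function.update_self,
    Function.update_of_ne (pa_ne_pb k k).symm]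
  congr 1
  apply Finset.prod_congr rfl
  intro k' hk'
  rw [Function.update_of_ne (fun h => (Finset.mem_erase.mp hk').1 (pa_inj h)),
    Function.update_of_ne (pa_ne_pb k k').symm]

lemma vS_update_pb {n : ℕ} (x : QState n) (k : Fin (n/2)) (b : Fin 2) :
    vS n (Function.update x (pb k) b)
      = eps (x (pa k)) b * ∏ k' ∈ Finset.univ.erase k, eps (x (pa k')) (x (pb k')) := by
  rw [vS, ← Finset.mul_prod_erase _ _ (Finset.mem_univ k), Function.update_self,
    Function.update_of_ne (pa_ne_pb k k)]
  congr 1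
  apply Finset.prod_congr rfl
  intro k' hk'
  rw [Function.update_of_ne (pa_ne_pb k' k),
    Function.update_of_ne (fun h => (Finset.mem_erase.mp hk').1 (pb_inj h))]

/-- `(P ⊗ I + I ⊗ P)` annihilates the singlet: entrywise condition. -/
def EpsAnnih (P : Matrix (Fin 2) (Fin 2) ℂ) : Prop :=
  ∀ s t : Fin 2, (∑ b, P s b * eps b t) + (∑ b, P t b * eps s b) = 0

lemma epsAnnih_X : EpsAnnih pauliX := by
  intro s t
  fin_cases s <;> fin_cases t <;> simp [Fin.sum_univ_two, pauliX, eps]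

lemma epsAnnih_Y : EpsAnnih pauliY := by
  intro s t
  fin_cases s <;> fin_cases t <;> simp [Fin.sum_univ_two, pauliY, eps]

lemma epsAnnih_Z : EpsAnnih pauliZ := by
  intro s t
  fin_cases s <;> fin_cases t <;> simp [Fin.sum_univ_two, pauliZ, eps]

lemma pair_annih {n : ℕ} {P : Matrix (Fin 2) (Fin 2) ℂ} (hP : EpsAnnih P) (k : Fin (n/2)) :
    (singleSite n (pa k) P).mulVec (vS n) + (singleSite n (pb k) P).mulVec (vS n) = 0 := by
  funext x
  simp only [Pi.add_apply, Pi.zero_apply, singleSite_mulVec]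
  simp only [vS_update_pa, vS_update_pb]
  set R := ∏ k' ∈ Finset.univ.erase k, eps (x (pa k')) (x (pb k')) with hR
  have := hP (x (pa k)) (x (pb k))
  have h1 : ∑ b, P (x (pa k)) b * (eps b (x (pb k)) * R)
      = (∑ b, P (x (pa k)) b * eps b (x (pb k))) * R := by
    rw [Finset.sum_mul]; exact Finset.sum_congr rfl fun b _ => by ring
  have h2 : ∑ b, P (x (pb k)) b * (eps (x (pa k)) b * R)
      = (∑ b, P (x (pb k)) b * eps (x (pa k)) b) * R := by
    rw [Finset.sum_mul]; exact Finset.sum_congr rfl fun b _ => by ring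
  rw [h1, h2, ← add_mul, this, zero_mul]

lemma sum_range_pair {V : Type*} [AddCommMonoid V] (m : ℕ) (g : ℕ → V) :
    ∑ j ∈ Finset.range (2*m), g j = ∑ k ∈ Finset.range m, (g (2*k) + g (2*k+1)) := by
  induction m with
  | zero => simp
  | succ m ih =>
    rw [show 2*(m+1) = (2*m)+1+1 from by ring, Finset.sum_range_succ, Finset.sum_range_succ, ih,
      Finset.sum_range_succ]
    abel

lemma sum_fin_split {n : ℕ} (f : Fin n → (QState n → ℂ)) :
    ∑ i, f i = (∑ k : Fin (n/2), (f (pa k) + f (pb k)))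
      + (if h : n % 2 = 1 then f ⟨n-1, by omega⟩ else 0) := by
  classical
  set g : ℕ → (QState n → ℂ) := fun j => if h : j < n then f ⟨j, h⟩ else 0 with hg
  have hfg : ∑ i, f i = ∑ j ∈ Finset.range n, g j := by
    rw [← Fin.sum_univ_eq_sum_range]
    apply Finset.sum_congr rfl
    intro i _
    rw [hg]; simp
  have hpair : ∑ k ∈ Finset.range (n/2), (g (2*k) + g (2*k+1))
      = ∑ k : Fin (n/2), (f (pa k) + f (pb k)) := by
    rw [← Fin.sum_univ_eq_sum_range (fun k => g (2*k) + g (2*k+1)) (n/2)]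
    apply Finset.sum_congr rfl
    intro k _
    have h1 : 2*k.1 < n := by have := k.2; omega
    have h2 : 2*k.1+1 < n := by have := k.2; omega
    rw [hg]
    simp only [dif_pos h1, dif_pos h2]
    rfl
  rcases Nat.mod_two_eq_zero_or_one n with he | ho
  · have hn : 2*(n/2) = n := by omega
    have hp := sum_range_pair (n/2) g
    rw [hn] at hp
    rw [dif_neg (by omega), add_zero, hfg, hp, hpair]
  · have hn : 2*(n/2)+1 = n := by omega
    have hp := sum_range_pair (n/2) g
    have hsucc := Finset.sum_range_succ g (2*(n/2))
    rw [hn] at hsucc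
    rw [dif_pos ho, hfg, hsucc, hp, hpair]
    congr 1
    simp only [hg]
    rw [dif_pos (show 2*(n/2) < n by omega)]
    exact congrArg f (Fin.ext (show 2*(n/2) = n-1 by omega))

lemma sum_mulVec' {ι : Type*} (s : Finset ι) (A : ι → Matrix (QState n) (QState n) ℂ)
    (v : QState n → ℂ) : (∑ i ∈ s, A i).mulVec v = ∑ i ∈ s, (A i).mulVec v := by
  funext x
  simp [Matrix.mulVec, dotProduct, Matrix.sum_apply, Finset.sum_mul]
  rw [Finset.sum_comm]

def lastQ (n : ℕ) (h : n % 2 = 1) : Fin n := ⟨n-1, by omega⟩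

lemma TT_mulVec_vS {P : Matrix (Fin 2) (Fin 2) ℂ} (hP : EpsAnnih P) :
    (TT n P).mulVec (vS n) = (if h : n % 2 = 1 then (singleSite n (lastQ n h) P).mulVec (vS n) else 0) := by
  rw [TT, sum_mulVec', sum_fin_split (fun i => (singleSite n i P).mulVec (vS n))]
  rw [Finset.sum_congr rfl (fun k _ => pair_annih hP k), Finset.sum_const, smul_zero, zero_add]
  split
  · rfl
  · rfl

lemma TT_mulVec_vS_even (hn : n % 2 = 0) {P : Matrix (Fin 2) (Fin 2) ℂ} (hP : EpsAnnih P) :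
    (TT n P).mulVec (vS n) = 0 := by
  rw [TT_mulVec_vS hP, dif_neg (by omega)]

lemma TTsq_mulVec_vS_odd (ho : n % 2 = 1) {P : Matrix (Fin 2) (Fin 2) ℂ} (hP : EpsAnnih P)
    (hP2 : P * P = 1) : (TT n P * TT n P).mulVec (vS n) = vS n := by
  set L := lastQ n ho with hL
  have hTv : (TT n P).mulVec (vS n) = (singleSite n L P).mulVec (vS n) := by
    rw [TT_mulVec_vS hP, dif_pos ho]
  have hrest : (∑ i ∈ Finset.univ \ {L}, singleSite n i P).mulVec (vS n) = 0 := by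
    have hsplit : (TT n P) = singleSite n L P + ∑ i ∈ Finset.univ \ {L}, singleSite n i P := by
      rw [TT]
      conv_lhs => rw [show (Finset.univ : Finset (Fin n)) = insert L (Finset.univ \ {L}) by
        ext l; simp [eq_comm]]
      rw [Finset.sum_insert (by simp)]
    have := congrArg (fun M => M.mulVec (vS n)) hsplit
    simp only [Matrix.add_mulVec] at this
    rw [hTv] at this
    exact left_eq_add.mp this
  rw [← Matrix.mulVec_mulVec, hTv, Matrix.mulVec_mulVec]
  have hmul : TT n P * singleSite n L P
      = singleSite n L P * (∑ i ∈ Finset.univ \ {L}, singleSite n i P) + 1 := by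
    rw [TT]
    conv_lhs => rw [show (Finset.univ : Finset (Fin n)) = insert L (Finset.univ \ {L}) by
      ext l; simp [eq_comm]]
    rw [Finset.sum_insert (by simp), add_mul, singleSite_mul_same, hP2, singleSite_one,
      Finset.sum_mul, Finset.mul_sum]
    rw [Finset.sum_congr rfl (fun i hi => ?_)]
    · exact add_comm _ _
    · simp only [Finset.mem_sdiff, Finset.mem_singleton] at hi
      rw [singleSite_mul_ne hi.2, singleSite_mul_ne (Ne.symm hi.2), twoSite_comm]
  rw [hmul, Matrix.add_mulVec, Matrix.one_mulVec, ← Matrix.mulVec_mulVec, hrest,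
    Matrix.mulVec_zero, zero_add]

lemma Csq_mulVec_vS_even (hn : n % 2 = 0) : (Csq n).mulVec (vS n) = 0 := by
  rw [Csq, Matrix.add_mulVec, Matrix.add_mulVec]
  rw [← Matrix.mulVec_mulVec, ← Matrix.mulVec_mulVec, ← Matrix.mulVec_mulVec]
  rw [TT_mulVec_vS_even hn epsAnnih_X, TT_mulVec_vS_even hn epsAnnih_Y,
    TT_mulVec_vS_even hn epsAnnih_Z]
  simp

lemma Csq_mulVec_vS_odd (ho : n % 2 = 1) : (Csq n).mulVec (vS n) = (3:ℂ) • vS n := by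
  rw [Csq, Matrix.add_mulVec, Matrix.add_mulVec]
  rw [TTsq_mulVec_vS_odd ho epsAnnih_X pauliX_sq, TTsq_mulVec_vS_odd ho epsAnnih_Y pauliY_sq,
    TTsq_mulVec_vS_odd ho epsAnnih_Z pauliZ_sq]
  module

lemma Csq_eq' : Csq n = (((n:ℂ)^2 + 2*n)) • 1 - (4:ℂ) • HQMC n (completeW n) := by
  rw [HQMC_complete_eq]; module

lemma H_mulVec_vS_even (hn : n % 2 = 0) :
    (HQMC n (completeW n)).mulVec (vS n) = ((((n:ℝ)^2+2*n)/4 : ℝ) : ℂ) • vS n := by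
  rw [HQMC_complete_eq, Matrix.sub_mulVec, Matrix.smul_mulVec, Matrix.one_mulVec,
    Matrix.smul_mulVec, Csq_mulVec_vS_even hn, smul_zero, sub_zero]
  congr 1
  push_cast
  ring

lemma H_mulVec_vS_odd (ho : n % 2 = 1) :
    (HQMC n (completeW n)).mulVec (vS n) = ((((n:ℝ)^2+2*n-3)/4 : ℝ) : ℂ) • vS n := by
  rw [HQMC_complete_eq, Matrix.sub_mulVec, Matrix.smul_mulVec, Matrix.one_mulVec,
    Matrix.smul_mulVec, Csq_mulVec_vS_odd ho]
  have : ((((n:ℝ)^2+2*n-3)/4 : ℝ) : ℂ) = ((n:ℂ)^2+2*n)/4 - 3/4 := by push_cast; ring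
  rw [this]
  module

def wt {n : ℕ} (x : QState n) : ℕ := ∑ i, (x i).val

lemma singleSiteZ_mulVec (i : Fin n) (w : QState n → ℂ) (x : QState n) :
    (singleSite n i pauliZ).mulVec w x = (1 - 2*((x i).val : ℂ)) * w x := by
  rw [singleSite_mulVec, Fin.sum_univ_two]
  have h0 : (0 : Fin 2) = x i ∨ (1 : Fin 2) = x i := by omega
  rcases h0 with h | h
  · rw [show Function.update x i 0 = x from by rw [h]; exact Function.update_eq_self i x, ← h]
    simp [pauliZ]
  · rw [show Function.update x i 1 = x from by rw [h]; exact Function.update_eq_self i x, ← h]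
    simp [pauliZ]
    ring
lemma TTZ_mulVec_sector {k : ℕ} {w : QState n → ℂ} (hw : ∀ x, wt x ≠ k → w x = 0) :
    (TT n pauliZ).mulVec w = (((n:ℝ) - 2*k : ℝ) : ℂ) • w := by
  funext x
  rw [TT, sum_mulVec']
  rw [Finset.sum_apply]
  rw [Finset.sum_congr rfl (fun i _ => singleSiteZ_mulVec i w x)]
  rw [← Finset.sum_mul]
  by_cases hx : wt x = k
  · have : ∑ i, (1 - 2*((x i).val : ℂ)) = (n : ℂ) - 2*k := by
      rw [Finset.sum_sub_distrib, Finset.sum_const, Finset.card_univ, Fintype.card_fin,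
        ← Finset.mul_sum]
      have : ∑ i, ((x i).val : ℂ) = (k : ℂ) := by
        rw [← hx, wt]
        push_cast
        try rfl
      rw [this]
      simp
    rw [this, Pi.smul_apply, smul_eq_mul]
    push_cast
    ring
  · rw [hw x hx, Pi.smul_apply, hw x hx, smul_eq_mul, mul_zero, mul_zero]

lemma wt_split_pair {i j : Fin n} (hij : i ≠ j) (x : QState n) :
    wt x = (x i).val + (x j).val + ∑ l ∈ Finset.univ \ {i, j}, (x l).val := by
  rw [wt]
  have hj : j ∈ Finset.univ \ ({i} : Finset (Fin n)) := by simp [Ne.symm hij]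
  rw [← Finset.add_sum_erase _ _ (Finset.mem_univ i), ← Finset.add_sum_erase _ _ (show j ∈ Finset.univ.erase i by simp [Ne.symm hij])]
  rw [show (Finset.univ.erase i).erase j = Finset.univ \ {i, j} by
    ext l; simp [Finset.mem_erase, and_comm, and_left_comm]]
  ring

lemma pauli_pair_offsector {a b c d : Fin 2} (h : a.val + b.val ≠ c.val + d.val) :
    pauliX a c * pauliX b d + pauliY a c * pauliY b d = 0 ∧ pauliZ a c * pauliZ b d = 0 := by
  fin_cases a <;> fin_cases b <;> fin_cases c <;> fin_cases d <;>
    simp_all [pauliX, pauliY, pauliZ, Complex.I_mul_I]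

lemma hQMC_offsector {i j : Fin n} (hij : i ≠ j) {x y : QState n} (hxy : wt x ≠ wt y) :
    hQMC n i j x y = 0 := by
  have hne : x ≠ y := fun h => hxy (by rw [h])
  rw [hQMC]
  simp only [Matrix.smul_apply, Matrix.sub_apply, Matrix.one_apply, twoSite, Matrix.of_apply,
    if_neg hne, smul_eq_mul]
  by_cases hδ : ∀ l ∈ Finset.univ \ ({i, j} : Finset (Fin n)), x l = y l
  · have hab : (x i).val + (x j).val ≠ (y i).val + (y j).val := by
      intro hc
      apply hxy
      rw [wt_split_pair hij x, wt_split_pair hij y, hc,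
        Finset.sum_congr rfl (fun l hl => by rw [hδ l hl])]
    obtain ⟨hXY, hZ⟩ := pauli_pair_offsector hab
    rw [delta_prod, if_pos hδ]
    rw [mul_one, mul_one, mul_one]
    rw [show pauliX (x i) (y i) * pauliX (x j) (y j)
        = -(pauliY (x i) (y i) * pauliY (x j) (y j)) from by linear_combination hXY, hZ]
    ring
  · rw [delta_prod, if_neg hδ]
    ring

lemma H_offsector {x y : QState n} (hxy : wt x ≠ wt y) : HQMC n (completeW n) x y = 0 := by
  rw [HQMC]
  simp only [Matrix.smul_apply, Matrix.sum_apply, smul_eq_mul]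
  rw [Finset.sum_eq_zero, mul_zero]
  intro i _
  rw [Finset.sum_eq_zero]
  intro j _
  by_cases hij : i = j
  · subst hij; simp [completeW]
  · rw [hQMC_offsector hij hxy, mul_zero]

lemma Csq_offsector {x y : QState n} (hxy : wt x ≠ wt y) : Csq n x y = 0 := by
  have hne : x ≠ y := fun h => hxy (by rw [h])
  rw [Csq_eq']
  simp only [Matrix.sub_apply, Matrix.smul_apply, Matrix.one_apply, if_neg hne,
    H_offsector hxy, smul_eq_mul, mul_zero, smul_zero, sub_zero]

lemma ip_conj (u v : QState n → ℂ) : (starRingEnd ℂ) (ip u v) = ip v u := by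
  rw [ip_eq_inner, ip_eq_inner]
  exact inner_conj_symm _ _

lemma quad_eq {w : QState n → ℂ} {μ : ℝ} (hC : (Csq n).mulVec w = ((μ:ℝ):ℂ) • w) :
    μ * ‖eucv w‖^2 = ‖eucv ((TT n pauliX).mulVec w)‖^2
      + ‖eucv ((TT n pauliY).mulVec w)‖^2 + ‖eucv ((TT n pauliZ).mulVec w)‖^2 := by
  have key : ip w ((Csq n).mulVec w) = ip w ((Csq n).mulVec w) := rfl
  have lhs : ip w ((Csq n).mulVec w) = ((μ:ℝ):ℂ) * ((‖eucv w‖^2 : ℝ) : ℂ) := by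
    rw [hC, ip, dotProduct_smul, smul_eq_mul, ← ip, ip_self]
  have rhs : ip w ((Csq n).mulVec w)
      = ((‖eucv ((TT n pauliX).mulVec w)‖^2 : ℝ) : ℂ)
        + ((‖eucv ((TT n pauliY).mulVec w)‖^2 : ℝ) : ℂ)
        + ((‖eucv ((TT n pauliZ).mulVec w)‖^2 : ℝ) : ℂ) := by
    rw [Csq, Matrix.add_mulVec, Matrix.add_mulVec, ← Matrix.mulVec_mulVec, ← Matrix.mulVec_mulVec,
      ← Matrix.mulVec_mulVec]
    rw [ip, dotProduct_add, dotProduct_add]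
    rw [← ip, ← ip, ← ip,
      ip_mulVec_herm (TT_herm _ pauliX_herm), ip_mulVec_herm (TT_herm _ pauliY_herm),
      ip_mulVec_herm (TT_herm _ pauliZ_herm), ip_self, ip_self, ip_self]
  rw [lhs] at rhs
  exact_mod_cast rhs

lemma eucv_ne_zero {w : QState n → ℂ} (hw : w ≠ 0) : eucv w ≠ 0 := fun h => hw (by simpa [eucv] using congrArg WithLp.ofLp h)

lemma psd_bound {w : QState n → ℂ} {μ : ℝ} (hw : w ≠ 0)
    (hC : (Csq n).mulVec w = ((μ:ℝ):ℂ) • w) : 0 ≤ μ := by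
  have h := quad_eq hC
  have hN : 0 < ‖eucv w‖^2 := pow_pos (norm_pos_iff.mpr (eucv_ne_zero hw)) 2
  nlinarith [sq_nonneg ‖eucv ((TT n pauliX).mulVec w)‖, sq_nonneg ‖eucv ((TT n pauliY).mulVec w)‖,
    sq_nonneg ‖eucv ((TT n pauliZ).mulVec w)‖]

lemma comm_bound {w : QState n → ℂ} {μ m : ℝ} (hw : w ≠ 0)
    (hC : (Csq n).mulVec w = ((μ:ℝ):ℂ) • w)
    (hz : (TT n pauliZ).mulVec w = ((m:ℝ):ℂ) • w) :
    m^2 + 2*|m| ≤ μ := by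
  set N := ‖eucv w‖^2 with hNdef
  have hN : 0 < N := pow_pos (norm_pos_iff.mpr (eucv_ne_zero hw)) 2
  set a := (TT n pauliX).mulVec w with ha
  set b := (TT n pauliY).mulVec w with hb
  set A := ‖eucv a‖^2 with hA
  set B := ‖eucv b‖^2 with hB
  -- norm of Tz w
  have hzn : ‖eucv ((TT n pauliZ).mulVec w)‖^2 = m^2 * N := by
    rw [hz]
    have : eucv (((m:ℝ):ℂ) • w) = ((m:ℝ):ℂ) • eucv w := rfl
    rw [this, norm_smul]
    simp [Complex.norm_real, mul_pow, sq_abs, hNdef]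
  have h1 : μ * N = A + B + m^2 * N := by
    have := quad_eq hC
    rw [hzn] at this
    exact this
  -- commutator identity
  set z := ip a b with hzdef
  have h2 : z - (starRingEnd ℂ) z = 2 * Complex.I * (m:ℂ) * (N:ℂ) := by
    have e1 : ip w (((TT n pauliX * TT n pauliY) - (TT n pauliY * TT n pauliX)).mulVec w)
        = z - (starRingEnd ℂ) z := by
      have t1 : ip w ((TT n pauliX).mulVec ((TT n pauliY).mulVec w)) = ip a b := by
        rw [ip_mulVec_herm (TT_herm _ pauliX_herm)]
      have t2 : ip w ((TT n pauliY).mulVec ((TT n pauliX).mulVec w)) = ip b a := by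
        rw [ip_mulVec_herm (TT_herm _ pauliY_herm)]
      rw [Matrix.sub_mulVec, ip, dotProduct_sub, ← ip, ← ip,
        ← Matrix.mulVec_mulVec, ← Matrix.mulVec_mulVec, t1, t2, ← ip_conj a b]
    have e2 : ip w (((TT n pauliX * TT n pauliY) - (TT n pauliY * TT n pauliX)).mulVec w)
        = 2 * Complex.I * (m:ℂ) * (N:ℂ) := by
      rw [TT_comm_XY, Matrix.smul_mulVec, hz, ip, dotProduct_smul,
        dotProduct_smul, ← ip, ip_self]
      simp only [smul_eq_mul, ← hNdef]
      ring
    rw [← e1, e2]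
  have him : z.im = m * N := by
    have h3 := h2
    rw [Complex.sub_conj] at h3
    have := congrArg Complex.im h3
    simp at this
    linarith
  have h4 : |m| * N ≤ ‖eucv a‖ * ‖eucv b‖ := by
    have h5 : |z.im| ≤ ‖z‖ := Complex.abs_im_le_norm z
    have h6 : ‖z‖ ≤ ‖eucv a‖ * ‖eucv b‖ := by
      have : z = inner ℂ (eucv a) (eucv b) := ip_eq_inner a b
      rw [this]
      exact norm_inner_le_norm _ _
    rw [him, abs_mul, abs_of_pos hN] at h5
    linarith
  have h7 : 2 * (‖eucv a‖ * ‖eucv b‖) ≤ A + B := by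
    rw [hA, hB]
    nlinarith [sq_nonneg (‖eucv a‖ - ‖eucv b‖)]
  have h8 : 2 * (|m| * N) ≤ A + B := by linarith
  have := h1
  nlinarith

lemma Csq_of_H {r : ℝ} {v : QState n → ℂ}
    (hH : (HQMC n (completeW n)).mulVec v = ((r:ℝ):ℂ) • v) :
    (Csq n).mulVec v = ((((n:ℝ)^2 + 2*n - 4*r : ℝ)):ℂ) • v := by
  rw [Csq_eq', Matrix.sub_mulVec, Matrix.smul_mulVec, Matrix.one_mulVec,
    Matrix.smul_mulVec, hH]
  have : ((((n:ℝ)^2 + 2*n - 4*r : ℝ)):ℂ) = ((n:ℂ)^2 + 2*n) - 4*(r:ℂ) := by push_cast; ring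
  rw [this]
  module

lemma sector_restrict {μ : ℝ} {v : QState n → ℂ} (hv : v ≠ 0)
    (hC : (Csq n).mulVec v = ((μ:ℝ):ℂ) • v) :
    ∃ (w : QState n → ℂ) (k : ℕ), w ≠ 0 ∧ (∀ x, wt x ≠ k → w x = 0) ∧
      (Csq n).mulVec w = ((μ:ℝ):ℂ) • w := by
  obtain ⟨x₀, hx₀⟩ := Function.ne_iff.mp hv
  simp only [Pi.zero_apply] at hx₀
  set k := wt x₀ with hk
  set w : QState n → ℂ := fun x => if wt x = k then v x else 0 with hw
  refine ⟨w, k, ?_, ?_, ?_⟩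
  · intro h
    have := congrFun h x₀
    simp only [hw, if_pos rfl, Pi.zero_apply] at this
    rw [if_pos hk.symm] at this
    exact hx₀ this
  · intro x hx
    simp only [hw, if_neg hx]
  · funext x
    have happly : ∀ (u : QState n → ℂ), (Csq n).mulVec u x = ∑ y, Csq n x y * u y := by
      intro u; rfl
    by_cases hx : wt x = k
    · rw [happly]
      have : ∑ y, Csq n x y * w y = ∑ y, Csq n x y * v y := by
        apply Finset.sum_congr rfl
        intro y _
        by_cases hy : wt y = k
        · simp only [hw, if_pos hy]
        · rw [Csq_offsector (by rw [hx]; exact fun hc => hy hc.symm), zero_mul, zero_mul]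
      rw [this, ← happly, hC]
      simp only [Pi.smul_apply, hw, if_pos hx]
    · rw [happly]
      rw [Finset.sum_eq_zero]
      · simp only [Pi.smul_apply, hw, if_neg hx, smul_zero]
      · intro y _
        by_cases hy : wt y = k
        · rw [Csq_offsector (by rw [hy]; exact hx), zero_mul]
        · simp only [hw, if_neg hy, mul_zero]

lemma wt_le (x : QState n) : wt x ≤ n := by
  rw [wt]
  calc ∑ i, (x i).val ≤ ∑ _i : Fin n, 1 := Finset.sum_le_sum (fun i _ => by omega)
    _ = n := by simp

/-- Maximum eigenvalue of the Quantum MaxCut Hamiltonian on the complete graph `K_n`: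
`(n² + 2n)/4` for even `n`, and `(n² + 2n - 3)/4` for odd `n`. -/
theorem complete_QMC_maxEig (n : ℕ) (hn : 2 ≤ n) :
    maxEigH (HQMC n (completeW n))
      = if Even n then ((n : ℝ) ^ 2 + 2 * (n : ℝ)) / 4
        else ((n : ℝ) ^ 2 + 2 * (n : ℝ) - 3) / 4 := by
  rw [maxEigH]
  rcases Nat.even_or_odd n with he | ho
  · rw [if_pos he]
    have hmod : n % 2 = 0 := Nat.even_iff.mp he
    apply IsGreatest.csSup_eq
    constructor
    · show ((((n:ℝ)^2 + 2*n)/4 : ℝ) : ℂ) ∈ spectrum ℂ (HQMC n (completeW n))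
      exact mem_spectrum_iff_eig.mpr ⟨vS n, vS_ne_zero n, H_mulVec_vS_even hmod⟩
    · rintro r hr
      obtain ⟨v, hv0, hv⟩ := mem_spectrum_iff_eig.mp hr
      have hC := Csq_of_H hv
      have := psd_bound hv0 hC
      linarith
  · rw [if_neg (Nat.not_even_iff_odd.mpr ho)]
    have hmod : n % 2 = 1 := Nat.odd_iff.mp ho
    apply IsGreatest.csSup_eq
    constructor
    · show ((((n:ℝ)^2 + 2*n - 3)/4 : ℝ) : ℂ) ∈ spectrum ℂ (HQMC n (completeW n))
      exact mem_spectrum_iff_eig.mpr ⟨vS n, vS_ne_zero n, H_mulVec_vS_odd hmod⟩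
    · rintro r hr
      obtain ⟨v, hv0, hv⟩ := mem_spectrum_iff_eig.mp hr
      have hC := Csq_of_H hv
      obtain ⟨w, k, hw0, hwk, hwC⟩ := sector_restrict hv0 hC
      set m : ℝ := (n:ℝ) - 2*k with hm
      have hz : (TT n pauliZ).mulVec w = ((m:ℝ):ℂ) • w := TTZ_mulVec_sector hwk
      have hb := comm_bound hw0 hwC hz
      have hk_le : k ≤ n := by
        by_contra hc
        push_neg at hc
        apply hw0
        funext x
        exact hwk x (by have := wt_le x; omega)
      have habs : 1 ≤ |m| := by
        have hne : n ≠ 2*k := by omega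
        have hz' : 1 ≤ |(n:ℤ) - 2*(k:ℤ)| := by
          rcases lt_or_gt_of_ne (show (n:ℤ) ≠ 2*(k:ℤ) from by exact_mod_cast hne) with h | h
          · rw [abs_of_neg (by omega)]; omega
          · rw [abs_of_pos (by omega)]; omega
        calc (1:ℝ) ≤ |((n:ℤ) - 2*(k:ℤ) : ℤ)| := by exact_mod_cast hz'
          _ = |m| := by rw [hm]; push_cast; rfl
      have hm3 : 3 ≤ m^2 + 2*|m| := by nlinarith [sq_abs m]
      linarith
end
end

section
/- The Quantum MaxCut Hamiltonian H^QMC(G) preserves Hamming weight in the computational basis, and restricted to the Hamming-weight-k sector it is represented by the Laplacian matrix L(F_k(G)) of the k-th token graph of G. Consequently, the set of eigenvalues of H^QMC(G) equals the union over 0 ≤ k ≤ n of the eigenvalue sets of L(F_k(G)). -/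
open Matrix Finset

noncomputable section

/-- Hamming weight of a computational basis state. -/
def hammingWt {n : ℕ} (x : QState n) : ℕ := (Finset.univ.filter fun i => x i = 1).card

/-- The computational basis state associated with a subset `A ⊆ [n]`. -/
def chi {n : ℕ} (A : Finset (Fin n)) : QState n := fun i => if i ∈ A then 1 else 0
section Helpers
variable {n : ℕ}

lemma fin2_cases (a : Fin 2) : a = 0 ∨ a = 1 := by omega

lemma prod_delta (x y : QState n) (i j : Fin n) :
    (∏ l ∈ Finset.univ \ {i, j}, (if x l = y l then (1 : ℂ) else 0)) =
      if ∀ l, l ≠ i → l ≠ j → x l = y l then 1 else 0 := by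
  split_ifs with h
  · exact Finset.prod_eq_one fun l hl => by
      simp only [Finset.mem_sdiff, Finset.mem_insert, Finset.mem_singleton] at hl
      exact if_pos (h l (fun e => hl.2 (Or.inl e)) (fun e => hl.2 (Or.inr e)))
  · push_neg at h
    obtain ⟨l, hli, hlj, hne⟩ := h
    refine Finset.prod_eq_zero (i := l) ?_ (if_neg hne)
    simp [hli, hlj]

/-- The universal two-qubit value of the QMC term. -/
def Fq (a b c d : Fin 2) : ℂ :=
  if c = a ∧ d = b then (if a = b then 0 else 1)
  else if c = b ∧ d = a ∧ a ≠ b then -1 else 0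

lemma hQMC_apply {i j : Fin n} (hij : i ≠ j) (x y : QState n) :
    hQMC n i j x y =
      (if ∀ l, l ≠ i → l ≠ j → x l = y l then 1 else 0) *
        Fq (x i) (x j) (y i) (y j) := by
  simp only [hQMC, Matrix.smul_apply, Matrix.sub_apply, Matrix.one_apply, twoSite,
    Matrix.of_apply, prod_delta, smul_eq_mul]
  by_cases hP : ∀ l, l ≠ i → l ≠ j → x l = y l
  · have hxy : (x = y) ↔ (x i = y i ∧ x j = y j) := by
      constructor
      · intro h; exact ⟨congrFun h i, congrFun h j⟩
      · rintro ⟨h1, h2⟩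
        funext l
        by_cases hli : l = i
        · subst hli; exact h1
        · by_cases hlj : l = j
          · subst hlj; exact h2
          · exact hP l hli hlj
    rw [if_congr hxy rfl rfl, if_pos hP]
    rcases fin2_cases (x i) with h1 | h1 <;> rcases fin2_cases (x j) with h2 | h2 <;>
      rcases fin2_cases (y i) with h3 | h3 <;> rcases fin2_cases (y j) with h4 | h4 <;>
      rw [h1, h2, h3, h4] <;>
      norm_num [Fq, pauliX, pauliY, pauliZ, Complex.I_mul_I]
  · have hxy : x ≠ y := fun h => hP (fun l _ _ => congrFun h l)
    rw [if_neg hP, if_neg hxy]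
    ring
end Helpers
section Helpers2
variable {n : ℕ}

lemma hammingWt_comp_equiv (x : QState n) (e : Equiv.Perm (Fin n)) :
    hammingWt (x ∘ e) = hammingWt x := by
  unfold hammingWt
  apply Finset.card_bij (fun a _ => e a)
  · intro a ha
    simp only [Finset.mem_filter, Finset.mem_univ, true_and, Function.comp_apply] at ha ⊢
    exact ha
  · intro a _ b _ hab
    exact e.injective hab
  · intro b hb
    refine ⟨e.symm b, ?_, by simp⟩
    simp only [Finset.mem_filter, Finset.mem_univ, true_and, Function.comp_apply,
      Equiv.apply_symm_apply] at hb ⊢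
    exact hb

lemma hQMC_apply_eq_zero_of_wt {i j : Fin n} (hij : i ≠ j) {x y : QState n}
    (hw : hammingWt x ≠ hammingWt y) : hQMC n i j x y = 0 := by
  rw [hQMC_apply hij]
  by_cases hP : ∀ l, l ≠ i → l ≠ j → x l = y l
  · rw [if_pos hP, one_mul, Fq]
    split_ifs with h1 heq h2
    · rfl
    · exfalso; apply hw
      have : x = y := by
        funext l
        by_cases hli : l = i
        · subst hli; exact h1.1.symm
        · by_cases hlj : l = j
          · subst hlj; exact h1.2.symm
          · exact hP l hli hlj
      rw [this]
    · exfalso; apply hw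
      have hyx : y = x ∘ (Equiv.swap i j) := by
        funext l
        by_cases hli : l = i
        · subst hli; simp [Equiv.swap_apply_left, h2.1]
        · by_cases hlj : l = j
          · subst hlj; simp [Equiv.swap_apply_right, h2.2.1]
          · simp [Equiv.swap_apply_of_ne_of_ne hli hlj, (hP l hli hlj).symm]
      rw [hyx, hammingWt_comp_equiv]
    · rfl
  · rw [if_neg hP, zero_mul]
end Helpers2
section Helpers3
variable {n : ℕ}

lemma HQMC_apply (w : Fin n → Fin n → ℝ) (x y : QState n) :
    HQMC n w x y = (1 / 2 : ℂ) * ∑ i, ∑ j, (w i j : ℂ) * hQMC n i j x y := by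
  simp [HQMC, Matrix.smul_apply, Matrix.sum_apply, smul_eq_mul]

lemma tokenW_self (w : Fin n → Fin n → ℝ) (A : Finset (Fin n)) : tokenW w A A = 0 := by
  simp [tokenW]

lemma tokenW_symm (w : Fin n → Fin n → ℝ) (hsymm : ∀ i j, w i j = w j i)
    (A B : Finset (Fin n)) : tokenW w A B = tokenW w B A := by
  rw [tokenW, tokenW, Finset.sum_comm]
  refine Finset.sum_congr rfl fun b hb => Finset.sum_congr rfl fun a ha => ?_
  rw [hsymm a b]; exact if_congr eq_comm rfl rfl

lemma tokenW_eq (w : Fin n → Fin n → ℝ) (A B : Finset (Fin n)) :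
    tokenW w A B =
      ∑ a ∈ A, ∑ b ∈ Aᶜ, (if B = insert b (A.erase a) then w a b else 0) := by
  rw [tokenW]
  rw [← Finset.sum_subset (Finset.sdiff_subset : A \ B ⊆ A) ?_]
  · refine Finset.sum_congr rfl fun a ha => ?_
    rw [Finset.mem_sdiff] at ha
    rw [← Finset.sum_subset (show B \ A ⊆ Aᶜ from fun b hb => by
        simp only [Finset.mem_compl]; exact (Finset.mem_sdiff.1 hb).2) ?_]
    · refine Finset.sum_congr rfl fun b hb => ?_
      rw [Finset.mem_sdiff] at hb
      congr 1
      simp only [eq_iff_iff]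
      constructor
      · intro h
        have h' : A.erase a = B.erase b := by
          simpa [Finset.sdiff_singleton_eq_erase] using h
        rw [h', Finset.insert_erase hb.1]
      · intro h
        have hb' : b ∉ A.erase a := fun hc => hb.2 (Finset.mem_of_mem_erase hc)
        rw [Finset.sdiff_singleton_eq_erase, Finset.sdiff_singleton_eq_erase, h,
          Finset.erase_insert hb']
    · intro b hb hbn
      rw [Finset.mem_compl] at hb
      have hbB : b ∉ B := fun hbB => hbn (Finset.mem_sdiff.2 ⟨hbB, hb⟩)
      rw [if_neg]
      intro h
      exact hbB (h ▸ Finset.mem_insert_self b _)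
  · intro a ha han
    have haB : a ∈ B := by
      by_contra h
      exact han (Finset.mem_sdiff.2 ⟨ha, h⟩)
    refine Finset.sum_eq_zero fun b hb => ?_
    rw [Finset.mem_compl] at hb
    rw [if_neg]
    intro h
    rw [h] at haB
    rcases Finset.mem_insert.1 haB with h1 | h1
    · exact hb (h1 ▸ ha)
    · exact Finset.notMem_erase a A h1

lemma sum_tokenW (w : Fin n → Fin n → ℝ) {k : ℕ} {A : Finset (Fin n)} (hA : A.card = k) :
    ∑ B : TokenVert n k, tokenW w A B.1 = ∑ a ∈ A, ∑ b ∈ Aᶜ, w a b := by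
  simp_rw [tokenW_eq]
  rw [Finset.sum_comm]
  refine Finset.sum_congr rfl fun a ha => ?_
  rw [Finset.sum_comm]
  refine Finset.sum_congr rfl fun b hb => ?_
  rw [Finset.mem_compl] at hb
  have hb' : b ∉ A.erase a := fun hc => hb (Finset.mem_of_mem_erase hc)
  have hC : (insert b (A.erase a)).card = k := by
    rw [Finset.card_insert_of_notMem hb', Finset.card_erase_of_mem ha, hA]
    have : 0 < k := hA ▸ Finset.card_pos.2 ⟨a, ha⟩
    omega
  have : ∀ B : TokenVert n k, (B.1 = insert b (A.erase a)) ↔ B = ⟨_, hC⟩ := by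
    intro B; rw [Subtype.ext_iff]
  simp_rw [this]
  rw [Finset.sum_ite_eq' Finset.univ (⟨_, hC⟩ : TokenVert n k) (fun _ => w a b)]
  simp
end Helpers3
section Helpers4
variable {n : ℕ}

lemma chi_eq_chi_iff (A B : Finset (Fin n)) (l : Fin n) :
    chi A l = chi B l ↔ (l ∈ A ↔ l ∈ B) := by
  by_cases hA : l ∈ A <;> by_cases hB : l ∈ B <;> simp [chi, hA, hB]

lemma chi_one_iff (A : Finset (Fin n)) (l : Fin n) : chi A l = 1 ↔ l ∈ A := by
  by_cases hA : l ∈ A <;> simp [chi, hA]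

lemma chi_zero_iff (A : Finset (Fin n)) (l : Fin n) : chi A l = 0 ↔ l ∉ A := by
  by_cases hA : l ∈ A <;> simp [chi, hA]

lemma eq_of_agree {A B : Finset (Fin n)} {i j : Fin n}
    (hP : ∀ l, l ≠ i → l ≠ j → chi A l = chi B l)
    (hi : i ∈ A ↔ i ∈ B) (hj : j ∈ A ↔ j ∈ B) : A = B := by
  ext l
  by_cases hli : l = i
  · subst hli; exact hi
  by_cases hlj : l = j
  · subst hlj; exact hj
  exact (chi_eq_chi_iff A B l).1 (hP l hli hlj)

/-- Per-term diagonal computation. -/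
lemma hQMC_chi_self_term (A : Finset (Fin n)) (w : Fin n → Fin n → ℝ)
    (hdiag : ∀ i, w i i = 0) (i j : Fin n) :
    (w i j : ℂ) * hQMC n i j (chi A) (chi A) =
      (if i ∈ A ∧ j ∉ A then (w i j : ℂ) else 0)
        + (if i ∉ A ∧ j ∈ A then (w i j : ℂ) else 0) := by
  by_cases hij : i = j
  · subst hij
    simp [hdiag i]
  · rw [hQMC_apply hij]
    rw [if_pos (fun l _ _ => rfl), one_mul, Fq]
    by_cases hiA : i ∈ A <;> by_cases hjA : j ∈ A <;>
      simp [chi, hiA, hjA]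

/-- Per-term off-diagonal computation. -/
lemma hQMC_chi_term {A B : Finset (Fin n)} (hAB : A ≠ B) {i j : Fin n} (hij : i ≠ j) :
    hQMC n i j (chi A) (chi B) =
      -((if i ∈ A ∧ j ∉ A ∧ B = insert j (A.erase i) then (1 : ℂ) else 0)
        + (if j ∈ A ∧ i ∉ A ∧ B = insert i (A.erase j) then (1 : ℂ) else 0)) := by
  rw [hQMC_apply hij]
  by_cases hQ1 : i ∈ A ∧ j ∉ A ∧ B = insert j (A.erase i)
  · obtain ⟨hiA, hjA, hB⟩ := hQ1
    have hiB : i ∉ B := by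
      rw [hB, Finset.mem_insert]
      push_neg
      exact ⟨hij, Finset.notMem_erase i A⟩
    have hjB : j ∈ B := hB ▸ Finset.mem_insert_self j _
    have hP : ∀ l, l ≠ i → l ≠ j → chi A l = chi B l := by
      intro l hli hlj
      rw [chi_eq_chi_iff, hB, Finset.mem_insert, Finset.mem_erase]
      constructor
      · intro h; exact Or.inr ⟨hli, h⟩
      · rintro (h | h); exact absurd h hlj; exact h.2
    have e1 : chi A i = 1 := (chi_one_iff A i).2 hiA
    have e2 : chi A j = 0 := (chi_zero_iff A j).2 hjA
    have e3 : chi B i = 0 := (chi_zero_iff B i).2 hiB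
    have e4 : chi B j = 1 := (chi_one_iff B j).2 hjB
    rw [if_pos hP, one_mul, e1, e2, e3, e4]
    have hFq : Fq 1 0 0 1 = -1 := by norm_num [Fq]
    rw [hFq, if_pos ⟨hiA, hjA, hB⟩, if_neg (fun h => hjA h.1)]
    norm_num
  · by_cases hQ2 : j ∈ A ∧ i ∉ A ∧ B = insert i (A.erase j)
    · obtain ⟨hjA, hiA, hB⟩ := hQ2
      have hjB : j ∉ B := by
        rw [hB, Finset.mem_insert]
        push_neg
        exact ⟨hij.symm, Finset.notMem_erase j A⟩
      have hiB : i ∈ B := hB ▸ Finset.mem_insert_self i _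
      have hP : ∀ l, l ≠ i → l ≠ j → chi A l = chi B l := by
        intro l hli hlj
        rw [chi_eq_chi_iff, hB, Finset.mem_insert, Finset.mem_erase]
        constructor
        · intro h; exact Or.inr ⟨hlj, h⟩
        · rintro (h | h); exact absurd h hli; exact h.2
      have e1 : chi A i = 0 := (chi_zero_iff A i).2 hiA
      have e2 : chi A j = 1 := (chi_one_iff A j).2 hjA
      have e3 : chi B i = 1 := (chi_one_iff B i).2 hiB
      have e4 : chi B j = 0 := (chi_zero_iff B j).2 hjB
      rw [if_pos hP, one_mul, e1, e2, e3, e4]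
      have hFq : Fq 0 1 1 0 = -1 := by norm_num [Fq]
      rw [hFq, if_neg hQ1, if_pos ⟨hjA, hiA, hB⟩]
      norm_num
    · rw [if_neg hQ1, if_neg hQ2]
      by_cases hP : ∀ l, l ≠ i → l ≠ j → chi A l = chi B l
      · rw [if_pos hP, one_mul]
        rw [Fq, if_neg, if_neg]
        · norm_num
        · rintro ⟨h1, h2, h3⟩
          -- chi B i = chi A j, chi B j = chi A i, chi A i ≠ chi A j
          rcases fin2_cases (chi A i) with hai | hai
          · -- chi A i = 0 : i ∉ A, so chi A j = 1 : j ∈ A (since ≠)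
            have hiA : i ∉ A := (chi_zero_iff A i).1 hai
            have haj : chi A j = 1 := by
              rcases fin2_cases (chi A j) with h | h
              · exact absurd (hai.trans h.symm) h3
              · exact h
            have hjA : j ∈ A := (chi_one_iff A j).1 haj
            have hiB : i ∈ B := (chi_one_iff B i).1 (h1.trans haj)
            have hjB : j ∉ B := (chi_zero_iff B j).1 (h2.trans hai)
            apply hQ2
            refine ⟨hjA, hiA, ?_⟩
            ext l
            by_cases hli : l = i
            · subst hli; simp [hiB]
            by_cases hlj : l = j
            · subst hlj
              simp [hjB, hli, Finset.notMem_erase]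
            · rw [Finset.mem_insert, Finset.mem_erase]
              have := (chi_eq_chi_iff A B l).1 (hP l hli hlj)
              constructor
              · intro h; exact Or.inr ⟨hlj, this.2 h⟩
              · rintro (h | h); exact absurd h hli; exact this.1 h.2
          · have hiA : i ∈ A := (chi_one_iff A i).1 hai
            have haj : chi A j = 0 := by
              rcases fin2_cases (chi A j) with h | h
              · exact h
              · exact absurd (hai.trans h.symm) h3
            have hjA : j ∉ A := (chi_zero_iff A j).1 haj
            have hiB : i ∉ B := (chi_zero_iff B i).1 (h1.trans haj)
            have hjB : j ∈ B := (chi_one_iff B j).1 (h2.trans hai)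
            apply hQ1
            refine ⟨hiA, hjA, ?_⟩
            ext l
            by_cases hlj : l = j
            · subst hlj; simp [hjB]
            by_cases hli : l = i
            · subst hli
              simp [hiB, hlj, Finset.notMem_erase]
            · rw [Finset.mem_insert, Finset.mem_erase]
              have := (chi_eq_chi_iff A B l).1 (hP l hli hlj)
              constructor
              · intro h; exact Or.inr ⟨hli, this.2 h⟩
              · rintro (h | h); exact absurd h hlj; exact this.1 h.2
        · rintro ⟨h1, h2⟩
          exact hAB (eq_of_agree hP ((chi_eq_chi_iff A B i).1 h1.symm)
            ((chi_eq_chi_iff A B j).1 h2.symm))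
      · rw [if_neg hP, zero_mul]
        norm_num
end Helpers4
section Helpers5
variable {n : ℕ}

lemma key_sum (A : Finset (Fin n)) (c : Fin n → Fin n → ℂ) :
    (∑ i, ∑ j, if i ∈ A ∧ j ∉ A then c i j else 0) = ∑ a ∈ A, ∑ b ∈ Aᶜ, c a b := by
  have h1 : ∀ i : Fin n,
      (∑ j, if i ∈ A ∧ j ∉ A then c i j else 0)
        = if i ∈ A then ∑ b ∈ Aᶜ, c i b else 0 := by
    intro i
    by_cases hi : i ∈ A
    · rw [if_pos hi]
      have : ∀ j : Fin n, (if i ∈ A ∧ j ∉ A then c i j else 0)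
          = if j ∈ Aᶜ then c i j else 0 := fun j => by
        simp [hi, Finset.mem_compl]
      simp_rw [this]
      rw [Finset.sum_ite_mem, Finset.univ_inter]
    · rw [if_neg hi]
      exact Finset.sum_eq_zero fun j _ => by simp [hi]
  simp_rw [h1]
  rw [Finset.sum_ite_mem, Finset.univ_inter]

lemma HQMC_chi_self (w : Fin n → Fin n → ℝ) (hsymm : ∀ i j, w i j = w j i)
    (hdiag : ∀ i, w i i = 0) (A : Finset (Fin n)) :
    HQMC n w (chi A) (chi A) = ((∑ a ∈ A, ∑ b ∈ Aᶜ, w a b : ℝ) : ℂ) := by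
  rw [HQMC_apply]
  simp_rw [hQMC_chi_self_term A w hdiag, Finset.sum_add_distrib]
  rw [key_sum A (fun i j => (w i j : ℂ))]
  have h2 : (∑ i, ∑ j, if i ∉ A ∧ j ∈ A then (w i j : ℂ) else 0)
      = ∑ a ∈ A, ∑ b ∈ Aᶜ, (w a b : ℂ) := by
    rw [Finset.sum_comm]
    have : ∀ j i : Fin n, (if i ∉ A ∧ j ∈ A then (w i j : ℂ) else 0)
        = if j ∈ A ∧ i ∉ A then (w i j : ℂ) else 0 := fun j i => by
      rw [if_congr and_comm rfl rfl]
    simp_rw [this]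
    rw [key_sum A (fun j i => (w i j : ℂ))]
    exact Finset.sum_congr rfl fun a _ => Finset.sum_congr rfl fun b _ => by
      rw [hsymm b a]
  rw [h2]
  push_cast
  ring

lemma HQMC_chi_ne (w : Fin n → Fin n → ℝ) (hsymm : ∀ i j, w i j = w j i)
    (hdiag : ∀ i, w i i = 0) {A B : Finset (Fin n)} (hAB : A ≠ B) :
    HQMC n w (chi A) (chi B) = -((tokenW w A B : ℝ) : ℂ) := by
  rw [HQMC_apply]
  have term : ∀ i j : Fin n, (w i j : ℂ) * hQMC n i j (chi A) (chi B) =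
      -((if i ∈ A ∧ j ∉ A ∧ B = insert j (A.erase i) then (w i j : ℂ) else 0)
        + (if j ∈ A ∧ i ∉ A ∧ B = insert i (A.erase j) then (w i j : ℂ) else 0)) := by
    intro i j
    by_cases hij : i = j
    · subst hij
      have c1 : ¬(i ∈ A ∧ i ∉ A ∧ B = insert i (A.erase i)) := fun h => h.2.1 h.1
      simp [hdiag i, c1]
    · rw [hQMC_chi_term hAB hij, mul_neg, mul_add, mul_ite, mul_ite, mul_one, mul_zero]
  simp_rw [term, Finset.sum_neg_distrib, Finset.sum_add_distrib]
  have e1 : (∑ i, ∑ j, if i ∈ A ∧ j ∉ A ∧ B = insert j (A.erase i)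
        then (w i j : ℂ) else 0) = ((tokenW w A B : ℝ) : ℂ) := by
    have : ∀ i j : Fin n, (if i ∈ A ∧ j ∉ A ∧ B = insert j (A.erase i)
        then (w i j : ℂ) else 0)
        = if i ∈ A ∧ j ∉ A then (if B = insert j (A.erase i) then (w i j : ℂ) else 0)
          else 0 := fun i j => by
      simp only [ite_and]
    simp_rw [this]
    rw [key_sum A _, tokenW_eq]
    push_cast
    exact Finset.sum_congr rfl fun a _ => Finset.sum_congr rfl fun b _ => by
      split_ifs <;> simp
  have e2 : (∑ i, ∑ j, if j ∈ A ∧ i ∉ A ∧ B = insert i (A.erase j)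
        then (w i j : ℂ) else 0) = ((tokenW w A B : ℝ) : ℂ) := by
    rw [Finset.sum_comm]
    have : ∀ j i : Fin n, (if j ∈ A ∧ i ∉ A ∧ B = insert i (A.erase j)
        then (w i j : ℂ) else 0)
        = if j ∈ A ∧ i ∉ A then (if B = insert i (A.erase j) then (w i j : ℂ) else 0)
          else 0 := fun j i => by
      simp only [ite_and]
    simp_rw [this]
    rw [key_sum A _, tokenW_eq]
    push_cast
    exact Finset.sum_congr rfl fun a _ => Finset.sum_congr rfl fun b _ => by
      rw [hsymm b a]
      split_ifs <;> simp
  rw [e1, e2]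
  push_cast
  ring
end Helpers5
section Helpers6
variable {n : ℕ}

lemma part1 (w : Fin n → Fin n → ℝ) (hdiag : ∀ i, w i i = 0)
    (x y : QState n) (hw : hammingWt x ≠ hammingWt y) : HQMC n w x y = 0 := by
  rw [HQMC_apply]
  have : ∀ i j : Fin n, (w i j : ℂ) * hQMC n i j x y = 0 := by
    intro i j
    by_cases hij : i = j
    · subst hij; simp [hdiag i]
    · rw [hQMC_apply_eq_zero_of_wt hij hw, mul_zero]
  simp [this]

lemma part2 (w : Fin n → Fin n → ℝ) (hsymm : ∀ i j, w i j = w j i)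
    (hdiag : ∀ i, w i i = 0) (k : ℕ) (A B : Finset (Fin n))
    (hA : A.card = k) (hB : B.card = k) :
    HQMC n w (chi A) (chi B) = ((tokenL w k ⟨A, hA⟩ ⟨B, hB⟩ : ℝ) : ℂ) := by
  by_cases hAB : A = B
  · subst hAB
    rw [HQMC_chi_self w hsymm hdiag A]
    have : tokenL w k ⟨A, hA⟩ ⟨A, hB⟩ = ∑ a ∈ A, ∑ b ∈ Aᶜ, w a b := by
      rw [tokenL, Matrix.sub_apply, tokenD, tokenA, Matrix.diagonal_apply_eq,
        Matrix.of_apply, tokenW_self, sub_zero, sum_tokenW w hA]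
    rw [this]
  · rw [HQMC_chi_ne w hsymm hdiag hAB]
    have hne : (⟨A, hA⟩ : TokenVert n k) ≠ ⟨B, hB⟩ := fun h => hAB (congrArg Subtype.val h)
    have : tokenL w k ⟨A, hA⟩ ⟨B, hB⟩ = -(tokenW w A B) := by
      rw [tokenL, Matrix.sub_apply, tokenD, Matrix.diagonal_apply_ne _ hne, tokenA,
        Matrix.of_apply, zero_sub]
    rw [this]
    push_cast
    ring

lemma chi_filter (x : QState n) : chi (Finset.univ.filter fun i => x i = 1) = x := by
  funext l
  rcases fin2_cases (x l) with h | h <;> simp [chi, h]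

lemma hammingWt_chi {k : ℕ} (A : Finset (Fin n)) (hA : A.card = k) :
    hammingWt (chi A) = k := by
  rw [hammingWt, ← hA]
  congr 1
  ext l
  simp [chi_one_iff]

/-- The sector equivalence. -/
def sectorEquiv (n : ℕ) : QState n ≃ (Σ k : Fin (n + 1), TokenVert n k.1) where
  toFun x := ⟨⟨hammingWt x, Nat.lt_succ_of_le (by
      simpa [hammingWt] using (Finset.card_filter_le Finset.univ fun i => x i = 1).trans
        (by simp))⟩, ⟨Finset.univ.filter fun i => x i = 1, rfl⟩⟩
  invFun p := chi p.2.1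
  left_inv x := chi_filter x
  right_inv p := by
    obtain ⟨⟨k, hk⟩, ⟨A, hA⟩⟩ := p
    have h1 : hammingWt (chi A) = k := hammingWt_chi A hA
    subst h1
    have h2 : (Finset.univ.filter fun i => chi A i = 1) = A := by
      ext l; simp [chi_one_iff]
    exact Sigma.ext rfl (heq_of_eq (Subtype.ext h2))
end Helpers6
section Helpers7

lemma isUnit_blockDiagonal' {o : Type*} [Fintype o] [DecidableEq o]
    {m' : o → Type*} [∀ i, Fintype (m' i)] [∀ i, DecidableEq (m' i)]
    (M : ∀ i, Matrix (m' i) (m' i) ℂ) :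
    IsUnit (Matrix.blockDiagonal' M) ↔ ∀ k, IsUnit (M k) := by
  constructor
  · intro h k
    set N := (↑h.unit⁻¹ : Matrix (Σ i, m' i) (Σ i, m' i) ℂ) with hN
    have h1 : Matrix.blockDiagonal' M * N = 1 := by
      have t := h.unit.mul_inv; rwa [h.unit_spec] at t
    suffices hmul : M k * (Matrix.of fun i j => N ⟨k, i⟩ ⟨k, j⟩) = 1 by
      have := invertibleOfRightInverse _ _ hmul
      exact isUnit_of_invertible (M k)
    ext i j
    have h2 : (Matrix.blockDiagonal' M * N) ⟨k, i⟩ ⟨k, j⟩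
        = (1 : Matrix (Σ i, m' i) (Σ i, m' i) ℂ) ⟨k, i⟩ ⟨k, j⟩ := by rw [h1]
    rw [Matrix.mul_apply] at h2
    rw [← Finset.univ_sigma_univ, Finset.sum_sigma] at h2
    rw [Finset.sum_eq_single k ?_ ?_] at h2
    · rw [Matrix.mul_apply, Matrix.one_apply]
      rw [Matrix.one_apply] at h2
      have hone : ((⟨k, i⟩ : Σ i, m' i) = ⟨k, j⟩) ↔ i = j := by
        constructor
        · intro hh
          have := (Sigma.mk.inj_iff.1 hh).2
          exact eq_of_heq this
        · rintro rfl; rfl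
      rw [if_congr hone rfl rfl] at h2
      rw [← h2]
      refine Finset.sum_congr rfl fun m _ => ?_
      rw [Matrix.blockDiagonal'_apply_eq, Matrix.of_apply]
    · intro l _ hl
      refine Finset.sum_eq_zero fun m _ => ?_
      rw [Matrix.blockDiagonal'_apply_ne M i m (Ne.symm hl), zero_mul]
    · intro hk
      exact absurd (Finset.mem_univ k) hk
  · intro h
    suffices hmul : Matrix.blockDiagonal' M *
        (Matrix.blockDiagonal' fun k => (↑(h k).unit⁻¹ : Matrix (m' k) (m' k) ℂ)) = 1 by
      have := invertibleOfRightInverse _ _ hmul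
      exact isUnit_of_invertible _
    rw [← Matrix.blockDiagonal'_mul]
    rw [show (fun k => M k * (↑(h k).unit⁻¹ : Matrix (m' k) (m' k) ℂ)) = fun _ => 1 from
      funext fun k => by have t := (h k).unit.mul_inv; rwa [(h k).unit_spec] at t]
    exact Matrix.blockDiagonal'_one

lemma spectrum_blockDiagonal' {o : Type*} [Fintype o] [DecidableEq o]
    {m' : o → Type*} [∀ i, Fintype (m' i)] [∀ i, DecidableEq (m' i)]
    (M : ∀ i, Matrix (m' i) (m' i) ℂ) :
    spectrum ℂ (Matrix.blockDiagonal' M) = ⋃ k, spectrum ℂ (M k) := by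
  ext μ
  simp only [Set.mem_iUnion, spectrum.mem_iff]
  have key : algebraMap ℂ (Matrix (Σ i, m' i) (Σ i, m' i) ℂ) μ - Matrix.blockDiagonal' M
      = Matrix.blockDiagonal' (fun k => algebraMap ℂ (Matrix (m' k) (m' k) ℂ) μ - M k) := by
    simp only [Algebra.algebraMap_eq_smul_one]
    rw [← Matrix.blockDiagonal'_one, ← Matrix.blockDiagonal'_smul,
      ← Matrix.blockDiagonal'_sub]
    rfl
  rw [key, isUnit_blockDiagonal', not_forall]
end Helpers7
section Helpers8

lemma spectrum_map_ofReal {m : Type*} [Fintype m] [DecidableEq m]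
    (M : Matrix m m ℝ) (hM : M.IsSymm) :
    spectrum ℂ (M.map (fun r : ℝ => (r : ℂ)))
      = (fun r : ℝ => (r : ℂ)) '' spectrum ℝ M := by
  set B := M.map (fun r : ℝ => (r : ℂ)) with hBdef
  have hB : B.IsHermitian := by
    rw [Matrix.IsHermitian]
    ext i j
    rw [Matrix.conjTranspose_apply, hBdef, Matrix.map_apply, Matrix.map_apply,
      Complex.star_def, Complex.conj_ofReal]
    exact_mod_cast congrArg (fun r : ℝ => (r : ℂ)) (congrFun (congrFun hM i) j)
  have key : ∀ r : ℝ, r ∈ spectrum ℝ M ↔ (r : ℂ) ∈ spectrum ℂ B := by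
    intro r
    rw [spectrum.mem_iff, spectrum.mem_iff, not_iff_not,
      Matrix.isUnit_iff_isUnit_det, Matrix.isUnit_iff_isUnit_det]
    have hmap : algebraMap ℂ (Matrix m m ℂ) (r : ℂ) - B
        = (algebraMap ℝ (Matrix m m ℝ) r - M).map Complex.ofRealHom := by
      ext i j
      rw [Matrix.sub_apply, Matrix.map_apply, Matrix.sub_apply]
      rw [Matrix.algebraMap_matrix_apply, Matrix.algebraMap_matrix_apply]
      by_cases hij : i = j <;> simp [hij, hBdef]
    rw [hmap, show (((algebraMap ℝ (Matrix m m ℝ)) r - M).map ⇑Complex.ofRealHom)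
        = Complex.ofRealHom.mapMatrix ((algebraMap ℝ (Matrix m m ℝ)) r - M) from rfl,
      ← RingHom.map_det]
    simp only [isUnit_iff_ne_zero, ne_eq, map_eq_zero]
  have hspec : spectrum ℂ B = Set.range (fun i => (hB.eigenvalues i : ℂ)) := by
    conv_lhs => rw [hB.spectral_theorem, AlgEquiv.spectrum_eq]
    rw [spectrum_diagonal]
    ext z
    simp [Function.comp]
  ext z
  rw [hspec]
  constructor
  · rintro ⟨i, rfl⟩
    exact ⟨hB.eigenvalues i, (key _).2 (hspec ▸ ⟨i, rfl⟩), rfl⟩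
  · rintro ⟨r, hr, rfl⟩
    exact hspec ▸ (key r).1 hr
end Helpers8
section Helpers9
variable {n : ℕ}

lemma tokenL_isSymm (w : Fin n → Fin n → ℝ) (hsymm : ∀ i j, w i j = w j i) (k : ℕ) :
    (tokenL w k).IsSymm := by
  rw [Matrix.IsSymm]
  ext P Q
  rw [Matrix.transpose_apply]
  simp only [tokenL, Matrix.sub_apply]
  congr 1
  · by_cases h : P = Q
    · subst h; rfl
    · simp only [tokenD]
      rw [Matrix.diagonal_apply_ne _ (Ne.symm h), Matrix.diagonal_apply_ne _ h]
  · simp only [tokenA, Matrix.of_apply]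
    exact tokenW_symm w hsymm Q.1 P.1

lemma HQMC_blocks (w : Fin n → Fin n → ℝ) (hsymm : ∀ i j, w i j = w j i)
    (hdiag : ∀ i, w i i = 0)
    (p q : Σ k : Fin (n + 1), TokenVert n k.1) :
    HQMC n w (chi p.2.1) (chi q.2.1) =
      Matrix.blockDiagonal' (fun k : Fin (n + 1) =>
        (tokenL w k.1).map (fun r : ℝ => (r : ℂ))) p q := by
  obtain ⟨k, A, hA⟩ := p
  obtain ⟨l, B, hB⟩ := q
  by_cases hkl : k = l
  · subst hkl
    rw [Matrix.blockDiagonal'_apply_eq, Matrix.map_apply]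
    exact part2 w hsymm hdiag k.1 A B hA hB
  · rw [Matrix.blockDiagonal'_apply_ne _ _ _ hkl]
    refine part1 w hdiag _ _ ?_
    rw [hammingWt_chi A hA, hammingWt_chi B hB]
    exact fun h => hkl (Fin.ext h)

lemma HQMC_eq_submatrix (w : Fin n → Fin n → ℝ) (hsymm : ∀ i j, w i j = w j i)
    (hdiag : ∀ i, w i i = 0) :
    HQMC n w = (Matrix.blockDiagonal' (fun k : Fin (n + 1) =>
        (tokenL w k.1).map (fun r : ℝ => (r : ℂ)))).submatrix
      (sectorEquiv n) (sectorEquiv n) := by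
  ext x y
  rw [Matrix.submatrix_apply]
  have hx : chi ((sectorEquiv n x).2.1) = x := chi_filter x
  have hy : chi ((sectorEquiv n y).2.1) = y := chi_filter y
  rw [← HQMC_blocks w hsymm hdiag (sectorEquiv n x) (sectorEquiv n y), hx, hy]
end Helpers9

/-- The Quantum MaxCut Hamiltonian preserves Hamming weight in the computational basis;
its restriction to the Hamming-weight-`k` sector is the Laplacian `L(F_k(G))` of the
`k`-th token graph; and consequently its eigenvalue set is the union over `0 ≤ k ≤ n` of
the eigenvalue sets of the `L(F_k(G))`. -/
theorem HQMC_eq_directSum_tokenL (n : ℕ) (w : Fin n → Fin n → ℝ)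
    (hsymm : ∀ i j, w i j = w j i) (hnonneg : ∀ i j, 0 ≤ w i j)
    (hdiag : ∀ i, w i i = 0) :
    (∀ x y : QState n, hammingWt x ≠ hammingWt y → HQMC n w x y = 0) ∧
    (∀ (k : ℕ) (A B : Finset (Fin n)) (hA : A.card = k) (hB : B.card = k),
      HQMC n w (chi A) (chi B) = ((tokenL w k ⟨A, hA⟩ ⟨B, hB⟩ : ℝ) : ℂ)) ∧
    spectrum ℂ (HQMC n w)
      = ⋃ k : Fin (n + 1), (fun r : ℝ => (r : ℂ)) '' spectrum ℝ (tokenL w k.1) := by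
  refine ⟨fun x y h => part1 w hdiag x y h,
    fun k A B hA hB => part2 w hsymm hdiag k A B hA hB, ?_⟩
  rw [HQMC_eq_submatrix w hsymm hdiag]
  have hre : (Matrix.blockDiagonal' (fun k : Fin (n + 1) =>
        (tokenL w k.1).map (fun r : ℝ => (r : ℂ)))).submatrix
          (sectorEquiv n) (sectorEquiv n)
      = Matrix.reindexAlgEquiv ℂ ℂ (sectorEquiv n).symm
          (Matrix.blockDiagonal' (fun k : Fin (n + 1) =>
            (tokenL w k.1).map (fun r : ℝ => (r : ℂ)))) := by
    rw [Matrix.reindexAlgEquiv_apply, Matrix.reindex_apply, Equiv.symm_symm]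
  rw [hre, AlgEquiv.spectrum_eq, spectrum_blockDiagonal']
  exact Set.iUnion_congr fun k => spectrum_map_ofReal _ (tokenL_isSymm w hsymm k.1)
end
end

section
/- The EPR Hamiltonian H^EPR(G) is unitarily equivalent (via the local unitary ⊗_j √X_j) to a Hamming-weight-preserving operator whose restriction to the Hamming-weight-k sector is the signless Laplacian Q(F_k(G)) of the k-th token graph. Consequently, the eigenvalue set of H^EPR(G) equals the union over 0 ≤ k ≤ n of the eigenvalue sets of Q(F_k(G)). -/
open Matrix Finset

noncomputable section

/-- The single-qubit unitary `√X`. -/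
def sqrtX : Matrix (Fin 2) (Fin 2) ℂ :=
  (1 / 2 : ℂ) • !![1 + Complex.I, 1 - Complex.I; 1 - Complex.I, 1 + Complex.I]

/-- The `n`-fold tensor power `U = ⊗ⱼ √Xⱼ`. -/
def Umat (n : ℕ) : Matrix (QState n) (QState n) ℂ :=
  Matrix.of fun x y => ∏ l, sqrtX (x l) (y l)

namespace HEPRaux

/-- `n`-fold tensor (Kronecker) product of one-qubit matrices. -/
def kron {n : ℕ} (M : Fin n → Matrix (Fin 2) (Fin 2) ℂ) : Matrix (QState n) (QState n) ℂ :=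
  Matrix.of fun x y => ∏ l, M l (x l) (y l)

lemma kron_apply {n : ℕ} (M : Fin n → Matrix (Fin 2) (Fin 2) ℂ) (x y : QState n) :
    kron M x y = ∏ l, M l (x l) (y l) := rfl

lemma kron_mul {n : ℕ} (M N : Fin n → Matrix (Fin 2) (Fin 2) ℂ) :
    kron M * kron N = kron fun l => M l * N l := by
  ext x y
  simp only [Matrix.mul_apply, kron_apply]
  simp_rw [← Finset.prod_mul_distrib, ← Matrix.mul_apply]
  rw [← Fintype.prod_sum fun l a => M l (x l) a * N l a (y l)]
  simp [Matrix.mul_apply]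

lemma kron_conjTranspose {n : ℕ} (M : Fin n → Matrix (Fin 2) (Fin 2) ℂ) :
    (kron M)ᴴ = kron fun l => (M l)ᴴ := by
  ext x y
  simp only [Matrix.conjTranspose_apply, kron_apply, star_prod]

lemma kron_one {n : ℕ} : kron (fun _ : Fin n => (1 : Matrix (Fin 2) (Fin 2) ℂ)) = 1 := by
  ext x y
  simp only [kron_apply, Matrix.one_apply]
  by_cases h : x = y
  · subst h; simp
  · rw [if_neg h]
    obtain ⟨l, hl⟩ := Function.ne_iff.mp h
    exact Finset.prod_eq_zero (Finset.mem_univ l) (by simp [hl])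

lemma twoSite_eq_kron {n : ℕ} (i j : Fin n) (hij : i ≠ j) (P Q : Matrix (Fin 2) (Fin 2) ℂ) :
    twoSite n i j P Q = kron fun l => if l = i then P else if l = j then Q else 1 := by
  ext x y
  simp only [twoSite, kron_apply, Matrix.of_apply]
  rw [← Finset.prod_sdiff (Finset.subset_univ ({i, j} : Finset (Fin n))),
    Finset.prod_pair hij]
  rw [if_pos rfl, if_neg hij.symm, if_pos rfl]
  have : ∀ l ∈ Finset.univ \ ({i, j} : Finset (Fin n)),
      (if l = i then P else if l = j then Q else 1) (x l) (y l)
        = if x l = y l then (1 : ℂ) else 0 := by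
    intro l hl
    simp only [Finset.mem_sdiff, Finset.mem_univ, Finset.mem_insert,
      Finset.mem_singleton, true_and, not_or] at hl
    rw [if_neg hl.1, if_neg hl.2, Matrix.one_apply]
  rw [Finset.prod_congr rfl this]
  ring

lemma Umat_eq_kron (n : ℕ) : Umat n = kron fun _ => sqrtX := rfl

end HEPRaux
set_option linter.unreachableTactic false
set_option linter.unusedTactic false

namespace HEPRaux

lemma sqrtX_conj_one : sqrtX * (1 : Matrix (Fin 2) (Fin 2) ℂ) * sqrtXᴴ = 1 := by
  ext i j
  fin_cases i <;> fin_cases j <;>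
    simp [sqrtX, Matrix.mul_apply, Fin.sum_univ_two, Matrix.conjTranspose_apply,
      Matrix.one_apply, Complex.ext_iff] <;> ring_nf <;> simp [Complex.ext_iff] <;> ring_nf

lemma sqrtX_conj_X : sqrtX * pauliX * sqrtXᴴ = pauliX := by
  ext i j
  fin_cases i <;> fin_cases j <;>
    simp [sqrtX, pauliX, Matrix.mul_apply, Fin.sum_univ_two, Matrix.conjTranspose_apply,
      Complex.ext_iff] <;> ring_nf <;> simp [Complex.ext_iff] <;> ring_nf

lemma sqrtX_conj_Y : sqrtX * pauliY * sqrtXᴴ = pauliZ := by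
  ext i j
  fin_cases i <;> fin_cases j <;>
    simp [sqrtX, pauliY, pauliZ, Matrix.mul_apply, Fin.sum_univ_two, Matrix.conjTranspose_apply,
      Complex.ext_iff] <;> ring_nf <;> simp [Complex.ext_iff] <;> ring_nf

lemma sqrtX_conj_Z : sqrtX * pauliZ * sqrtXᴴ = -pauliY := by
  ext i j
  fin_cases i <;> fin_cases j <;>
    simp [sqrtX, pauliY, pauliZ, Matrix.mul_apply, Fin.sum_univ_two, Matrix.conjTranspose_apply,
      Complex.ext_iff] <;> ring_nf <;> simp [Complex.ext_iff] <;> ring_nf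

end HEPRaux
namespace HEPRaux

lemma fin2 (a : Fin 2) : a = 0 ∨ a = 1 := by omega

/-- The conjugated EPR term `(1/2)(I + XX + YY - ZZ)`. -/
def hB (n : ℕ) (i j : Fin n) : Matrix (QState n) (QState n) ℂ :=
  (1 / 2 : ℂ) • ((1 : Matrix (QState n) (QState n) ℂ)
    + twoSite n i j pauliX pauliX + twoSite n i j pauliY pauliY
    - twoSite n i j pauliZ pauliZ)

lemma Umat_mul_conjTranspose (n : ℕ) : Umat n * (Umat n)ᴴ = 1 := by
  rw [Umat_eq_kron, kron_conjTranspose, kron_mul]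
  have : (fun _ : Fin n => sqrtX * sqrtXᴴ) = fun _ => (1 : Matrix (Fin 2) (Fin 2) ℂ) := by
    funext l
    simpa [Matrix.mul_one] using sqrtX_conj_one
  rw [this, kron_one]

lemma conjTranspose_mul_Umat (n : ℕ) : (Umat n)ᴴ * Umat n = 1 := by
  have h := Umat_mul_conjTranspose n
  have := mul_eq_one_comm.mp h
  exact this

lemma conj_twoSite {n : ℕ} (i j : Fin n) (hij : i ≠ j) (P Q : Matrix (Fin 2) (Fin 2) ℂ) :
    Umat n * twoSite n i j P Q * (Umat n)ᴴ
      = twoSite n i j (sqrtX * P * sqrtXᴴ) (sqrtX * Q * sqrtXᴴ) := by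
  rw [twoSite_eq_kron i j hij, twoSite_eq_kron i j hij, Umat_eq_kron,
    kron_conjTranspose, kron_mul, kron_mul]
  have hfun : (fun l => (if l = i then sqrtX else if l = j then sqrtX else sqrtX) *
        (if l = i then P else if l = j then Q else 1) *
        (if l = i then sqrtXᴴ else if l = j then sqrtXᴴ else sqrtXᴴ)) =
      (fun l => if l = i then sqrtX * P * sqrtXᴴ else if l = j then sqrtX * Q * sqrtXᴴ else 1) := by
    funext l
    by_cases hli : l = i
    · simp [hli]
    · by_cases hlj : l = j
      · simp [hli, hlj]
      · simp only [hli, hlj, if_false]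
        simpa [Matrix.mul_one] using sqrtX_conj_one
  calc kron (fun l => sqrtX * (if l = i then P else if l = j then Q else 1) * sqrtXᴴ)
      = kron (fun l => if l = i then sqrtX * P * sqrtXᴴ else if l = j then sqrtX * Q * sqrtXᴴ else 1) := by
        rw [← hfun]; simp only [ite_self]
    _ = _ := rfl

lemma conj_one (n : ℕ) : Umat n * (1 : Matrix (QState n) (QState n) ℂ) * (Umat n)ᴴ = 1 := by
  rw [Matrix.mul_one, Umat_mul_conjTranspose]

lemma twoSite_neg_neg {n : ℕ} (i j : Fin n) (P Q : Matrix (Fin 2) (Fin 2) ℂ) :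
    twoSite n i j (-P) (-Q) = twoSite n i j P Q := by
  ext x y
  simp only [twoSite, Matrix.of_apply, Matrix.neg_apply]
  ring

lemma conj_hEPR {n : ℕ} (i j : Fin n) (hij : i ≠ j) :
    Umat n * hEPR n i j * (Umat n)ᴴ = hB n i j := by
  rw [hEPR, hB]
  rw [Matrix.mul_smul, Matrix.smul_mul]
  congr 1
  rw [Matrix.mul_add, Matrix.add_mul, Matrix.mul_sub, Matrix.sub_mul,
    Matrix.mul_add, Matrix.add_mul]
  rw [conj_one, conj_twoSite i j hij, conj_twoSite i j hij, conj_twoSite i j hij,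
    sqrtX_conj_X, sqrtX_conj_Y, sqrtX_conj_Z, twoSite_neg_neg]
  abel

end HEPRaux
namespace HEPRaux

lemma delta_rest {n : ℕ} (i j : Fin n) (x y : QState n) :
    (∏ l ∈ Finset.univ \ {i, j}, (if x l = y l then (1 : ℂ) else 0))
      = if (∀ l, l ≠ i → l ≠ j → x l = y l) then 1 else 0 := by
  by_cases h : ∀ l, l ≠ i → l ≠ j → x l = y l
  · rw [if_pos h]
    apply Finset.prod_eq_one
    intro l hl
    simp only [Finset.mem_sdiff, Finset.mem_univ, Finset.mem_insert,
      Finset.mem_singleton, true_and, not_or] at hl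
    rw [if_pos (h l hl.1 hl.2)]
  · rw [if_neg h]
    push_neg at h
    obtain ⟨l, hli, hlj, hl⟩ := h
    refine Finset.prod_eq_zero (i := l) ?_ (by rw [if_neg hl])
    simp [hli, hlj]

lemma hB_apply {n : ℕ} (i j : Fin n) (hij : i ≠ j) (x y : QState n) :
    hB n i j x y =
      if (∀ l, l ≠ i → l ≠ j → x l = y l) then
        (if x = y then (if x i = x j then 0 else 1)
         else if x i ≠ y i ∧ x j ≠ y j ∧ x i ≠ x j then 1 else 0)
      else 0 := by
  have key : ∀ P : Matrix (Fin 2) (Fin 2) ℂ, ∀ Q : Matrix (Fin 2) (Fin 2) ℂ,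
      twoSite n i j P Q x y
        = P (x i) (y i) * Q (x j) (y j) *
            (if (∀ l, l ≠ i → l ≠ j → x l = y l) then 1 else 0) := by
    intro P Q
    rw [twoSite, Matrix.of_apply, delta_rest]
  simp only [hB, Matrix.smul_apply, Matrix.sub_apply, Matrix.add_apply, Matrix.one_apply,
    key, smul_eq_mul]
  by_cases h : ∀ l, l ≠ i → l ≠ j → x l = y l
  · rw [if_pos h]
    simp only [if_pos h, mul_one]
    by_cases hxy : x = y
    · subst hxy
      rw [if_pos rfl, if_pos rfl]
      rcases fin2 (x i) with hi | hi <;> rcases fin2 (x j) with hj | hj <;>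
        rw [hi, hj] <;>
        norm_num [pauliX, pauliY, pauliZ] <;> ring
    · rw [if_neg hxy, if_neg hxy]
      have hij' : x i ≠ y i ∨ x j ≠ y j := by
        by_contra hc
        push_neg at hc
        exact hxy (funext fun l => by
          by_cases hli : l = i
          · subst hli; exact hc.1
          · by_cases hlj : l = j
            · subst hlj; exact hc.2
            · exact h l hli hlj)
      rcases fin2 (x i) with hi | hi <;> rcases fin2 (y i) with hi' | hi' <;>
        rcases fin2 (x j) with hj | hj <;> rcases fin2 (y j) with hj' | hj' <;>
        simp only [hi, hi', hj, hj'] <;>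
        first
          | exact absurd hij' (by rw [hi, hi', hj, hj']; decide)
          | (norm_num [pauliX, pauliY, pauliZ]; try ring_nf; try norm_num [Complex.ext_iff]; try ring_nf)
  · rw [if_neg h, if_neg h]
    have hxy : x ≠ y := fun hc => h (fun l _ _ => by rw [hc])
    rw [if_neg hxy]
    ring

end HEPRaux
namespace HEPRaux

lemma hammingWt_eq_sum {n : ℕ} (x : QState n) : hammingWt x = ∑ l, (x l).val := by
  rw [hammingWt, Finset.card_filter]
  refine Finset.sum_congr rfl fun l _ => ?_
  rcases fin2 (x l) with h | h <;> rw [h] <;> rfl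

lemma chi_apply_mem {n : ℕ} (A : Finset (Fin n)) (l : Fin n) (h : l ∈ A) : chi A l = 1 := by
  simp [chi, h]

lemma chi_apply_notMem {n : ℕ} (A : Finset (Fin n)) (l : Fin n) (h : l ∉ A) : chi A l = 0 := by
  simp [chi, h]

lemma chi_eq_iff {n : ℕ} (A B : Finset (Fin n)) (l : Fin n) :
    chi A l = chi B l ↔ (l ∈ A ↔ l ∈ B) := by
  by_cases hA : l ∈ A <;> by_cases hB : l ∈ B <;>
    simp [chi, hA, hB]

lemma chi_injective {n : ℕ} : Function.Injective (chi (n := n)) := by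
  intro A B h
  ext l
  rw [← chi_eq_iff A B l, h]

lemma hammingWt_chi {n : ℕ} (A : Finset (Fin n)) : hammingWt (chi A) = A.card := by
  rw [hammingWt]
  congr 1
  ext l
  simp only [Finset.mem_filter, Finset.mem_univ, true_and]
  by_cases h : l ∈ A <;> simp [chi, h]

/-- Hamming weight preservation for the `hB` off-diagonal matrix elements. -/
lemma hB_apply_eq_zero_of_wt_ne {n : ℕ} (i j : Fin n) (hij : i ≠ j) (x y : QState n)
    (hwt : hammingWt x ≠ hammingWt y) : hB n i j x y = 0 := by
  rw [hB_apply i j hij]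
  by_cases h : ∀ l, l ≠ i → l ≠ j → x l = y l
  · rw [if_pos h]
    have hxy : x ≠ y := fun hc => hwt (by rw [hc])
    rw [if_neg hxy]
    by_cases hf : x i ≠ y i ∧ x j ≠ y j ∧ x i ≠ x j
    · exfalso
      apply hwt
      rw [hammingWt_eq_sum, hammingWt_eq_sum]
      rw [← Finset.sum_sdiff (Finset.subset_univ ({i, j} : Finset (Fin n))),
        ← Finset.sum_sdiff (Finset.subset_univ ({i, j} : Finset (Fin n))),
        Finset.sum_pair hij, Finset.sum_pair hij]
      have hrest : ∑ l ∈ Finset.univ \ ({i, j} : Finset (Fin n)), (x l).val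
          = ∑ l ∈ Finset.univ \ ({i, j} : Finset (Fin n)), (y l).val := by
        refine Finset.sum_congr rfl fun l hl => ?_
        simp only [Finset.mem_sdiff, Finset.mem_univ, Finset.mem_insert,
          Finset.mem_singleton, true_and, not_or] at hl
        rw [h l hl.1 hl.2]
      rw [hrest]
      congr 1
      obtain ⟨h1, h2, h3⟩ := hf
      rcases fin2 (x i) with hi | hi <;> rcases fin2 (y i) with hi' | hi' <;>
        rcases fin2 (x j) with hj | hj <;> rcases fin2 (y j) with hj' | hj' <;>
        rw [hi, hi', hj, hj'] <;> rw [hi, hi'] at h1 <;> rw [hj, hj'] at h2 <;>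
        rw [hi, hj] at h3 <;> first | rfl | (exfalso; exact absurd rfl (by assumption))
    · rw [if_neg hf]
  · rw [if_neg h]

end HEPRaux
namespace HEPRaux

lemma conj_HEPR {n : ℕ} (w : Fin n → Fin n → ℝ) (hdiag : ∀ i, w i i = 0) :
    Umat n * HEPR n w * (Umat n)ᴴ
      = (1 / 2 : ℂ) • ∑ i, ∑ j, (w i j : ℂ) •
          (if i = j then 0 else hB n i j) := by
  rw [HEPR]
  rw [Matrix.mul_smul, Matrix.smul_mul]
  congr 1
  rw [Matrix.mul_sum, Matrix.sum_mul]
  refine Finset.sum_congr rfl fun i _ => ?_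
  rw [Matrix.mul_sum, Matrix.sum_mul]
  refine Finset.sum_congr rfl fun j _ => ?_
  rw [Matrix.mul_smul, Matrix.smul_mul]
  by_cases hij : i = j
  · rw [if_pos hij, hij, hdiag]
    simp
  · rw [if_neg hij, conj_hEPR i j hij]

lemma Kmat_apply {n : ℕ} (w : Fin n → Fin n → ℝ) (hdiag : ∀ i, w i i = 0)
    (x y : QState n) :
    (Umat n * HEPR n w * (Umat n)ᴴ) x y
      = (1 / 2 : ℂ) * ∑ i, ∑ j, (w i j : ℂ) *
          (if i = j then 0 else hB n i j x y) := by
  rw [conj_HEPR w hdiag]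
  rw [Matrix.smul_apply, smul_eq_mul]
  congr 1
  rw [Matrix.sum_apply]
  refine Finset.sum_congr rfl fun i _ => ?_
  rw [Matrix.sum_apply]
  refine Finset.sum_congr rfl fun j _ => ?_
  rw [Matrix.smul_apply, smul_eq_mul]
  congr 1
  by_cases hij : i = j
  · simp [hij]
  · rw [if_neg hij, if_neg hij]

/-- Part 1 of the theorem. -/
lemma part1 {n : ℕ} (w : Fin n → Fin n → ℝ) (hdiag : ∀ i, w i i = 0)
    (x y : QState n) (hwt : hammingWt x ≠ hammingWt y) :
    (Umat n * HEPR n w * (Umat n)ᴴ) x y = 0 := by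
  rw [Kmat_apply w hdiag]
  have : ∀ i j : Fin n, (w i j : ℂ) * (if i = j then 0 else hB n i j x y) = 0 := by
    intro i j
    by_cases hij : i = j
    · rw [if_pos hij, mul_zero]
    · rw [if_neg hij, hB_apply_eq_zero_of_wt_ne i j hij x y hwt, mul_zero]
  simp only [this, Finset.sum_const_zero, mul_zero]

end HEPRaux
namespace HEPRaux

variable {n : ℕ}

lemma tokenW_self (w : Fin n → Fin n → ℝ) (A : Finset (Fin n)) : tokenW w A A = 0 := by
  simp [tokenW]

lemma tokenW_single (w : Fin n → Fin n → ℝ) {A B : Finset (Fin n)} {a b : Fin n}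
    (hd : A \ B = {a}) (he : B \ A = {b}) : tokenW w A B = w a b := by
  rw [tokenW, hd, he, Finset.sum_singleton, Finset.sum_singleton]
  rw [if_pos]
  -- A \ {a} = B \ {b}
  ext l
  simp only [Finset.mem_sdiff, Finset.mem_singleton]
  constructor
  · rintro ⟨hlA, hla⟩
    have hlB : l ∈ B := by
      by_contra hlB
      have : l ∈ A \ B := Finset.mem_sdiff.mpr ⟨hlA, hlB⟩
      rw [hd, Finset.mem_singleton] at this
      exact hla this
    refine ⟨hlB, fun hlb => ?_⟩
    subst hlb
    have : l ∈ B \ A := by rw [he]; exact Finset.mem_singleton_self l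
    exact (Finset.mem_sdiff.mp this).2 hlA
  · rintro ⟨hlB, hlb⟩
    have hlA : l ∈ A := by
      by_contra hlA
      have : l ∈ B \ A := Finset.mem_sdiff.mpr ⟨hlB, hlA⟩
      rw [he, Finset.mem_singleton] at this
      exact hlb this
    refine ⟨hlA, fun hla => ?_⟩
    subst hla
    have : l ∈ A \ B := by rw [hd]; exact Finset.mem_singleton_self l
    exact (Finset.mem_sdiff.mp this).2 hlB

lemma tokenW_big (w : Fin n → Fin n → ℝ) {A B : Finset (Fin n)}
    (h2 : 1 < (A \ B).card) : tokenW w A B = 0 := by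
  rw [tokenW]
  refine Finset.sum_eq_zero fun a ha => Finset.sum_eq_zero fun b hb => ?_
  rw [if_neg]
  intro hc
  obtain ⟨a', ha', haa'⟩ := Finset.exists_mem_ne h2 a
  have h1 : a' ∈ A \ ({a} : Finset (Fin n)) := by
    simp only [Finset.mem_sdiff, Finset.mem_singleton]
    exact ⟨(Finset.mem_sdiff.mp ha').1, haa'⟩
  rw [hc] at h1
  simp only [Finset.mem_sdiff, Finset.mem_singleton] at h1
  exact (Finset.mem_sdiff.mp ha').2 h1.1

lemma tokenW_symm (w : Fin n → Fin n → ℝ) (hsymm : ∀ i j, w i j = w j i)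
    (A B : Finset (Fin n)) : tokenW w A B = tokenW w B A := by
  rw [tokenW, tokenW, Finset.sum_comm]
  refine Finset.sum_congr rfl fun b hb => Finset.sum_congr rfl fun a ha => ?_
  rw [hsymm a b]
  congr 1
  simp only [eq_iff_iff]
  constructor <;> intro h <;> exact h.symm

/-- Row sums of the token adjacency matrix. -/
lemma tokenW_row_sum (w : Fin n → Fin n → ℝ) {k : ℕ} {A : Finset (Fin n)}
    (hA : A.card = k) :
    ∑ B : TokenVert n k, tokenW w A B.1 = ∑ a ∈ A, ∑ b ∈ Aᶜ, w a b := by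
  have step1 : ∀ B : Finset (Fin n),
      tokenW w A B = ∑ a ∈ A, ∑ b ∈ Aᶜ,
        (if a ∉ B ∧ b ∈ B ∧ A \ {a} = B \ {b} then w a b else 0) := by
    intro B
    rw [tokenW]
    rw [← Finset.sum_subset (Finset.sdiff_subset : A \ B ⊆ A) ?van1]
    case van1 =>
      intro a ha haAB
      have haB : a ∈ B := by
        by_contra haB
        exact haAB (Finset.mem_sdiff.mpr ⟨ha, haB⟩)
      exact Finset.sum_eq_zero fun b _ => if_neg (fun hc => hc.1 haB)
    refine Finset.sum_congr rfl fun a ha => ?_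
    have haA : a ∈ A := (Finset.mem_sdiff.mp ha).1
    have haB : a ∉ B := (Finset.mem_sdiff.mp ha).2
    rw [← Finset.sum_subset (show B \ A ⊆ Aᶜ from fun b hb =>
        Finset.mem_compl.mpr (Finset.mem_sdiff.mp hb).2) ?van2]
    case van2 =>
      intro b hb hbBA
      have hbB : b ∉ B := fun hbB =>
        hbBA (Finset.mem_sdiff.mpr ⟨hbB, Finset.mem_compl.mp hb⟩)
      exact if_neg (fun hc => hbB hc.2.1)
    refine Finset.sum_congr rfl fun b hb => ?_
    have hbB : b ∈ B := (Finset.mem_sdiff.mp hb).1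
    simp [haB, hbB]
  calc ∑ B : TokenVert n k, tokenW w A B.1
      = ∑ B : TokenVert n k, ∑ a ∈ A, ∑ b ∈ Aᶜ,
          (if a ∉ B.1 ∧ b ∈ B.1 ∧ A \ {a} = B.1 \ {b} then w a b else 0) := by
        exact Finset.sum_congr rfl fun B _ => step1 B.1
    _ = ∑ a ∈ A, ∑ b ∈ Aᶜ, ∑ B : TokenVert n k,
          (if a ∉ B.1 ∧ b ∈ B.1 ∧ A \ {a} = B.1 \ {b} then w a b else 0) := by
        rw [Finset.sum_comm]
        refine Finset.sum_congr rfl fun a _ => Finset.sum_comm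
    _ = ∑ a ∈ A, ∑ b ∈ Aᶜ, w a b := by
        refine Finset.sum_congr rfl fun a ha => Finset.sum_congr rfl fun b hb => ?_
        have hbA : b ∉ A := Finset.mem_compl.mp hb
        have hab : a ≠ b := fun hc => hbA (hc ▸ ha)
        have hbe : b ∉ A.erase a := fun hc => hbA (Finset.mem_of_mem_erase hc)
        have hcard : (insert b (A.erase a)).card = k := by
          rw [Finset.card_insert_of_notMem hbe, Finset.card_erase_of_mem ha, hA]
          have : 1 ≤ k := hA ▸ Finset.card_pos.mpr ⟨a, ha⟩
          omega
        refine Finset.sum_eq_single_of_mem (⟨insert b (A.erase a), hcard⟩ : TokenVert n k)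
          (Finset.mem_univ _) ?_ |>.trans ?_
        · intro B' _ hB'
          refine if_neg fun hc => hB' (Subtype.ext ?_)
          show B'.1 = insert b (A.erase a)
          have h1 : B'.1 = insert b (B'.1.erase b) := (Finset.insert_erase hc.2.1).symm
          rw [h1]
          congr 1
          rw [Finset.erase_eq, Finset.erase_eq, ← hc.2.2]
        · rw [if_pos]
          refine ⟨?_, Finset.mem_insert_self b _, ?_⟩
          · simp only [Finset.mem_insert, Finset.mem_erase]
            push_neg
            exact ⟨hab, fun h => absurd rfl h⟩
          · rw [← Finset.erase_eq, ← Finset.erase_eq, Finset.erase_insert hbe]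

end HEPRaux
namespace HEPRaux

variable {n : ℕ}

lemma cond_chi (i j : Fin n) (A B : Finset (Fin n)) :
    (∀ l, l ≠ i → l ≠ j → chi A l = chi B l) ↔ (∀ l, l ≠ i → l ≠ j → (l ∈ A ↔ l ∈ B)) :=
  forall_congr' fun l => imp_congr_right fun _ => imp_congr_right fun _ => chi_eq_iff A B l

/-- `hB` matrix element on the diagonal of the token-graph block structure. -/
lemma hB_chi_diag (i j : Fin n) (hij : i ≠ j) (A : Finset (Fin n)) :
    hB n i j (chi A) (chi A) = if (i ∈ A ↔ j ∈ A) then 0 else 1 := by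
  rw [hB_apply i j hij, if_pos (fun l _ _ => rfl), if_pos rfl]
  by_cases h : i ∈ A <;> by_cases h' : j ∈ A <;>
    simp [chi, h, h']

/-- `hB` matrix element between distinct token basis states, singleton difference case. -/
lemma hB_chi_single (i j : Fin n) (hij : i ≠ j) {A B : Finset (Fin n)} {a b : Fin n}
    (hAB : A ≠ B) (hd : A \ B = {a}) (he : B \ A = {b}) :
    hB n i j (chi A) (chi B)
      = if (i = a ∧ j = b) ∨ (i = b ∧ j = a) then 1 else 0 := by
  have haA : a ∈ A ∧ a ∉ B := by
    have := Finset.mem_sdiff.mp (hd ▸ Finset.mem_singleton_self a); exact this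
  have hbB : b ∈ B ∧ b ∉ A := by
    have := Finset.mem_sdiff.mp (he ▸ Finset.mem_singleton_self b); exact this
  have hab : a ≠ b := fun hc => haA.2 (hc ▸ hbB.1)
  have hmem : ∀ l, l ≠ a → l ≠ b → (l ∈ A ↔ l ∈ B) := by
    intro l hla hlb
    constructor
    · intro hl
      by_contra hlB
      have : l ∈ A \ B := Finset.mem_sdiff.mpr ⟨hl, hlB⟩
      rw [hd, Finset.mem_singleton] at this; exact hla this
    · intro hl
      by_contra hlA
      have : l ∈ B \ A := Finset.mem_sdiff.mpr ⟨hl, hlA⟩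
      rw [he, Finset.mem_singleton] at this; exact hlb this
  have hchi : chi A ≠ chi B := fun hc => hAB (chi_injective hc)
  rw [hB_apply i j hij]
  by_cases hcase : (i = a ∧ j = b) ∨ (i = b ∧ j = a)
  · rw [if_pos hcase]
    have hcond : ∀ l, l ≠ i → l ≠ j → chi A l = chi B l := by
      rw [cond_chi]
      intro l hli hlj
      rcases hcase with ⟨hia, hjb⟩ | ⟨hib, hja⟩
      · exact hmem l (hia ▸ hli) (hjb ▸ hlj)
      · exact hmem l (hja ▸ hlj) (hib ▸ hli)
    rw [if_pos hcond, if_neg hchi, if_pos]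
    rcases hcase with ⟨hia, hjb⟩ | ⟨hib, hja⟩
    · subst hia; subst hjb
      rw [chi_apply_mem A i haA.1, chi_apply_notMem B i haA.2,
        chi_apply_mem B j hbB.1, chi_apply_notMem A j hbB.2]
      refine ⟨by decide, by decide, by decide⟩
    · subst hib; subst hja
      rw [chi_apply_mem A j haA.1, chi_apply_notMem B j haA.2,
        chi_apply_mem B i hbB.1, chi_apply_notMem A i hbB.2]
      refine ⟨by decide, by decide, by decide⟩
  · rw [if_neg hcase, if_neg]
    rw [cond_chi]
    intro hcond
    -- one of a, b lies outside {i, j}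
    have : a ∉ ({i, j} : Finset (Fin n)) ∨ b ∉ ({i, j} : Finset (Fin n)) := by
      by_contra hc
      push_neg at hc
      obtain ⟨ha', hb'⟩ := hc
      simp only [Finset.mem_insert, Finset.mem_singleton] at ha' hb'
      rcases ha' with ha' | ha' <;> rcases hb' with hb' | hb'
      · exact hab (ha'.trans hb'.symm)
      · exact hcase (Or.inl ⟨ha'.symm, hb'.symm⟩)
      · exact hcase (Or.inr ⟨hb'.symm, ha'.symm⟩)
      · exact hab (ha'.trans hb'.symm)
    rcases this with hout | hout <;>
      simp only [Finset.mem_insert, Finset.mem_singleton, not_or] at hout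
    · exact haA.2 ((hcond a hout.1 hout.2).mp haA.1)
    · exact hbB.2 ((hcond b hout.1 hout.2).mpr hbB.1)

/-- `hB` matrix element vanishes when the sets differ in more than one token. -/
lemma hB_chi_big (i j : Fin n) (hij : i ≠ j) {A B : Finset (Fin n)}
    (hcard : A.card = B.card) (h2 : 1 < (A \ B).card) :
    hB n i j (chi A) (chi B) = 0 := by
  rw [hB_apply i j hij, if_neg]
  rw [cond_chi]
  intro hcond
  have hsub : A \ B ⊆ {i, j} := by
    intro l hl
    have hl' := Finset.mem_sdiff.mp hl
    by_contra hlij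
    simp only [Finset.mem_insert, Finset.mem_singleton, not_or] at hlij
    exact hl'.2 ((hcond l hlij.1 hlij.2).mp hl'.1)
  have hsub' : B \ A ⊆ {i, j} := by
    intro l hl
    have hl' := Finset.mem_sdiff.mp hl
    by_contra hlij
    simp only [Finset.mem_insert, Finset.mem_singleton, not_or] at hlij
    exact hl'.2 ((hcond l hlij.1 hlij.2).mpr hl'.1)
  have hc2 : ({i, j} : Finset (Fin n)).card = 2 := Finset.card_pair hij
  have hBA : (B \ A).card = (A \ B).card := (Finset.card_sdiff_comm hcard).symm
  have hAB2 : A \ B = ({i, j} : Finset (Fin n)) :=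
    Finset.eq_of_subset_of_card_le hsub (by omega)
  have hBA2 : B \ A = ({i, j} : Finset (Fin n)) :=
    Finset.eq_of_subset_of_card_le hsub' (by omega)
  have hiAB : i ∈ A \ B := hAB2 ▸ Finset.mem_insert_self i {j}
  have hiBA : i ∈ B \ A := hBA2 ▸ Finset.mem_insert_self i {j}
  exact (Finset.mem_sdiff.mp hiBA).2 (Finset.mem_sdiff.mp hiAB).1

end HEPRaux
namespace HEPRaux

variable {n : ℕ}

lemma diag_sum_real (w : Fin n → Fin n → ℝ) (hsymm : ∀ i j, w i j = w j i)
    (A : Finset (Fin n)) :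
    (1 / 2 : ℝ) * ∑ i, ∑ j, w i j * (if (i ∈ A ↔ j ∈ A) then 0 else 1)
      = ∑ a ∈ A, ∑ b ∈ Aᶜ, w a b := by
  have inner1 : ∀ i : Fin n, i ∈ A → (∑ j, w i j * (if (i ∈ A ↔ j ∈ A) then 0 else 1))
      = ∑ b ∈ Aᶜ, w i b := by
    intro i hi
    rw [← Finset.sum_add_sum_compl A]
    rw [Finset.sum_eq_zero (fun j hj => by simp [hi, hj]), zero_add]
    exact Finset.sum_congr rfl fun j hj => by
      simp [hi, Finset.mem_compl.mp hj]
  have inner2 : ∀ i : Fin n, i ∉ A → (∑ j, w i j * (if (i ∈ A ↔ j ∈ A) then 0 else 1))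
      = ∑ b ∈ A, w i b := by
    intro i hi
    rw [← Finset.sum_add_sum_compl A]
    have e1 : ∑ j ∈ A, w i j * (if (i ∈ A ↔ j ∈ A) then 0 else 1) = ∑ b ∈ A, w i b :=
      Finset.sum_congr rfl fun j hj => by simp [hi, hj]
    have e2 : ∑ j ∈ Aᶜ, w i j * (if (i ∈ A ↔ j ∈ A) then 0 else 1) = 0 :=
      Finset.sum_eq_zero fun j hj => by simp [hi, Finset.mem_compl.mp hj]
    rw [e1, e2, add_zero]
  rw [← Finset.sum_add_sum_compl A (fun i => ∑ j, w i j * (if (i ∈ A ↔ j ∈ A) then 0 else 1))]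
  rw [Finset.sum_congr rfl inner1,
    Finset.sum_congr rfl (fun i hi => inner2 i (Finset.mem_compl.mp hi))]
  have swap : ∑ i ∈ Aᶜ, ∑ b ∈ A, w i b = ∑ a ∈ A, ∑ b ∈ Aᶜ, w a b := by
    rw [Finset.sum_comm]
    exact Finset.sum_congr rfl fun a _ => Finset.sum_congr rfl fun b _ => hsymm b a
  rw [swap]
  ring

lemma pair_sum_complex (w : Fin n → Fin n → ℝ) {a b : Fin n} (hab : a ≠ b) :
    ∑ i, ∑ j, (w i j : ℂ) * (if (i = a ∧ j = b) ∨ (i = b ∧ j = a) then 1 else 0)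
      = (w a b : ℂ) + (w b a : ℂ) := by
  have hsplit : ∀ i j : Fin n,
      (w i j : ℂ) * (if (i = a ∧ j = b) ∨ (i = b ∧ j = a) then 1 else 0)
        = (if i = a ∧ j = b then (w i j : ℂ) else 0)
          + (if i = b ∧ j = a then (w i j : ℂ) else 0) := by
    intro i j
    by_cases h1 : i = a ∧ j = b
    · obtain ⟨rfl, rfl⟩ := h1
      simp [hab]
    · by_cases h2 : i = b ∧ j = a
      · obtain ⟨rfl, rfl⟩ := h2
        simp [h1, Ne.symm hab]
      · simp [h1, h2]
  simp only [hsplit, Finset.sum_add_distrib]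
  congr 1
  · rw [Finset.sum_eq_single a]
    · rw [Finset.sum_eq_single b]
      · simp
      · intro j _ hj; rw [if_neg (fun hc => hj hc.2)]
      · intro h; exact absurd (Finset.mem_univ b) h
    · intro i _ hi
      refine Finset.sum_eq_zero fun j _ => if_neg (fun hc => hi hc.1)
    · intro h; exact absurd (Finset.mem_univ a) h
  · rw [Finset.sum_eq_single b]
    · rw [Finset.sum_eq_single a]
      · simp
      · intro j _ hj; rw [if_neg (fun hc => hj hc.2)]
      · intro h; exact absurd (Finset.mem_univ a) h
    · intro i _ hi
      refine Finset.sum_eq_zero fun j _ => if_neg (fun hc => hi hc.1)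
    · intro h; exact absurd (Finset.mem_univ b) h

end HEPRaux
namespace HEPRaux

variable {n : ℕ}

lemma part2 (w : Fin n → Fin n → ℝ) (hsymm : ∀ i j, w i j = w j i)
    (hdiag : ∀ i, w i i = 0) (k : ℕ) (A B : Finset (Fin n))
    (hA : A.card = k) (hB' : B.card = k) :
    (Umat n * HEPR n w * (Umat n)ᴴ) (chi A) (chi B)
      = ((tokenQ w k ⟨A, hA⟩ ⟨B, hB'⟩ : ℝ) : ℂ) := by
  rw [Kmat_apply w hdiag]
  by_cases hAB : A = B
  · subst hAB
    have hidx : (⟨A, hB'⟩ : TokenVert n k) = ⟨A, hA⟩ := rfl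
    have hrhs : tokenQ w k ⟨A, hA⟩ ⟨A, hB'⟩ = ∑ a ∈ A, ∑ b ∈ Aᶜ, w a b := by
      rw [tokenQ, Matrix.add_apply, tokenD, hidx, Matrix.diagonal_apply_eq, tokenA,
        Matrix.of_apply, tokenW_self, add_zero]
      exact tokenW_row_sum w hA
    rw [hrhs, ← diag_sum_real w hsymm A]
    have ht : ∀ i j : Fin n, (w i j : ℂ) * (if i = j then 0 else hB n i j (chi A) (chi A))
        = (w i j : ℂ) * (if (i ∈ A ↔ j ∈ A) then 0 else 1) := by
      intro i j
      by_cases hij : i = j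
      · subst hij; simp
      · rw [if_neg hij, hB_chi_diag i j hij]
    simp only [ht]
    push_cast [apply_ite (fun r : ℝ => (r : ℂ))]
    norm_num
  · have hne : (⟨A, hA⟩ : TokenVert n k) ≠ ⟨B, hB'⟩ := fun hc => hAB (congrArg Subtype.val hc)
    have hrhs : tokenQ w k ⟨A, hA⟩ ⟨B, hB'⟩ = tokenW w A B := by
      rw [tokenQ, Matrix.add_apply, tokenD, Matrix.diagonal_apply_ne _ hne, tokenA,
        Matrix.of_apply, zero_add]
    rw [hrhs]
    have hcard : A.card = B.card := hA.trans hB'.symm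
    have hdne : (A \ B).Nonempty := by
      rw [Finset.nonempty_iff_ne_empty]
      intro hc
      exact hAB (Finset.eq_of_subset_of_card_le
        ((Finset.sdiff_eq_empty_iff_subset).mp hc) (le_of_eq hcard.symm))
    rcases Nat.lt_or_ge 1 (A \ B).card with h2 | h1
    · have ht : ∀ i j : Fin n,
          (w i j : ℂ) * (if i = j then 0 else hB n i j (chi A) (chi B)) = 0 := by
        intro i j
        by_cases hij : i = j
        · rw [if_pos hij, mul_zero]
        · rw [if_neg hij, hB_chi_big i j hij hcard h2, mul_zero]
      simp only [ht, Finset.sum_const_zero, mul_zero]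
      rw [tokenW_big w h2]
      norm_num
    · have h1' : (A \ B).card = 1 := le_antisymm h1 (Finset.card_pos.mpr hdne)
      obtain ⟨a, hd⟩ := Finset.card_eq_one.mp h1'
      have h1'' : (B \ A).card = 1 := by
        rw [← Finset.card_sdiff_comm hcard, h1']
      obtain ⟨b, he⟩ := Finset.card_eq_one.mp h1''
      have haA : a ∈ A ∧ a ∉ B := Finset.mem_sdiff.mp (hd ▸ Finset.mem_singleton_self a)
      have hbB : b ∈ B ∧ b ∉ A := Finset.mem_sdiff.mp (he ▸ Finset.mem_singleton_self b)
      have hab : a ≠ b := fun hc => haA.2 (hc ▸ hbB.1)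
      have ht : ∀ i j : Fin n,
          (w i j : ℂ) * (if i = j then 0 else hB n i j (chi A) (chi B))
            = (w i j : ℂ) * (if (i = a ∧ j = b) ∨ (i = b ∧ j = a) then 1 else 0) := by
        intro i j
        by_cases hij : i = j
        · have hcond : ¬((i = a ∧ j = b) ∨ (i = b ∧ j = a)) := by
            rintro (⟨ha1, ha2⟩ | ⟨ha1, ha2⟩)
            · exact hab ((ha1.symm.trans hij).trans ha2)
            · exact hab ((ha2.symm.trans hij.symm).trans ha1)
          rw [if_pos hij, if_neg hcond]
        · rw [if_neg hij, hB_chi_single i j hij hAB hd he]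
      simp only [ht]
      have hsplit : ∀ i j : Fin n,
          (w i j : ℂ) * (if (i = a ∧ j = b) ∨ (i = b ∧ j = a) then (1:ℂ) else 0)
            = (w i j : ℂ) * (if (i = a ∧ j = b) ∨ (i = b ∧ j = a) then 1 else 0) :=
        fun _ _ => rfl
      rw [show ∑ i, ∑ j, (w i j : ℂ) * (if (i = a ∧ j = b) ∨ (i = b ∧ j = a) then (1:ℂ) else 0)
          = (w a b : ℂ) + (w b a : ℂ) from pair_sum_complex w hab]
      rw [tokenW_single w hd he, hsymm b a]
      push_cast
      ring

end HEPRaux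
namespace HEPRaux

variable {n : ℕ}

lemma hammingWt_le (x : QState n) : hammingWt x ≤ n := by
  rw [hammingWt]
  calc (Finset.univ.filter fun i => x i = 1).card ≤ Finset.univ.card :=
        Finset.card_filter_le _ _
    _ = n := Finset.card_fin n

/-- The bijection between sigma-types of token vertices and computational basis states. -/
def tokEquiv (n : ℕ) : (Σ k : Fin (n + 1), TokenVert n k.1) ≃ QState n :=
  Equiv.ofBijective (fun p => chi p.2.1) (by
    constructor
    · rintro ⟨⟨k1, hk1⟩, A, hA⟩ ⟨⟨k2, hk2⟩, B, hB⟩ h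
      have hABeq : A = B := chi_injective h
      subst hABeq
      have hk : k1 = k2 := by rw [show k1 = A.card from hA.symm, show k2 = A.card from hB.symm]
      subst hk
      rfl
    · intro x
      refine ⟨⟨⟨hammingWt x, Nat.lt_succ_of_le (hammingWt_le x)⟩,
        ⟨Finset.univ.filter fun i => x i = 1, rfl⟩⟩, ?_⟩
      funext l
      rcases fin2 (x l) with h | h <;>
        simp [chi, Finset.mem_filter, h])

lemma tokEquiv_apply (p : Σ k : Fin (n + 1), TokenVert n k.1) : tokEquiv n p = chi p.2.1 := rfl

/-- The conjugated EPR Hamiltonian is the block diagonal sum of the token signless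
Laplacians. -/
lemma Kmat_eq_blockDiagonal (w : Fin n → Fin n → ℝ) (hsymm : ∀ i j, w i j = w j i)
    (hdiag : ∀ i, w i i = 0) :
    Umat n * HEPR n w * (Umat n)ᴴ
      = Matrix.reindexAlgEquiv ℂ ℂ (tokEquiv n)
          (Matrix.blockDiagonal' fun k : Fin (n + 1) =>
            (tokenQ w k.1).map fun r : ℝ => (r : ℂ)) := by
  ext x y
  rw [Matrix.reindexAlgEquiv_apply, Matrix.reindex_apply, Matrix.submatrix_apply]
  obtain ⟨px, hpx⟩ : ∃ p, (tokEquiv n).symm x = p := ⟨_, rfl⟩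
  obtain ⟨py, hpy⟩ : ∃ p, (tokEquiv n).symm y = p := ⟨_, rfl⟩
  rw [hpx, hpy]
  have hx : x = chi px.2.1 := by rw [← tokEquiv_apply, ← hpx, Equiv.apply_symm_apply]
  have hy : y = chi py.2.1 := by rw [← tokEquiv_apply, ← hpy, Equiv.apply_symm_apply]
  obtain ⟨kx, Ax⟩ := px
  obtain ⟨ky, Ay⟩ := py
  by_cases hk : kx = ky
  · subst hk
    rw [Matrix.blockDiagonal'_apply_eq, Matrix.map_apply, hx, hy]
    have := part2 w hsymm hdiag kx.1 Ax.1 Ay.1 Ax.2 Ay.2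
    simpa using this
  · rw [Matrix.blockDiagonal'_apply_ne _ _ _ hk, hx, hy]
    refine part1 w hdiag _ _ ?_
    rw [hammingWt_chi, hammingWt_chi, Ax.2, Ay.2]
    exact fun hc => hk (Fin.ext hc)

end HEPRaux
namespace HEPRaux

section BlockDiag

variable {o : Type*} [Fintype o] [DecidableEq o] {m' : o → Type*}
  [∀ k, Fintype (m' k)] [∀ k, DecidableEq (m' k)]

lemma blockDiagonal'_mul_apply_same (N : ∀ k, Matrix (m' k) (m' k) ℂ)
    (X : Matrix (Σ k, m' k) (Σ k, m' k) ℂ) (k : o) (a b : m' k) :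
    (Matrix.blockDiagonal' N * X) ⟨k, a⟩ ⟨k, b⟩ = ∑ c, N k a c * X ⟨k, c⟩ ⟨k, b⟩ := by
  rw [Matrix.mul_apply, ← Finset.univ_sigma_univ, Finset.sum_sigma]
  rw [Finset.sum_eq_single k]
  · exact Finset.sum_congr rfl fun c _ => by rw [Matrix.blockDiagonal'_apply_eq]
  · intro k' _ hk'
    exact Finset.sum_eq_zero fun c _ => by
      rw [Matrix.blockDiagonal'_apply_ne _ _ _ (Ne.symm hk'), zero_mul]
  · intro h; exact absurd (Finset.mem_univ k) h

lemma isUnit_blockDiagonal' (N : ∀ k, Matrix (m' k) (m' k) ℂ) :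
    IsUnit (Matrix.blockDiagonal' N) ↔ ∀ k, IsUnit (N k) := by
  constructor
  · intro h k
    have hmul : Matrix.blockDiagonal' N * (↑h.unit⁻¹ : Matrix (Σ k, m' k) (Σ k, m' k) ℂ) = 1 := by
      have := h.unit.mul_inv
      rwa [h.unit_spec] at this
    set Y : Matrix (Σ k, m' k) (Σ k, m' k) ℂ := ↑h.unit⁻¹ with hY
    have h1 : N k * (Matrix.of fun a b => Y ⟨k, a⟩ ⟨k, b⟩) = 1 := by
      ext a b
      rw [Matrix.mul_apply]
      have := blockDiagonal'_mul_apply_same N Y k a b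
      rw [hmul] at this
      rw [show (∑ c, N k a c * (Matrix.of fun a b => Y ⟨k, a⟩ ⟨k, b⟩) c b)
          = ∑ c, N k a c * Y ⟨k, c⟩ ⟨k, b⟩ from rfl, ← this]
      by_cases hab : a = b
      · subst hab; simp [Matrix.one_apply]
      · rw [Matrix.one_apply_ne hab, Matrix.one_apply_ne]
        intro hc
        exact hab (by injection hc)
    exact ⟨⟨N k, _, h1, mul_eq_one_comm.mp h1⟩, rfl⟩
  · intro h
    have h1 : Matrix.blockDiagonal' N *
        Matrix.blockDiagonal' (fun k => (↑(h k).unit⁻¹ : Matrix (m' k) (m' k) ℂ)) = 1 := by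
      rw [← Matrix.blockDiagonal'_mul]
      have : (fun k => N k * (↑(h k).unit⁻¹ : Matrix (m' k) (m' k) ℂ))
          = fun k => (1 : Matrix (m' k) (m' k) ℂ) := by
        funext k
        have := (h k).unit.mul_inv
        rwa [(h k).unit_spec] at this
      rw [this, show (fun k => (1 : Matrix (m' k) (m' k) ℂ)) = 1 from rfl,
        Matrix.blockDiagonal'_one]
    exact ⟨⟨Matrix.blockDiagonal' N, _, h1, mul_eq_one_comm.mp h1⟩, rfl⟩

lemma algebraMap_sub_blockDiagonal' (N : ∀ k, Matrix (m' k) (m' k) ℂ) (z : ℂ) :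
    algebraMap ℂ (Matrix (Σ k, m' k) (Σ k, m' k) ℂ) z - Matrix.blockDiagonal' N
      = Matrix.blockDiagonal' fun k => algebraMap ℂ (Matrix (m' k) (m' k) ℂ) z - N k := by
  have h0 : (fun k => algebraMap ℂ (Matrix (m' k) (m' k) ℂ) z - N k)
      = fun k => z • (1 : Matrix (m' k) (m' k) ℂ) - N k := by
    funext k; rw [Algebra.algebraMap_eq_smul_one]
  have h1 : Matrix.blockDiagonal' (fun k => z • (1 : Matrix (m' k) (m' k) ℂ) - N k)
      = z • (1 : Matrix (Σ k, m' k) (Σ k, m' k) ℂ) - Matrix.blockDiagonal' N := by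
    rw [show (fun k => z • (1 : Matrix (m' k) (m' k) ℂ) - N k)
        = (z • fun k => (1 : Matrix (m' k) (m' k) ℂ)) - N from rfl,
      Matrix.blockDiagonal'_sub, Matrix.blockDiagonal'_smul,
      show (fun k => (1 : Matrix (m' k) (m' k) ℂ)) = 1 from rfl, Matrix.blockDiagonal'_one]
  rw [h0, h1, Algebra.algebraMap_eq_smul_one]

lemma spectrum_blockDiagonal' (N : ∀ k, Matrix (m' k) (m' k) ℂ) :
    spectrum ℂ (Matrix.blockDiagonal' N) = ⋃ k, spectrum ℂ (N k) := by
  ext z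
  rw [Set.mem_iUnion, spectrum.mem_iff, algebraMap_sub_blockDiagonal',
    isUnit_blockDiagonal']
  push_neg
  exact exists_congr fun k => (spectrum.mem_iff).symm

end BlockDiag

section RealSpectrum

open scoped ComplexOrder

variable {I : Type*} [Fintype I] [DecidableEq I]

lemma map_smul_one_sub (M : Matrix I I ℝ) (r : ℝ) :
    algebraMap ℂ (Matrix I I ℂ) (r : ℂ) - M.map (fun x : ℝ => (x : ℂ))
      = (algebraMap ℝ (Matrix I I ℝ) r - M).map (fun x : ℝ => (x : ℂ)) := by
  ext a b
  simp only [Matrix.sub_apply, Matrix.map_apply, Algebra.algebraMap_eq_smul_one,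
    Matrix.smul_apply, Matrix.one_apply, smul_eq_mul]
  push_cast [apply_ite (fun x : ℝ => (x : ℂ))]
  ring

lemma coe_mem_spectrum_iff (M : Matrix I I ℝ) (r : ℝ) :
    (r : ℂ) ∈ spectrum ℂ (M.map fun x : ℝ => (x : ℂ)) ↔ r ∈ spectrum ℝ M := by
  rw [spectrum.mem_iff, spectrum.mem_iff, map_smul_one_sub]
  rw [Matrix.isUnit_iff_isUnit_det, Matrix.isUnit_iff_isUnit_det, isUnit_iff_ne_zero,
    isUnit_iff_ne_zero]
  have hdet : ((algebraMap ℝ (Matrix I I ℝ) r - M).map fun x : ℝ => (x : ℂ)).det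
      = (((algebraMap ℝ (Matrix I I ℝ) r - M).det : ℝ) : ℂ) := by
    rw [show ((fun x : ℝ => (x : ℂ))) = (Complex.ofRealHom : ℝ →+* ℂ) from rfl]
    exact (RingHom.map_det Complex.ofRealHom _).symm
  rw [hdet]
  simp [Complex.ofReal_eq_zero]

lemma spectrum_real_of_symm {M : Matrix I I ℝ} (hsym : Mᵀ = M) {z : ℂ}
    (hz : z ∈ spectrum ℂ (M.map fun x : ℝ => (x : ℂ))) : z = (z.re : ℂ) := by
  set H : Matrix I I ℂ := M.map fun x : ℝ => (x : ℂ) with hH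
  have hherm : Hᴴ = H := by
    ext a b
    rw [Matrix.conjTranspose_apply, hH, Matrix.map_apply, Matrix.map_apply,
      Complex.star_def, Complex.conj_ofReal]
    rw [show M b a = Mᵀ a b from rfl, hsym]
  rw [spectrum.mem_iff] at hz
  have hdet : (algebraMap ℂ (Matrix I I ℂ) z - H).det = 0 := by
    by_contra hc
    exact hz (Matrix.isUnit_iff_isUnit_det _ |>.mpr (isUnit_iff_ne_zero.mpr hc))
  obtain ⟨v, hv, hmv⟩ := (Matrix.exists_mulVec_eq_zero_iff).mpr hdet
  have heig : H *ᵥ v = z • v := by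
    have : (algebraMap ℂ (Matrix I I ℂ) z - H) *ᵥ v = z • v - H *ᵥ v := by
      rw [Matrix.sub_mulVec, Algebra.algebraMap_eq_smul_one, Matrix.smul_mulVec,
        Matrix.one_mulVec]
    rw [this] at hmv
    linear_combination (norm := module) -hmv
  set sv : ℂ := star v ⬝ᵥ v with hsv
  have hsvstar : star sv = sv := by
    rw [hsv]
    exact (Matrix.star_dotProduct v v).symm
  have hsvne : sv ≠ 0 := fun hc => hv (dotProduct_star_self_eq_zero.mp hc)
  have hc1 : star v ⬝ᵥ (H *ᵥ v) = z * sv := by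
    rw [heig, hsv, dotProduct_smul, smul_eq_mul]
  have hc2 : star (star v ⬝ᵥ (H *ᵥ v)) = star v ⬝ᵥ (H *ᵥ v) := by
    conv_lhs => rw [Matrix.star_dotProduct, star_star, Matrix.star_mulVec, hherm]
    rw [← Matrix.dotProduct_mulVec]
  rw [hc1, star_mul', hsvstar] at hc2
  have hzz : star z = z := mul_right_cancel₀ hsvne hc2
  rw [Complex.star_def] at hzz
  exact ((Complex.conj_eq_iff_re).mp hzz).symm

lemma spectrum_map_ofReal {M : Matrix I I ℝ} (hsym : Mᵀ = M) :
    spectrum ℂ (M.map fun x : ℝ => (x : ℂ)) = (fun r : ℝ => (r : ℂ)) '' spectrum ℝ M := by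
  ext z
  constructor
  · intro hz
    have hre := spectrum_real_of_symm hsym hz
    refine ⟨z.re, ?_, hre.symm⟩
    rw [← coe_mem_spectrum_iff, ← hre]
    exact hz
  · rintro ⟨r, hr, rfl⟩
    exact (coe_mem_spectrum_iff M r).mpr hr

end RealSpectrum

end HEPRaux

/-- The EPR Hamiltonian is unitarily equivalent, via `U = ⊗ⱼ √Xⱼ`, to a Hamming-weight
preserving operator whose weight-`k` block is the signless Laplacian `Q(F_k(G))` of the
`k`-th token graph; consequently its eigenvalue set is the union over `0 ≤ k ≤ n` of the
eigenvalue sets of the `Q(F_k(G))`. -/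
theorem HEPR_eq_directSum_tokenQ (n : ℕ) (w : Fin n → Fin n → ℝ)
    (hsymm : ∀ i j, w i j = w j i) (hnonneg : ∀ i j, 0 ≤ w i j)
    (hdiag : ∀ i, w i i = 0) :
    (∀ x y : QState n, hammingWt x ≠ hammingWt y →
      (Umat n * HEPR n w * (Umat n)ᴴ) x y = 0) ∧
    (∀ (k : ℕ) (A B : Finset (Fin n)) (hA : A.card = k) (hB : B.card = k),
      (Umat n * HEPR n w * (Umat n)ᴴ) (chi A) (chi B)
        = ((tokenQ w k ⟨A, hA⟩ ⟨B, hB⟩ : ℝ) : ℂ)) ∧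
    spectrum ℂ (HEPR n w)
      = ⋃ k : Fin (n + 1), (fun r : ℝ => (r : ℂ)) '' spectrum ℝ (tokenQ w k.1) := by
  refine ⟨fun x y hwt => HEPRaux.part1 w hdiag x y hwt,
    fun k A B hA hB => HEPRaux.part2 w hsymm hdiag k A B hA hB, ?_⟩
  have htoksymm : ∀ k : ℕ, (tokenQ w k)ᵀ = tokenQ w k := by
    intro k
    rw [tokenQ, Matrix.transpose_add, tokenD, Matrix.diagonal_transpose]
    congr 1
    ext A B
    rw [Matrix.transpose_apply, tokenA, Matrix.of_apply, Matrix.of_apply]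
    exact HEPRaux.tokenW_symm w hsymm B.1 A.1
  set u : (Matrix (QState n) (QState n) ℂ)ˣ :=
    ⟨Umat n, (Umat n)ᴴ, HEPRaux.Umat_mul_conjTranspose n, HEPRaux.conjTranspose_mul_Umat n⟩
    with hu
  have hconj : spectrum ℂ (HEPR n w)
      = spectrum ℂ (Umat n * HEPR n w * (Umat n)ᴴ) := by
    have := spectrum.units_conjugate (R := ℂ) (a := HEPR n w) (u := u)
    rw [show ((u⁻¹ : (Matrix (QState n) (QState n) ℂ)ˣ) : Matrix (QState n) (QState n) ℂ)
      = (Umat n)ᴴ from rfl, show (u : Matrix (QState n) (QState n) ℂ) = Umat n from rfl]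
      at this
    exact this.symm
  rw [hconj, HEPRaux.Kmat_eq_blockDiagonal w hsymm hdiag,
    AlgEquiv.spectrum_eq (Matrix.reindexAlgEquiv ℂ ℂ (HEPRaux.tokEquiv n)),
    HEPRaux.spectrum_blockDiagonal']
  exact Set.iUnion_congr fun k => HEPRaux.spectrum_map_ofReal (htoksymm k.1)
end
end
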